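/- arXiv:1911.09897 — 4 statements merged into one kernel-verified Lean document; each statement's English description precedes it below -/
import Mathlib

section
/- Let K ≥ 2 and let MLY(σ_K) ⊆ Σ_K × Σ_K be the set of mean Li–Yorke pairs of the shift σ_K. Then dim_H MLY(σ_K) = 1 and the 1-dimensional Hausdorff measure of MLY(σ_K) equals +∞. -/
open Filter Set MeasureTheory Topology TopologicalSpace

noncomputable section

/-- The symbolic space `Σ_K` on `K` symbols: sequences `ℕ → Fin K`. -/
def SymbSp (K : ℕ) : Type := ℕ → Fin K

namespace SymbSp

variable {K : ℕ}

theorem exists_ne {x y : SymbSp K} (h : ¬x = y) : ∃ i, x i ≠ y i := by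
  by_contra hc
  push_neg at hc
  exact h (funext hc)

open Classical in
/-- The metric `ρ(x,y) = K^{-δ(x,y)}` on `Σ_K`. -/
def sdist (x y : SymbSp K) : ℝ :=
  if h : x = y then 0 else ((K : ℝ))⁻¹ ^ Nat.find (exists_ne h)

theorem sdist_self (x : SymbSp K) : sdist x x = 0 := by
  unfold sdist
  exact dif_pos rfl

open Classical in
theorem sdist_eq {x y : SymbSp K} (h : ¬x = y) :
    sdist x y = ((K : ℝ))⁻¹ ^ Nat.find (exists_ne h) := by
  unfold sdist
  exact dif_neg h

theorem sdist_nonneg' (x y : SymbSp K) : 0 ≤ sdist x y := by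
  unfold sdist
  split
  · exact le_rfl
  · positivity

theorem inv_cast_le_one (K : ℕ) : ((K : ℝ))⁻¹ ≤ 1 := by
  rcases Nat.eq_zero_or_pos K with h | h
  · simp [h]
  · exact inv_le_one_of_one_le₀ (by exact_mod_cast h)

open Classical in
theorem eq_of_lt_find {x y : SymbSp K} (h : ¬x = y) {i : ℕ}
    (hi : i < Nat.find (exists_ne h)) : x i = y i :=
  not_not.mp (Nat.find_min (exists_ne h) hi)

open Classical in
theorem sdist_le_of_agree {x y : SymbSp K} {n : ℕ} (h : ∀ i < n, x i = y i) :
    sdist x y ≤ ((K : ℝ))⁻¹ ^ n := by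
  by_cases hxy : x = y
  · rw [hxy, sdist_self]; positivity
  · rw [sdist_eq hxy]
    apply pow_le_pow_of_le_one (by positivity) (inv_cast_le_one K)
    rw [Nat.le_find_iff]
    intro m hm
    simp only [ne_eq, not_not]
    exact h m hm

open Classical in
theorem sdist_comm (x y :  SymbSp K) : sdist x y = sdist y x := by
  by_cases h : x = y
  · rw [h]
  · rw [sdist_eq h, sdist_eq (fun hyx => h hyx.symm)]
    congr 1
    exact le_antisymm (Nat.find_mono fun n hn => hn.symm)
      (Nat.find_mono fun n hn => hn.symm)

open Classical in
theorem sdist_le_max (x y z : SymbSp K) : sdist x z ≤ max (sdist x y) (sdist y z) := by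
  by_cases hxz : x = z
  · rw [hxz, sdist_self]
    exact le_max_of_le_left (sdist_nonneg' _ _)
  by_cases hxy : x = y
  · rw [hxy]; exact le_max_right _ _
  by_cases hyz : y = z
  · rw [← hyz]; exact le_max_left _ _
  rcases le_total (Nat.find (exists_ne hxy)) (Nat.find (exists_ne hyz)) with hle | hle
  · refine le_max_of_le_left ?_
    rw [sdist_eq hxy]
    exact sdist_le_of_agree fun i hi =>
      (eq_of_lt_find hxy hi).trans (eq_of_lt_find hyz (lt_of_lt_of_le hi hle))
  · refine le_max_of_le_right ?_
    rw [sdist_eq hyz]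
    exact sdist_le_of_agree fun i hi =>
      (eq_of_lt_find hxy (lt_of_lt_of_le hi hle)).trans (eq_of_lt_find hyz hi)

theorem eq_of_sdist_eq_zero {x y : SymbSp K} (h : sdist x y = 0) : x = y := by
  by_contra hxy
  rw [sdist_eq hxy] at h
  have hK : (0 : ℝ) < (K : ℝ) := by exact_mod_cast Fin.pos (x 0)
  exact absurd h (ne_of_gt (pow_pos (inv_pos.mpr hK) _))

instance : MetricSpace (SymbSp K) where
  dist := sdist
  dist_self := sdist_self
  dist_comm := sdist_comm
  dist_triangle x y z :=
    (sdist_le_max x y z).trans (max_le_add_of_nonneg (sdist_nonneg' _ _) (sdist_nonneg' _ _))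
  eq_of_dist_eq_zero := fun h => eq_of_sdist_eq_zero h

instance : MeasurableSpace (SymbSp K) := borel _

instance : BorelSpace (SymbSp K) := ⟨rfl⟩

instance : SeparableSpace (SymbSp K) := by
  obtain hK | hK | hK : K = 0 ∨ K = 1 ∨ 2 ≤ K := by omega
  · subst hK
    haveI : IsEmpty (SymbSp 0) := ⟨fun x => (x 0).elim0⟩
    exact ⟨⟨Set.univ, Set.countable_univ, dense_univ⟩⟩
  · subst hK
    haveI : Subsingleton (SymbSp 1) := ⟨fun x y => funext fun i => Subsingleton.elim _ _⟩
    exact ⟨⟨Set.univ, Set.countable_univ, dense_univ⟩⟩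
  · refine ⟨⟨Set.range (fun w : (Σ n : ℕ, (Fin n → Fin K)) =>
      (fun i => if h : i < w.1 then w.2 ⟨i, h⟩ else ⟨0, by omega⟩ : SymbSp K)),
      Set.countable_range _, ?_⟩⟩
    rw [Metric.dense_iff]
    intro x r hr
    obtain ⟨n, hn⟩ : ∃ n : ℕ, ((K : ℝ))⁻¹ ^ n < r :=
      exists_pow_lt_of_lt_one hr (inv_lt_one_of_one_lt₀ (by exact_mod_cast hK))
    refine ⟨(fun i => if h : i < n then x i else ⟨0, by omega⟩ : SymbSp K),
      ?_, ⟨⟨n, fun j => x j⟩, rfl⟩⟩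
    refine Metric.mem_ball.mpr ?_
    exact lt_of_le_of_lt (sdist_le_of_agree fun i hi => dif_pos hi) hn

instance : SecondCountableTopology (SymbSp K) :=
  UniformSpace.secondCountable_of_separable _

end SymbSp

/-- The shift map `σ_K` on `Σ_K`. -/
def shift (K : ℕ) : SymbSp K → SymbSp K := fun x i => x (i + 1)

end
/-- The set of mean Li–Yorke pairs of `σ_K`. -/
def MLYset (K : ℕ) : Set (SymbSp K × SymbSp K) :=
  {z | Filter.liminf (fun n : ℕ =>
          (∑ i ∈ Finset.range n, dist ((shift K)^[i] z.1) ((shift K)^[i] z.2)) / n)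
          Filter.atTop = 0 ∧
       0 < Filter.limsup (fun n : ℕ =>
          (∑ i ∈ Finset.range n, dist ((shift K)^[i] z.1) ((shift K)^[i] z.2)) / n)
          Filter.atTop}


noncomputable section Aux

namespace SymbSp

variable {K : ℕ}

theorem dist_def (x y : SymbSp K) : dist x y = sdist x y := rfl

theorem dist_le_pow_of_agree {x y : SymbSp K} {n : ℕ} (h : ∀ i < n, x i = y i) :
    dist x y ≤ ((K : ℝ))⁻¹ ^ n := sdist_le_of_agree h

theorem dist_le_one (x y : SymbSp K) : dist x y ≤ 1 := by
  simpa using dist_le_pow_of_agree (x := x) (y := y) (n := 0) (by omega)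

open Classical in
theorem apply_eq_of_dist_lt {x y : SymbSp K} {n i : ℕ}
    (h : dist x y < ((K : ℝ))⁻¹ ^ n) (hi : i ≤ n) : x i = y i := by
  by_contra hne
  have hxy : ¬ x = y := fun he => hne (congrFun he i)
  have hfind : Nat.find (exists_ne hxy) ≤ i := Nat.find_le hne
  have : ((K : ℝ))⁻¹ ^ n ≤ ((K : ℝ))⁻¹ ^ Nat.find (exists_ne hxy) :=
    pow_le_pow_of_le_one (by positivity) (inv_cast_le_one K) (hfind.trans hi)
  rw [dist_def, sdist_eq hxy] at h
  exact absurd h (not_lt.mpr this)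

open Classical in
theorem dist_eq_one {x y : SymbSp K} (h : x 0 ≠ y 0) : dist x y = 1 := by
  have hxy : ¬ x = y := fun he => h (congrFun he 0)
  have h0 : Nat.find (exists_ne hxy) = 0 := Nat.find_eq_zero _ |>.mpr h
  rw [dist_def, sdist_eq hxy, h0, pow_zero]

theorem shift_iterate (x : SymbSp K) (i j : ℕ) : (shift K)^[i] x j = x (j + i) := by
  induction i generalizing x with
  | zero => rfl
  | succ m ih =>
    rw [Function.iterate_succ_apply, ih (shift K x)]
    show x (j + m + 1) = _
    rfl

theorem dist_shift_le {x y : SymbSp K} {i t : ℕ}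
    (h : ∀ j, i ≤ j → j < i + t → x j = y j) :
    dist ((shift K)^[i] x) ((shift K)^[i] y) ≤ ((K : ℝ))⁻¹ ^ t := by
  refine dist_le_pow_of_agree fun j hj => ?_
  rw [shift_iterate, shift_iterate]
  exact h (j + i) (by omega) (by omega)

theorem dist_shift_eq_one {x y : SymbSp K} {i : ℕ} (h : x i ≠ y i) :
    dist ((shift K)^[i] x) ((shift K)^[i] y) = 1 := by
  refine dist_eq_one ?_
  rw [shift_iterate, shift_iterate]
  simpa using h

instance : CompleteSpace (SymbSp K) := by
  rcases Nat.lt_or_ge K 2 with hK | hK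
  · haveI : Subsingleton (SymbSp K) :=
      ⟨fun x y => funext fun i => Fin.ext (by have := (x i).2; have := (y i).2; omega)⟩
    haveI : Finite (SymbSp K) := Finite.of_subsingleton
    exact complete_of_compact
  · apply Metric.complete_of_cauchySeq_tendsto
    intro u hu
    have hKgt : (1 : ℕ) < K := hK
    have key : ∀ i : ℕ, ∃ N : ℕ, ∀ m n, N ≤ m → N ≤ n →
        dist (u m) (u n) < ((K : ℝ))⁻¹ ^ i := by
      intro i
      have hpos : (0 : ℝ) < ((K : ℝ))⁻¹ ^ i := by positivity
      rcases Metric.cauchySeq_iff.mp hu _ hpos with ⟨N, hN⟩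
      exact ⟨N, fun m n hm hn => hN m hm n hn⟩
    choose N hN using key
    set x : SymbSp K := fun i => u (N (i + 1)) i with hx
    refine ⟨x, ?_⟩
    rw [Metric.tendsto_atTop]
    intro ε hε
    obtain ⟨j, hj⟩ : ∃ j : ℕ, ((K : ℝ))⁻¹ ^ j < ε := by
      refine exists_pow_lt_of_lt_one hε (inv_lt_one_of_one_lt₀ ?_)
      exact_mod_cast hKgt
    refine ⟨(Finset.range (j + 1)).sup N, fun m hm => ?_⟩
    have hagree : ∀ i < j, u m i = x i := by
      intro i hi
      have hNi : N (i + 1) ≤ (Finset.range (j + 1)).sup N :=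
        Finset.le_sup (Finset.mem_range.mpr (by omega))
      show u m i = u (N (i + 1)) i
      exact apply_eq_of_dist_lt (hN (i + 1) m (N (i + 1)) (le_trans hNi hm) le_rfl)
        (Nat.le_succ i)
    calc dist (u m) x ≤ ((K : ℝ))⁻¹ ^ j := dist_le_pow_of_agree hagree
      _ < ε := hj

end SymbSp

section LB

variable {K : ℕ}

open SymbSp

/-- add one mod K -/
def kflip (hK : 2 ≤ K) (a : Fin K) : Fin K := ⟨(a.1 + 1) % K, Nat.mod_lt _ (by omega)⟩

theorem kflip_ne (hK : 2 ≤ K) (a : Fin K) : kflip hK a ≠ a := by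
  intro h
  have h2 := congrArg Fin.val h
  simp only [kflip] at h2
  have ha := a.2
  rcases Nat.lt_or_ge (a.1 + 1) K with h3 | h3
  · rw [Nat.mod_eq_of_lt h3] at h2; omega
  · have h4 : a.1 + 1 = K := by omega
    rw [h4, Nat.mod_self] at h2; omega

theorem kflip_inj (hK : 2 ≤ K) {a b : Fin K} (h : kflip hK a = kflip hK b) : a = b := by
  have h2 := congrArg Fin.val h
  simp only [kflip] at h2
  have ha := a.2
  have hb := b.2
  refine Fin.ext ?_
  rcases Nat.lt_or_ge (a.1 + 1) K with h3 | h3 <;>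
    rcases Nat.lt_or_ge (b.1 + 1) K with h4 | h4
  · rw [Nat.mod_eq_of_lt h3, Nat.mod_eq_of_lt h4] at h2; omega
  · have : b.1 + 1 = K := by omega
    rw [Nat.mod_eq_of_lt h3, this, Nat.mod_self] at h2; omega
  · have : a.1 + 1 = K := by omega
    rw [Nat.mod_eq_of_lt h4, this, Nat.mod_self] at h2; omega
  · omega

/-- the disagreement pattern for the `s`-th copy -/
def pat (s i : ℕ) : Prop :=
  i < s ∨ ∃ k, s + (2 * k + 2).factorial ≤ i ∧ i < s + (2 * k + 3).factorial

theorem not_pat_between {s i k : ℕ} (h1 : s + (2 * k + 3).factorial ≤ i)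
    (h2 : i < s + (2 * k + 4).factorial) : ¬ pat s i := by
  rintro (h | ⟨k', hk1, hk2⟩)
  · omega
  · rcases Nat.lt_or_ge k' (k + 1) with hkk | hkk
    · have : (2 * k' + 3).factorial ≤ (2 * k + 3).factorial :=
        Nat.factorial_le (by omega)
      omega
    · have : (2 * k + 4).factorial ≤ (2 * k' + 2).factorial :=
        Nat.factorial_le (by omega)
      omega

theorem not_pat_small {s i : ℕ} (hsi : s ≤ i) (h : i < s + 2) : ¬ pat s i := by
  rintro (h1 | ⟨k, hk1, hk2⟩)
  · omega
  · have : 2 ≤ (2 * k + 2).factorial := by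
      calc 2 = (2).factorial := rfl
      _ ≤ _ := Nat.factorial_le (by omega)
    omega

theorem pat_in_block {s i k : ℕ} (h1 : s + (2 * k + 2).factorial ≤ i)
    (h2 : i < s + (2 * k + 3).factorial) : pat s i := Or.inr ⟨k, h1, h2⟩

theorem pat_of_lt {s i : ℕ} (h : i < s) : pat s i := Or.inl h

open Classical in
/-- the companion point -/
def mate (hK : 2 ≤ K) (s : ℕ) (z : SymbSp K) : SymbSp K :=
  fun i => if pat s i then kflip hK (z i) else z i

/-- the embedding of `Σ_K` into the mean Li-Yorke pairs -/
def Phi (hK : 2 ≤ K) (s : ℕ) (z : SymbSp K) : SymbSp K × SymbSp K := (z, mate hK s z)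

theorem mate_eq_of_not_pat {hK : 2 ≤ K} {s i : ℕ} (z : SymbSp K) (h : ¬ pat s i) :
    mate hK s z i = z i := by simp only [mate, if_neg h]

theorem mate_ne_of_pat {hK : 2 ≤ K} {s i : ℕ} (z : SymbSp K) (h : pat s i) :
    mate hK s z i ≠ z i := by
  simp only [mate, if_pos h]
  exact kflip_ne hK (z i)

open Classical in
theorem sdist_congr {x y x' y' : SymbSp K} (h : ∀ i, x i = y i ↔ x' i = y' i) :
    sdist x y = sdist x' y' := by
  by_cases hxy : x = y
  · have hxy' : x' = y' := funext fun i => (h i).mp (congrFun hxy i)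
    rw [hxy, hxy', sdist_self, sdist_self]
  · have hxy' : ¬ x' = y' := fun he => hxy (funext fun i => (h i).mpr (congrFun he i))
    rw [sdist_eq hxy, sdist_eq hxy']
    congr 1
    refine le_antisymm (Nat.find_le fun he => Nat.find_spec (exists_ne hxy') ((h _).mp he))
      (Nat.find_le fun he => Nat.find_spec (exists_ne hxy) ((h _).mpr he))

theorem isometry_Phi (hK : 2 ≤ K) (s : ℕ) : Isometry (Phi hK s) := by
  refine Isometry.of_dist_eq fun z z' => ?_
  rw [Prod.dist_eq]
  have h2 : dist (mate hK s z) (mate hK s z') = dist z z' := by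
    rw [dist_def, dist_def]
    refine sdist_congr fun i => ?_
    by_cases h : pat s i
    · simp only [mate, if_pos h]
      exact ⟨fun he => kflip_inj hK he, fun he => by rw [he]⟩
    · simp only [mate, if_neg h]
  show max (dist z z') (dist (mate hK s z) (mate hK s z')) = dist z z'
  rw [h2]
  exact max_self _


theorem half_pow_sum (R : ℕ) : ∑ j ∈ Finset.range R, ((2:ℝ))⁻¹ ^ (j + 1) = 1 - (2:ℝ)⁻¹ ^ R := by
  induction R with
  | zero => simp
  | succ n ih => rw [Finset.sum_range_succ, ih, pow_succ]; ring

theorem geom_tail (hK : 2 ≤ K) {M n : ℕ} (h : M ≤ n) :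
    ∑ i ∈ Finset.Ico M n, ((K : ℝ))⁻¹ ^ (n - i) ≤ 1 := by
  rw [Finset.sum_Ico_eq_sum_range]
  set R := n - M with hR
  have key : ∑ j ∈ Finset.range R, ((K:ℝ))⁻¹ ^ (n - (M + j))
      ≤ ∑ j ∈ Finset.range R, ((2:ℝ))⁻¹ ^ (R - j) := by
    refine Finset.sum_le_sum fun j hj => ?_
    have he : n - (M + j) = R - j := by omega
    rw [he]
    refine pow_le_pow_left₀ (by positivity) ?_ _
    rw [inv_le_inv₀ (by exact_mod_cast (by omega : (0:ℕ) < K)) (by norm_num)]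
    exact_mod_cast hK
  refine key.trans ?_
  have h2 : ∑ j ∈ Finset.range R, ((2:ℝ))⁻¹ ^ (R - j)
      = ∑ j ∈ Finset.range R, ((2:ℝ))⁻¹ ^ (j + 1) := by
    rw [← Finset.sum_range_reflect]
    refine Finset.sum_congr rfl fun j hj => ?_
    have : R - (R - 1 - j) = j + 1 := by
      have := Finset.mem_range.mp hj; omega
    rw [this]
  rw [h2, half_pow_sum]
  have : (0:ℝ) ≤ (2:ℝ)⁻¹ ^ R := by positivity
  linarith

theorem Phi_mem_MLY (hK : 2 ≤ K) (s : ℕ) (z : SymbSp K) : Phi hK s z ∈ MLYset K := by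
  have hKpos : (0:ℝ) < K := by exact_mod_cast (by omega : 0 < K)
  set x : SymbSp K := z with hxdef
  set y : SymbSp K := mate hK s z with hydef
  set f : ℕ → ℝ := fun n =>
    (∑ i ∈ Finset.range n, dist ((shift K)^[i] x) ((shift K)^[i] y)) / n with hfdef
  have hd1 : ∀ i, pat s i → dist ((shift K)^[i] x) ((shift K)^[i] y) = 1 := by
    intro i hi
    rw [dist_comm]
    exact dist_shift_eq_one (mate_ne_of_pat z hi)
  have hagree : ∀ i, ¬ pat s i → x i = y i := fun i hi => (mate_eq_of_not_pat z hi).symm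
  have hub : ∀ n, f n ≤ 1 := by
    intro n
    rcases Nat.eq_zero_or_pos n with hn | hn
    · simp [hfdef, hn]
    · have hsum : (∑ i ∈ Finset.range n, dist ((shift K)^[i] x) ((shift K)^[i] y)) ≤ n := by
        calc (∑ i ∈ Finset.range n, dist ((shift K)^[i] x) ((shift K)^[i] y))
            ≤ ∑ i ∈ Finset.range n, 1 := Finset.sum_le_sum fun i _ => dist_le_one _ _
          _ = n := by simp
      rw [hfdef, div_le_one (by exact_mod_cast hn)]
      exact hsum
  have hlb : ∀ n, 0 ≤ f n := by
    intro n
    refine div_nonneg (Finset.sum_nonneg fun i _ => dist_nonneg) (by positivity)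
  have hBddAbove : Filter.IsBoundedUnder (· ≤ ·) Filter.atTop f :=
    Filter.isBoundedUnder_of ⟨1, hub⟩
  have hBddBelow : Filter.IsBoundedUnder (· ≥ ·) Filter.atTop f :=
    Filter.isBoundedUnder_of ⟨0, hlb⟩
  -- liminf part
  have hfreq : ∀ δ : ℝ, 0 < δ → ∃ᶠ n in Filter.atTop, f n ≤ δ := by
    intro δ hδ
    rw [Filter.frequently_atTop]
    intro N
    obtain ⟨k0, hk0⟩ := exists_nat_ge ((s + 2 : ℝ) / δ)
    set k := max N k0 with hk
    set n := s + (2 * k + 4).factorial with hn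
    have hfle : 2 * k + 4 ≤ (2 * k + 4).factorial := Nat.self_le_factorial _
    refine ⟨n, by omega, ?_⟩
    set M := s + (2 * k + 3).factorial with hM
    have hff : (2 * k + 4).factorial = (2 * k + 4) * (2 * k + 3).factorial := by
      have : 2 * k + 4 = (2 * k + 3) + 1 := by omega
      rw [this, Nat.factorial_succ]
    have hfle2 : (2 * k + 3).factorial ≤ (2 * k + 4).factorial :=
      Nat.factorial_le (by omega)
    have hMn : M ≤ n := by omega
    have hnpos : (0:ℝ) < n := by
      have : 0 < n := by have := Nat.factorial_pos (2 * k + 4); omega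
      exact_mod_cast this
    have hsum : (∑ i ∈ Finset.range n, dist ((shift K)^[i] x) ((shift K)^[i] y))
        ≤ (M : ℝ) + 1 := by
      rw [Finset.range_eq_Ico, ← Finset.sum_Ico_consecutive _ (Nat.zero_le M) hMn]
      have h1 : ∑ i ∈ Finset.Ico 0 M, dist ((shift K)^[i] x) ((shift K)^[i] y) ≤ (M:ℝ) := by
        calc ∑ i ∈ Finset.Ico 0 M, dist ((shift K)^[i] x) ((shift K)^[i] y)
            ≤ ∑ i ∈ Finset.Ico 0 M, 1 := Finset.sum_le_sum fun i _ => dist_le_one _ _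
          _ = (M:ℝ) := by simp
      have h2 : ∑ i ∈ Finset.Ico M n, dist ((shift K)^[i] x) ((shift K)^[i] y) ≤ 1 := by
        have hterm : ∀ i ∈ Finset.Ico M n,
            dist ((shift K)^[i] x) ((shift K)^[i] y) ≤ ((K:ℝ))⁻¹ ^ (n - i) := by
          intro i hi
          obtain ⟨hi1, hi2⟩ := Finset.mem_Ico.mp hi
          refine dist_shift_le fun j hj1 hj2 => ?_
          have hj3 : j < n := by omega
          exact hagree j (not_pat_between (k := k) (by omega) (by omega))
        calc ∑ i ∈ Finset.Ico M n, dist ((shift K)^[i] x) ((shift K)^[i] y)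
            ≤ ∑ i ∈ Finset.Ico M n, ((K:ℝ))⁻¹ ^ (n - i) := Finset.sum_le_sum hterm
          _ ≤ 1 := geom_tail hK hMn
      linarith
    have hfn : f n ≤ ((M : ℝ) + 1) / n := by
      show (∑ i ∈ Finset.range n, dist ((shift K)^[i] x) ((shift K)^[i] y)) / (n:ℝ)
          ≤ ((M : ℝ) + 1) / n
      gcongr
    refine hfn.trans ?_
    rw [div_le_iff₀ hnpos]
    have hF1 : (1:ℝ) ≤ ((2 * k + 3).factorial : ℕ) := by
      exact_mod_cast Nat.factorial_pos (2 * k + 3)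
    have hk2 : (s + 2 : ℝ) ≤ δ * (2 * k + 4) := by
      rw [div_le_iff₀ hδ] at hk0
      have hkk : (k0 : ℝ) ≤ 2 * k + 4 := by
        have : k0 ≤ 2 * k + 4 := by omega
        exact_mod_cast this
      nlinarith
    have hMval : (M : ℝ) = s + ((2 * k + 3).factorial : ℕ) := by
      rw [hM]; push_cast; ring
    have hnval : (n : ℝ) = s + (2 * k + 4) * ((2 * k + 3).factorial : ℕ) := by
      rw [hn, hff]; push_cast; ring
    rw [hMval, hnval]
    nlinarith [hδ.le, hF1, hk2]
  have hliminf : Filter.liminf f Filter.atTop = 0 := by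
    refine le_antisymm ?_ (Filter.le_liminf_of_le (hBddAbove.isCoboundedUnder_ge)
      (Filter.Eventually.of_forall hlb))
    have h1 : ∀ δ : ℝ, 0 < δ → Filter.liminf f Filter.atTop ≤ δ := fun δ hδ =>
      Filter.liminf_le_of_frequently_le (hfreq δ hδ) hBddBelow
    by_contra hc
    push_neg at hc
    have := h1 _ (half_pos hc)
    linarith
  -- limsup part
  have hfreq2 : ∃ᶠ n in Filter.atTop, (1:ℝ)/2 ≤ f n := by
    rw [Filter.frequently_atTop]
    intro N
    set k := max N s with hk
    set n := s + (2 * k + 3).factorial with hn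
    set A := s + (2 * k + 2).factorial with hA
    have hE : 2 * k + 2 ≤ (2 * k + 2).factorial := Nat.self_le_factorial _
    have hff : (2 * k + 3).factorial = (2 * k + 3) * (2 * k + 2).factorial := by
      have h3 : 2 * k + 3 = (2 * k + 2) + 1 := by omega
      rw [h3, Nat.factorial_succ]
    have hf3 : 3 * (2 * k + 2).factorial ≤ (2 * k + 3).factorial := by
      rw [hff]; exact Nat.mul_le_mul_right _ (by omega)
    have hfle : 2 * k + 3 ≤ (2 * k + 3).factorial := Nat.self_le_factorial _
    have hAn : A ≤ n := by omega
    refine ⟨n, by omega, ?_⟩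
    have hnpos : (0:ℝ) < n := by
      have : 0 < n := by omega
      exact_mod_cast this
    have hsum_ge : ((n - A : ℕ) : ℝ)
        ≤ ∑ i ∈ Finset.range n, dist ((shift K)^[i] x) ((shift K)^[i] y) := by
      have hsub : Finset.Ico A n ⊆ Finset.range n := by
        intro i hi; rw [Finset.mem_range]; exact (Finset.mem_Ico.mp hi).2
      have h1 : ∑ i ∈ Finset.Ico A n, dist ((shift K)^[i] x) ((shift K)^[i] y)
          = ((n - A : ℕ) : ℝ) := by
        have hall : ∀ i ∈ Finset.Ico A n,
            dist ((shift K)^[i] x) ((shift K)^[i] y) = 1 := by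
          intro i hi
          obtain ⟨h5, h6⟩ := Finset.mem_Ico.mp hi
          exact hd1 i (pat_in_block (k := k) (by omega) (by omega))
        rw [Finset.sum_congr rfl hall, Finset.sum_const, Nat.card_Ico]
        simp
      rw [← h1]
      exact Finset.sum_le_sum_of_subset_of_nonneg hsub fun i _ _ => dist_nonneg
    have hN2 : n ≤ 2 * (n - A) := by
      have hkges : s ≤ k := le_max_right N s
      omega
    have h8 : ((n - A : ℕ) : ℝ) / n ≤ f n := by
      show _ ≤ (∑ i ∈ Finset.range n, dist ((shift K)^[i] x) ((shift K)^[i] y)) / (n:ℝ)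
      gcongr
    have h9 : (1:ℝ)/2 ≤ ((n - A : ℕ) : ℝ) / n := by
      rw [le_div_iff₀ hnpos]
      have : (n : ℝ) ≤ 2 * ((n - A : ℕ) : ℝ) := by exact_mod_cast hN2
      linarith
    exact h9.trans h8
  have hlimsup : 0 < Filter.limsup f Filter.atTop :=
    lt_of_lt_of_le (by norm_num) (Filter.le_limsup_of_frequently_le hfreq2 hBddAbove)
  exact ⟨hliminf, hlimsup⟩



theorem kinv_lt_one (hK : 2 ≤ K) : ((K:ℝ))⁻¹ < 1 :=
  inv_lt_one_of_one_lt₀ (by exact_mod_cast (by omega : 1 < K))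

theorem summable_aux (hK : 2 ≤ K) (h : ℕ → ℝ) (hb : ∀ i, |h i| ≤ K) :
    Summable fun i => h i * ((K:ℝ))⁻¹ ^ (i + 1) := by
  have hKpos : (0:ℝ) < K := by exact_mod_cast (by omega : 0 < K)
  refine Summable.of_norm ?_
  have hle : ∀ i, ‖h i * ((K:ℝ))⁻¹ ^ (i + 1)‖ ≤ ((K:ℝ))⁻¹ ^ i := by
    intro i
    rw [Real.norm_eq_abs, abs_mul, abs_of_nonneg (by positivity : (0:ℝ) ≤ ((K:ℝ))⁻¹ ^ (i+1))]
    calc |h i| * ((K:ℝ))⁻¹ ^ (i + 1) ≤ (K:ℝ) * ((K:ℝ))⁻¹ ^ (i + 1) := by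
          gcongr; exact hb i
      _ = ((K:ℝ))⁻¹ ^ i * ((K:ℝ) * (K:ℝ)⁻¹) := by rw [pow_succ]; ring
      _ = ((K:ℝ))⁻¹ ^ i := by rw [mul_inv_cancel₀ hKpos.ne', mul_one]
  exact Summable.of_nonneg_of_le (fun i => norm_nonneg _) hle
    (summable_geometric_of_lt_one (by positivity) (kinv_lt_one hK))

/-- base-`K` expansion map to `ℝ` -/
def gmap (z : SymbSp K) : ℝ := ∑' i, ((z i : ℕ) : ℝ) * ((K:ℝ))⁻¹ ^ (i + 1)

theorem gmap_summable (hK : 2 ≤ K) (z : SymbSp K) :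
    Summable fun i => ((z i : ℕ) : ℝ) * ((K:ℝ))⁻¹ ^ (i + 1) := by
  refine summable_aux hK _ fun i => ?_
  rw [abs_of_nonneg (by positivity)]
  exact_mod_cast (z i).2.le

open Classical in
theorem gmap_lipschitz (hK : 2 ≤ K) : LipschitzWith 1 (gmap (K := K)) := by
  have hKpos : (0:ℝ) < K := by exact_mod_cast (by omega : 0 < K)
  refine LipschitzWith.of_dist_le_mul fun z z' => ?_
  rw [NNReal.coe_one, one_mul]
  by_cases hzz : z = z'
  · rw [hzz]; simp
  · set δ := Nat.find (exists_ne hzz) with hδ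
    have hdist : dist z z' = ((K:ℝ))⁻¹ ^ δ := by rw [dist_def, sdist_eq hzz]
    rw [hdist, Real.dist_eq]
    set F : ℕ → ℝ := fun i => (((z i : ℕ) : ℝ) - ((z' i : ℕ) : ℝ)) * ((K:ℝ))⁻¹ ^ (i + 1)
      with hF
    have habs : ∀ i, |((z i : ℕ) : ℝ) - ((z' i : ℕ) : ℝ)| ≤ (K:ℝ) - 1 := by
      intro i
      rw [abs_sub_le_iff]
      constructor
      · have h1 : ((z i : ℕ) : ℝ) ≤ (K:ℝ) - 1 := by
          have := (z i).2; have : (z i : ℕ) ≤ K - 1 := by omega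
          have hcast : ((z i : ℕ) : ℝ) ≤ ((K - 1 : ℕ) : ℝ) := by exact_mod_cast this
          rwa [Nat.cast_sub (by omega), Nat.cast_one] at hcast
        have h2 : (0:ℝ) ≤ ((z' i : ℕ) : ℝ) := by positivity
        linarith
      · have h1 : ((z' i : ℕ) : ℝ) ≤ (K:ℝ) - 1 := by
          have := (z' i).2; have : (z' i : ℕ) ≤ K - 1 := by omega
          have hcast : ((z' i : ℕ) : ℝ) ≤ ((K - 1 : ℕ) : ℝ) := by exact_mod_cast this
          rwa [Nat.cast_sub (by omega), Nat.cast_one] at hcast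
        have h2 : (0:ℝ) ≤ ((z i : ℕ) : ℝ) := by positivity
        linarith
    have hFsum : Summable F := by
      refine summable_aux hK _ fun i => ?_
      refine (habs i).trans (by linarith)
    have hgsub : gmap z - gmap z' = ∑' i, F i := by
      rw [hF]
      simp only [sub_mul]
      exact (Summable.tsum_sub (gmap_summable hK z) (gmap_summable hK z')).symm
    rw [hgsub]
    have hzero : ∀ i ∈ Finset.range δ, F i = 0 := by
      intro i hi
      have : z i = z' i := eq_of_lt_find hzz (Finset.mem_range.mp hi)
      simp [hF, this]
    have hsplit : ∑' i, F i = ∑' i, F (i + δ) := by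
      rw [← Summable.sum_add_tsum_nat_add δ hFsum, Finset.sum_eq_zero hzero, zero_add]
    rw [hsplit]
    have htail : Summable fun i => F (i + δ) := (summable_nat_add_iff δ).mpr hFsum
    have S2 : Summable fun i => ‖F (i + δ)‖ := by
      simpa [Real.norm_eq_abs] using htail.abs
    have hnorm : ‖∑' i, F (i + δ)‖ ≤ ∑' i, ‖F (i + δ)‖ := norm_tsum_le_tsum_norm S2
    have hee : ∀ i : ℕ, ((K:ℝ))⁻¹ ^ (δ + 1) * ((K:ℝ))⁻¹ ^ i = ((K:ℝ))⁻¹ ^ (i + δ + 1) := by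
      intro i; rw [← pow_add]; congr 1; omega
    have hbound : ∑' i, ‖F (i + δ)‖
        ≤ ∑' i, ((K:ℝ) - 1) * ((K:ℝ))⁻¹ ^ (δ + 1) * ((K:ℝ))⁻¹ ^ i := by
      refine Summable.tsum_le_tsum (fun i => ?_) S2 ?_
      · rw [Real.norm_eq_abs, hF]
        calc |((((z (i + δ) : ℕ) : ℝ)) - (((z' (i + δ) : ℕ) : ℝ)))
              * ((K:ℝ))⁻¹ ^ (i + δ + 1)|
            = |(((z (i + δ) : ℕ) : ℝ)) - (((z' (i + δ) : ℕ) : ℝ))|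
              * ((K:ℝ))⁻¹ ^ (i + δ + 1) := by
              rw [abs_mul, abs_of_nonneg (by positivity : (0:ℝ) ≤ ((K:ℝ))⁻¹ ^ (i + δ + 1))]
          _ ≤ ((K:ℝ) - 1) * ((K:ℝ))⁻¹ ^ (i + δ + 1) :=
              mul_le_mul_of_nonneg_right (habs _) (by positivity)
          _ = ((K:ℝ) - 1) * ((K:ℝ))⁻¹ ^ (δ + 1) * ((K:ℝ))⁻¹ ^ i := by
              rw [mul_assoc, hee i]
      · exact Summable.mul_left _
          (summable_geometric_of_lt_one (by positivity) (kinv_lt_one hK))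
    have hgeom : ∑' i : ℕ, ((K:ℝ) - 1) * ((K:ℝ))⁻¹ ^ (δ + 1) * ((K:ℝ))⁻¹ ^ i
        = ((K:ℝ) - 1) * ((K:ℝ))⁻¹ ^ (δ + 1) * (1 - (K:ℝ)⁻¹)⁻¹ := by
      rw [tsum_mul_left, tsum_geometric_of_lt_one (by positivity) (kinv_lt_one hK)]
    have hKR : (2:ℝ) ≤ (K:ℝ) := by exact_mod_cast hK
    have halg : ((K:ℝ) - 1) * ((K:ℝ))⁻¹ ^ (δ + 1) * (1 - (K:ℝ)⁻¹)⁻¹ = ((K:ℝ))⁻¹ ^ δ := by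
      have hKne : (K:ℝ) ≠ 0 := by linarith
      have hK1ne : (K:ℝ) - 1 ≠ 0 := by linarith
      have h2 : 1 - (K:ℝ)⁻¹ = ((K:ℝ) - 1) / K := by field_simp
      rw [h2, pow_succ, inv_div]
      field_simp
    rw [Real.norm_eq_abs] at hnorm
    linarith [hnorm, hbound, hgeom.le, hgeom.ge, halg.le]


theorem gmap_surj (hK : 2 ≤ K) {t : ℝ} (ht : t ∈ Set.Ico (0:ℝ) 1) :
    ∃ z : SymbSp K, gmap z = t := by
  obtain ⟨ht0, ht1⟩ := ht
  have hKpos : (0:ℝ) < K := by exact_mod_cast (by omega : 0 < K)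
  have hK1 : (1:ℝ) < K := by exact_mod_cast (by omega : 1 < K)
  set a : ℕ → ℕ := fun n => ⌊t * (K:ℝ) ^ n⌋₊ with ha
  have fA : ∀ n, (a n : ℝ) ≤ t * (K:ℝ) ^ n := fun n => Nat.floor_le (by positivity)
  have fB : ∀ n, t * (K:ℝ) ^ n < a n + 1 := fun n => Nat.lt_floor_add_one _
  have fC : ∀ n, K * a n ≤ a (n + 1) := by
    intro n
    refine Nat.le_floor ?_
    have h1 : (K:ℝ) * a n ≤ (K:ℝ) * (t * (K:ℝ) ^ n) :=
      mul_le_mul_of_nonneg_left (fA n) (by positivity)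
    calc ((K * a n : ℕ) : ℝ) = (K:ℝ) * a n := by push_cast; ring
      _ ≤ (K:ℝ) * (t * (K:ℝ) ^ n) := h1
      _ = t * (K:ℝ) ^ (n + 1) := by rw [pow_succ]; ring
  have fD : ∀ n, a (n + 1) < K * a n + K := by
    intro n
    have h1 : t * (K:ℝ) ^ (n + 1) < ((K * a n + K : ℕ) : ℝ) := by
      push_cast
      calc t * (K:ℝ) ^ (n + 1) = (K:ℝ) * (t * (K:ℝ) ^ n) := by rw [pow_succ]; ring
        _ < (K:ℝ) * (↑(a n) + 1) := mul_lt_mul_of_pos_left (fB n) hKpos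
        _ = (K:ℝ) * ↑(a n) + K := by ring
    exact (Nat.floor_lt (by positivity)).mpr h1
  have ha0 : a 0 = 0 := by
    simp only [ha, pow_zero, mul_one]
    exact Nat.floor_eq_zero.mpr ht1
  set d : ℕ → ℕ := fun n => a (n + 1) - K * a n with hd
  have hdK : ∀ n, d n < K := by
    intro n
    have h1 := fC n
    have h2 := fD n
    simp only [hd]
    omega
  set z : SymbSp K := fun n => ⟨d n, hdK n⟩ with hz
  have hpartial : ∀ n, ∑ i ∈ Finset.range n, ((z i : ℕ) : ℝ) * ((K:ℝ))⁻¹ ^ (i + 1)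
      = (a n : ℝ) / (K:ℝ) ^ n := by
    intro n
    induction n with
    | zero => simp [ha0]
    | succ m ih =>
      rw [Finset.sum_range_succ, ih]
      have hzd : ((z m : ℕ) : ℝ) = (a (m + 1) : ℝ) - (K:ℝ) * a m := by
        simp only [hz, hd]
        have := fC m
        push_cast [Nat.cast_sub this]
        ring
      rw [hzd, pow_succ]
      simp only [inv_pow]
      field_simp
      ring
  refine ⟨z, ?_⟩
  have hsum := gmap_summable hK z
  have htendsto : Filter.Tendsto (fun n => ∑ i ∈ Finset.range n,
      ((z i : ℕ) : ℝ) * ((K:ℝ))⁻¹ ^ (i + 1)) Filter.atTop (nhds t) := by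
    have heq : (fun n => ∑ i ∈ Finset.range n, ((z i : ℕ) : ℝ) * ((K:ℝ))⁻¹ ^ (i + 1))
        = fun n => (a n : ℝ) / (K:ℝ) ^ n := funext hpartial
    rw [heq]
    have hdiff : ∀ n, ‖(a n : ℝ) / (K:ℝ) ^ n - t‖ ≤ ((K:ℝ))⁻¹ ^ n := by
      intro n
      have hKn : (0:ℝ) < (K:ℝ) ^ n := by positivity
      have h1 : (a n : ℝ) / (K:ℝ) ^ n ≤ t := by
        rw [div_le_iff₀ hKn]; exact fA n
      have h2 : t - ((K:ℝ) ^ n)⁻¹ ≤ (a n : ℝ) / (K:ℝ) ^ n := by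
        rw [le_div_iff₀ hKn]
        have hx : (t - ((K:ℝ) ^ n)⁻¹) * (K:ℝ) ^ n = t * (K:ℝ) ^ n - 1 := by
          field_simp
        rw [hx]
        linarith [fB n]
      have hnn : (0:ℝ) ≤ ((K:ℝ) ^ n)⁻¹ := by positivity
      rw [Real.norm_eq_abs, abs_le, inv_pow]
      constructor <;> linarith
    have h3 := squeeze_zero_norm hdiff
      (tendsto_pow_atTop_nhds_zero_of_lt_one (by positivity) (kinv_lt_one hK))
    have h4 := h3.add_const t
    simpa using h4
  have := hsum.hasSum
  rw [hasSum_iff_tendsto_nat_of_nonneg (fun i => by positivity) _] at this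
  exact tendsto_nhds_unique this htendsto



theorem univ_h1 (hK : 2 ≤ K) : 1 ≤ μH[1] (Set.univ : Set (SymbSp K)) := by
  have hlip := gmap_lipschitz hK
  have himg : Set.Ico (0:ℝ) 1 ⊆ gmap '' (Set.univ : Set (SymbSp K)) := by
    intro t ht
    obtain ⟨z, hz⟩ := gmap_surj hK ht
    exact ⟨z, trivial, hz⟩
  have h1 : (1:ENNReal) = μH[1] (Set.Ico (0:ℝ) 1) := by
    rw [MeasureTheory.hausdorffMeasure_real, Real.volume_Ico]
    norm_num
  calc (1:ENNReal) = μH[1] (Set.Ico (0:ℝ) 1) := h1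
    _ ≤ μH[1] (gmap '' (Set.univ : Set (SymbSp K))) := measure_mono himg
    _ ≤ ((1:NNReal) : ENNReal) ^ (1:ℝ) * μH[1] (Set.univ : Set (SymbSp K)) :=
        hlip.hausdorffMeasure_image_le zero_le_one _
    _ = μH[1] (Set.univ : Set (SymbSp K)) := by simp

theorem MLY_h1_top (hK : 2 ≤ K) : μH[1] (MLYset K) = ⊤ := by
  have hmeas : ∀ s : ℕ, MeasurableSet (Set.range (Phi hK s)) := fun s =>
    ((isometry_Phi hK s).isClosedEmbedding.isClosed_range).measurableSet
  have key : ∀ s s' : ℕ, s < s' → ∀ w w' : SymbSp K, Phi hK s w ≠ Phi hK s' w' := by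
    intro s s' hss w w' heq
    have h1 : w = w' := congrArg Prod.fst heq
    have h2 : mate hK s w s = mate hK s' w' s := congrFun (congrArg Prod.snd heq) s
    rw [mate_eq_of_not_pat w (not_pat_small le_rfl (by omega)), h1] at h2
    exact mate_ne_of_pat w' (pat_of_lt hss) h2.symm
  have hdisj : Pairwise (Function.onFun Disjoint fun s => Set.range (Phi hK s)) := by
    intro s s' hss
    rw [Function.onFun, Set.disjoint_left]
    rintro p ⟨w, hw⟩ ⟨w', hw'⟩
    rcases Nat.lt_or_ge s s' with h | h
    · exact key s s' h w w' (hw.trans hw'.symm)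
    · exact key s' s (by omega) w' w (hw'.trans hw.symm)
  have hmem : ∀ s : ℕ, Set.range (Phi hK s) ⊆ MLYset K := by
    rintro s p ⟨z, rfl⟩
    exact Phi_mem_MLY hK s z
  have hone : ∀ s : ℕ, 1 ≤ μH[1] (Set.range (Phi hK s)) := by
    intro s
    rw [← Set.image_univ, (isometry_Phi hK s).hausdorffMeasure_image (Or.inl zero_le_one)]
    exact univ_h1 hK
  have hmono := measure_mono (μ := μH[1]) (Set.iUnion_subset hmem)
  rw [MeasureTheory.measure_iUnion hdisj hmeas] at hmono
  have htop : (⊤:ENNReal) ≤ ∑' s : ℕ, μH[1] (Set.range (Phi hK s)) := by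
    calc (⊤:ENNReal) = ∑' _ : ℕ, (1:ENNReal) :=
        (ENNReal.tsum_const_eq_top_of_ne_zero one_ne_zero).symm
      _ ≤ _ := ENNReal.tsum_le_tsum hone
  exact top_le_iff.mp (htop.trans hmono)


end LB


end Aux


noncomputable section UB

namespace SymbSp

variable {K : ℕ}

/-- index type of the cover pieces -/
abbrev PieceIdx (K L M j : ℕ) : Type :=
  (Fin (L * j) → Fin K) × (Σ B : {B : Finset (Fin j) // B.card ≤ j / M},
    ({b : Fin j // b ∈ (B : Finset (Fin j))} → Fin L → Fin K))

open Classical in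
/-- the cover pieces -/
def piece (L M j : ℕ) (idx : PieceIdx K L M j) : Set (SymbSp K × SymbSp K) :=
  {p | ∀ i : ℕ, ∀ hi : i < L * j, p.1 i = idx.1 ⟨i, hi⟩ ∧
    p.2 i = if h : i / L < j ∧ i % L < L then
        (if hb : (⟨i / L, h.1⟩ : Fin j) ∈ (idx.2.1 : Finset (Fin j)) then
          idx.2.2 ⟨⟨i / L, h.1⟩, hb⟩ ⟨i % L, h.2⟩
        else idx.1 ⟨i, hi⟩)
      else idx.1 ⟨i, hi⟩}

theorem piece_diam (hK : 2 ≤ K) (L M j : ℕ) (idx : PieceIdx K L M j) :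
    EMetric.diam (piece L M j idx) ≤ ((K : ENNReal))⁻¹ ^ (L * j) := by
  have hKpos : (0:ℝ) < K := by exact_mod_cast (by omega : 0 < K)
  refine EMetric.diam_le fun p hp q hq => ?_
  have h1 : dist p q ≤ ((K:ℝ))⁻¹ ^ (L * j) := by
    have hx : dist p.1 q.1 ≤ ((K:ℝ))⁻¹ ^ (L * j) :=
      dist_le_pow_of_agree fun i hi => ((hp i hi).1).trans ((hq i hi).1).symm
    have hy : dist p.2 q.2 ≤ ((K:ℝ))⁻¹ ^ (L * j) :=
      dist_le_pow_of_agree fun i hi => ((hp i hi).2).trans ((hq i hi).2).symm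
    calc dist p q = max (dist p.1 q.1) (dist p.2 q.2) := Prod.dist_eq
      _ ≤ ((K:ℝ))⁻¹ ^ (L * j) := max_le hx hy
  calc edist p q = ENNReal.ofReal (dist p q) := edist_dist p q
    _ ≤ ENNReal.ofReal (((K:ℝ))⁻¹ ^ (L * j)) := ENNReal.ofReal_le_ofReal h1
    _ = ((K : ENNReal))⁻¹ ^ (L * j) := by
        rw [ENNReal.ofReal_pow (by positivity), ENNReal.ofReal_inv_of_pos hKpos,
          ENNReal.ofReal_natCast]

open Classical in
/-- the set of bad blocks -/
def badB (L j : ℕ) (p : SymbSp K × SymbSp K) : Finset ℕ :=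
  ((Finset.range (L * j)).filter fun i => ¬ p.1 i = p.2 i).image (· / L)

open Classical in
theorem badB_lt {L j : ℕ} (hL : 0 < L) (p : SymbSp K × SymbSp K) :
    ∀ m ∈ badB L j p, m < j := by
  intro m hm
  obtain ⟨i, hi, rfl⟩ := Finset.mem_image.mp hm
  have hi2 : i < L * j := Finset.mem_range.mp (Finset.mem_filter.mp hi).1
  rw [Nat.div_lt_iff_lt_mul hL, mul_comm j L]
  exact hi2

theorem piece_cover {L M j : ℕ} (hL : 0 < L) {p : SymbSp K × SymbSp K}
    (hbad : (badB L j p).card ≤ j / M) :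
    ∃ idx : PieceIdx K L M j, p ∈ piece L M j idx := by
  classical
  set B0 : Finset (Fin j) := (badB L j p).attachFin (badB_lt hL p) with hB0
  have hB0card : B0.card ≤ j / M := by
    rw [hB0, Finset.card_attachFin]; exact hbad
  refine ⟨⟨fun v => p.1 v, ⟨⟨B0, hB0card⟩, fun b l => p.2 (L * (b : Fin j) + l)⟩⟩, ?_⟩
  intro i hi
  refine ⟨rfl, ?_⟩
  have hdm : i / L < j ∧ i % L < L :=
    ⟨by rw [Nat.div_lt_iff_lt_mul hL, mul_comm j L]; exact hi, Nat.mod_lt _ hL⟩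
  rw [dif_pos hdm]
  by_cases hmem : (⟨i / L, hdm.1⟩ : Fin j) ∈ B0
  · rw [dif_pos hmem]
    show p.2 i = p.2 (L * (i / L) + i % L)
    rw [Nat.div_add_mod]
  · rw [dif_neg hmem]
    show p.2 i = p.1 i
    by_contra hne
    refine hmem ?_
    rw [hB0, Finset.mem_attachFin]
    refine Finset.mem_image.mpr ⟨i, Finset.mem_filter.mpr ⟨Finset.mem_range.mpr hi, ?_⟩, rfl⟩
    exact fun he => hne he.symm

theorem card_pieceIdx (hK1 : 1 ≤ K) (L M j : ℕ) :
    Fintype.card (PieceIdx K L M j) ≤ K ^ (L * j) * (2 ^ j * K ^ (L * (j / M))) := by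
  classical
  rw [Fintype.card_prod]
  have h1 : Fintype.card (Fin (L * j) → Fin K) = K ^ (L * j) := by
    rw [Fintype.card_fun, Fintype.card_fin, Fintype.card_fin]
  have h2 : Fintype.card (Σ B : {B : Finset (Fin j) // B.card ≤ j / M},
      ({b : Fin j // b ∈ (B : Finset (Fin j))} → Fin L → Fin K))
      ≤ 2 ^ j * K ^ (L * (j / M)) := by
    rw [Fintype.card_sigma]
    have hterm : ∀ B : {B : Finset (Fin j) // B.card ≤ j / M},
        Fintype.card ({b : Fin j // b ∈ (B : Finset (Fin j))} → Fin L → Fin K)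
          ≤ K ^ (L * (j / M)) := by
      intro B
      rw [Fintype.card_fun]
      have hc1 : Fintype.card {b : Fin j // b ∈ (B : Finset (Fin j))} = (B : Finset (Fin j)).card :=
        Fintype.card_coe _
      have hc2 : Fintype.card (Fin L → Fin K) = K ^ L := by
        rw [Fintype.card_fun, Fintype.card_fin, Fintype.card_fin]
      rw [hc1, hc2, ← pow_mul]
      refine Nat.pow_le_pow_right (by omega) ?_
      exact Nat.mul_le_mul_left L B.2
    calc ∑ B : {B : Finset (Fin j) // B.card ≤ j / M},
          Fintype.card ({b : Fin j // b ∈ (B : Finset (Fin j))} → Fin L → Fin K)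
        ≤ Fintype.card {B : Finset (Fin j) // B.card ≤ j / M} * K ^ (L * (j / M)) := by
          rw [← smul_eq_mul, ← Finset.card_univ]
          exact Finset.sum_le_card_nsmul _ _ _ fun B _ => hterm B
      _ ≤ 2 ^ j * K ^ (L * (j / M)) := by
          refine Nat.mul_le_mul_right _ ?_
          have := Fintype.card_subtype_le (fun B : Finset (Fin j) => B.card ≤ j / M)
          rwa [Fintype.card_finset, Fintype.card_fin] at this
  calc Fintype.card (Fin (L * j) → Fin K) * _ ≤ K ^ (L * j) * (2 ^ j * K ^ (L * (j / M))) := by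
        rw [h1]; exact Nat.mul_le_mul_left _ h2


section HamC
open Classical
theorem ham_le_sum {n : ℕ} (p : SymbSp K × SymbSp K) :
    (((Finset.range n).filter fun i => ¬ p.1 i = p.2 i).card : ℝ)
      ≤ ∑ i ∈ Finset.range n, dist ((shift K)^[i] p.1) ((shift K)^[i] p.2) := by
  classical
  have h1 : ∀ i ∈ (Finset.range n).filter fun i => ¬ p.1 i = p.2 i,
      dist ((shift K)^[i] p.1) ((shift K)^[i] p.2) = 1 := fun i hi =>
    dist_shift_eq_one (Finset.mem_filter.mp hi).2
  calc (((Finset.range n).filter fun i => ¬ p.1 i = p.2 i).card : ℝ)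
      = ∑ i ∈ (Finset.range n).filter fun i => ¬ p.1 i = p.2 i,
          dist ((shift K)^[i] p.1) ((shift K)^[i] p.2) := by
        rw [Finset.sum_congr rfl h1, Finset.sum_const]; simp
    _ ≤ ∑ i ∈ Finset.range n, dist ((shift K)^[i] p.1) ((shift K)^[i] p.2) :=
        Finset.sum_le_sum_of_subset_of_nonneg (Finset.filter_subset _ _)
          fun i _ _ => dist_nonneg

end HamC

theorem MLY_hd_zero (hK : 2 ≤ K) {d : NNReal} (hd : 1 < d) :
    μH[(d : ℝ)] (MLYset K) = 0 := by
  classical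
  have hKpos : (0:ℝ) < K := by exact_mod_cast (by omega : 0 < K)
  set τ : ℝ := (d : ℝ) - 1 with hτ
  have hdR : (1:ℝ) < (d : ℝ) := by exact_mod_cast hd
  have hτpos : 0 < τ := by rw [hτ]; linarith
  set L : ℕ := ⌈4 / τ⌉₊ with hLdef
  have hLpos : 0 < L := Nat.ceil_pos.mpr (by positivity)
  have hLτ : 4 ≤ (L:ℝ) * τ := by
    have h1 : 4 / τ ≤ (L:ℝ) := Nat.le_ceil _
    calc (4:ℝ) = (4 / τ) * τ := (div_mul_cancel₀ 4 hτpos.ne').symm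
      _ ≤ (L:ℝ) * τ := mul_le_mul_of_nonneg_right h1 hτpos.le
  set M : ℕ := ⌈2 / τ⌉₊ + 1 with hMdef
  have hMpos : 0 < M := by omega
  have hMR : (0:ℝ) < M := by exact_mod_cast hMpos
  have hMτ : 1 / (M:ℝ) ≤ τ / 2 := by
    have h1 : 2 / τ ≤ (M:ℝ) := by
      refine le_trans (Nat.le_ceil _) ?_
      rw [hMdef]; push_cast; linarith
    rw [div_le_div_iff₀ hMR two_pos]
    rw [div_le_iff₀ hτpos] at h1
    nlinarith
  set Ke : ENNReal := (K : ENNReal) with hKe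
  have hKe0 : Ke ≠ 0 := by
    rw [hKe]; exact_mod_cast (by omega : K ≠ 0)
  have hKetop : Ke ≠ ⊤ := by rw [hKe]; exact ENNReal.natCast_ne_top K
  have hKe1 : 1 ≤ Ke := by rw [hKe]; exact_mod_cast (by omega : 1 ≤ K)
  have hKe2 : (2:ENNReal) ≤ Ke := by rw [hKe]; exact_mod_cast hK
  set θ : ENNReal := 2 * Ke ^ (-((L:ℝ) * τ / 2)) with hθdef
  have hA0 : Ke ^ ((L:ℝ) * τ / 2) ≠ 0 :=
    (ENNReal.rpow_pos (lt_of_lt_of_le (by norm_num) hKe1) hKetop).ne'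
  have hAtop : Ke ^ ((L:ℝ) * τ / 2) ≠ ⊤ :=
    ENNReal.rpow_ne_top_of_nonneg (by positivity) hKetop
  have h2A : (2:ENNReal) < Ke ^ ((L:ℝ) * τ / 2) := by
    calc (2:ENNReal) < 4 := by norm_num
      _ = (2:ENNReal) ^ ((2:ℕ):ℝ) := by rw [ENNReal.rpow_natCast]; norm_num
      _ ≤ (2:ENNReal) ^ ((L:ℝ) * τ / 2) := by
          refine ENNReal.rpow_le_rpow_of_exponent_le (by norm_num) ?_
          push_cast
          nlinarith [hLτ]
      _ ≤ Ke ^ ((L:ℝ) * τ / 2) := ENNReal.rpow_le_rpow hKe2 (by positivity)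
  have hθlt : θ < 1 := by
    rw [hθdef, ENNReal.rpow_neg, ← div_eq_mul_inv]
    rw [ENNReal.div_lt_iff (Or.inl hA0) (Or.inl hAtop), one_mul]
    exact h2A
  -- the key per-level estimate
  have hterm : ∀ j : ℕ,
      (Fintype.card (PieceIdx K L M j) : ENNReal) * (Ke⁻¹ ^ (L * j)) ^ (d:ℝ) ≤ θ ^ j := by
    intro j
    have hcard : (Fintype.card (PieceIdx K L M j) : ENNReal)
        ≤ Ke ^ (L * j) * (2 ^ j * Ke ^ (L * (j / M))) := by
      have := card_pieceIdx (K := K) (by omega) L M j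
      calc (Fintype.card (PieceIdx K L M j) : ENNReal)
          ≤ ((K ^ (L * j) * (2 ^ j * K ^ (L * (j / M))) : ℕ) : ENNReal) := by
            exact_mod_cast this
        _ = Ke ^ (L * j) * (2 ^ j * Ke ^ (L * (j / M))) := by push_cast; rw [hKe]
    have hdiam : (Ke⁻¹ ^ (L * j)) ^ (d:ℝ) = Ke ^ (-((L * j : ℕ):ℝ) * (d:ℝ)) := by
      rw [← ENNReal.inv_pow, ← ENNReal.rpow_natCast Ke (L * j), ← ENNReal.rpow_neg,
        ← ENNReal.rpow_mul]
    have hKepow : ∀ m : ℕ, (Ke : ENNReal) ^ m = Ke ^ ((m:ℕ):ℝ) :=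
      fun m => (ENNReal.rpow_natCast Ke m).symm
    calc (Fintype.card (PieceIdx K L M j) : ENNReal) * (Ke⁻¹ ^ (L * j)) ^ (d:ℝ)
        ≤ (Ke ^ (L * j) * (2 ^ j * Ke ^ (L * (j / M)))) * (Ke⁻¹ ^ (L * j)) ^ (d:ℝ) :=
          mul_le_mul_left hcard _
      _ = 2 ^ j * (Ke ^ (((L * j : ℕ):ℝ)) * Ke ^ (((L * (j / M) : ℕ):ℝ))
            * Ke ^ (-((L * j : ℕ):ℝ) * (d:ℝ))) := by
          rw [hdiam, hKepow (L * j), hKepow (L * (j / M))]; ring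
      _ = 2 ^ j * Ke ^ (((L * j : ℕ):ℝ) + ((L * (j / M) : ℕ):ℝ)
            + (-((L * j : ℕ):ℝ) * (d:ℝ))) := by
          rw [ENNReal.rpow_add _ _ hKe0 hKetop, ENNReal.rpow_add _ _ hKe0 hKetop]
      _ ≤ 2 ^ j * Ke ^ (-((L:ℝ) * τ / 2) * (j:ℝ)) := by
          gcongr
          · -- exponent inequality
            have he1 : ((L * (j / M) : ℕ):ℝ) ≤ (L:ℝ) * ((j:ℝ) * (τ / 2)) := by
              have h1 : ((j / M : ℕ):ℝ) ≤ (j:ℝ) / M := Nat.cast_div_le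
              have h2 : (j:ℝ) / M ≤ (j:ℝ) * (τ / 2) := by
                rw [div_eq_mul_inv, ← one_div]
                exact mul_le_mul_of_nonneg_left hMτ (by positivity)
              calc ((L * (j / M) : ℕ):ℝ) = (L:ℝ) * ((j / M : ℕ):ℝ) := by push_cast; ring
                _ ≤ (L:ℝ) * ((j:ℝ) * (τ / 2)) := by
                    exact mul_le_mul_of_nonneg_left (h1.trans h2) (by positivity)
            have he2 : ((L * j : ℕ):ℝ) = (L:ℝ) * (j:ℝ) := by push_cast; ring
            rw [he2]
            have hdτ : (d:ℝ) = 1 + τ := by rw [hτ]; ring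
            rw [hdτ]
            nlinarith [he1]
      _ = θ ^ j := by
          rw [hθdef, mul_pow, ← ENNReal.rpow_natCast (Ke ^ (-((L:ℝ) * τ / 2))) j,
            ← ENNReal.rpow_mul]
  -- the covering family
  set t : ∀ N : ℕ, (Σ k : ℕ, PieceIdx K L M (N + 1 + k)) → Set (SymbSp K × SymbSp K) :=
    fun N i => piece L M (N + 1 + i.1) i.2 with htdef
  have hmono : ∀ a b : ℕ, a ≤ b → (Ke⁻¹ : ENNReal) ^ b ≤ Ke⁻¹ ^ a := by
    intro a b hab
    obtain ⟨c, rfl⟩ := Nat.exists_eq_add_of_le hab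
    rw [pow_add]
    calc Ke⁻¹ ^ a * Ke⁻¹ ^ c ≤ Ke⁻¹ ^ a * 1 := by
          gcongr
          exact pow_le_one' (ENNReal.inv_le_one.mpr hKe1) c
      _ = Ke⁻¹ ^ a := mul_one _
  have ht : ∀ N : ℕ, ∀ i, EMetric.diam (t N i) ≤ Ke⁻¹ ^ (L * (N + 1)) := by
    intro N i
    refine le_trans ?_ (hmono _ _ (Nat.mul_le_mul_left L (Nat.le_add_right (N + 1) i.1)))
    exact piece_diam hK L M (N + 1 + i.1) i.2
  have hr : Filter.Tendsto (fun N : ℕ => (Ke⁻¹ : ENNReal) ^ (L * (N + 1)))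
      Filter.atTop (nhds 0) := by
    have hbase : (Ke⁻¹ : ENNReal) < 1 := by
      rw [ENNReal.inv_lt_one]
      exact lt_of_lt_of_le (by norm_num) hKe2
    have h0 := ENNReal.tendsto_pow_atTop_nhds_zero_of_lt_one hbase
    refine h0.comp ?_
    refine Filter.tendsto_atTop_mono (fun N => ?_) Filter.tendsto_id
    calc (id N : ℕ) = N := rfl
      _ ≤ L * (N + 1) := by nlinarith [hLpos]
  have hst : ∀ N : ℕ, MLYset K ⊆ ⋃ i, t N i := by
    intro N p hp
    have hliminf0 := hp.1
    set ε : ℝ := 1 / (2 * L * M) with hεdef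
    have hεpos : 0 < ε := by rw [hεdef]; positivity
    have hcobdd : Filter.IsCoboundedUnder (· ≥ ·) Filter.atTop (fun n : ℕ =>
        (∑ i ∈ Finset.range n, dist ((shift K)^[i] p.1) ((shift K)^[i] p.2)) / n) := by
      refine Filter.isCoboundedUnder_ge_of_le Filter.atTop (x := 1) fun n => ?_
      rcases Nat.eq_zero_or_pos n with hn | hn
      · simp [hn]
      · rw [div_le_one (by exact_mod_cast hn : (0:ℝ) < n)]
        calc (∑ i ∈ Finset.range n, dist ((shift K)^[i] p.1) ((shift K)^[i] p.2))
            ≤ ∑ i ∈ Finset.range n, 1 := Finset.sum_le_sum fun i _ => dist_le_one _ _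
          _ = n := by simp
    have hfreq := Filter.frequently_lt_of_liminf_lt hcobdd (by rw [hliminf0]; exact hεpos)
    rw [Filter.frequently_atTop] at hfreq
    obtain ⟨n, hn1, hn2⟩ := hfreq (max (L * (N + 2)) 1)
    have hnL : L * (N + 2) ≤ n := le_trans (le_max_left _ _) hn1
    have hn1' : 1 ≤ n := le_trans (le_max_right _ _) hn1
    have hjge : N + 2 ≤ n / L := by
      rw [Nat.le_div_iff_mul_le hLpos]
      calc (N + 2) * L = L * (N + 2) := by ring
        _ ≤ n := hnL
    obtain ⟨k0, hk0⟩ : ∃ k0, n / L = N + 1 + k0 := ⟨n / L - (N + 1), by omega⟩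
    have hLjn : L * (N + 1 + k0) ≤ n := by
      rw [← hk0]
      calc L * (n / L) = n / L * L := by ring
        _ ≤ n := Nat.div_mul_le_self n L
    have hnlt : n < L * ((N + 1 + k0) + 1) := by
      have h1 := Nat.div_add_mod n L
      have h2 : n % L < L := Nat.mod_lt _ hLpos
      rw [← hk0]
      calc n = L * (n / L) + n % L := h1.symm
        _ < L * (n / L) + L := by omega
        _ = L * (n / L + 1) := by ring
    -- bad block count
    have hnpos : (0:ℝ) < n := by exact_mod_cast hn1'
    have hsumlt : (∑ i ∈ Finset.range n, dist ((shift K)^[i] p.1) ((shift K)^[i] p.2))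
        < ε * n := by
      rw [div_lt_iff₀ hnpos] at hn2
      exact hn2
    have hcard1 : (badB L (N + 1 + k0) p).card
        ≤ ((Finset.range n).filter fun i => ¬ p.1 i = p.2 i).card := by
      refine le_trans (Finset.card_image_le) (Finset.card_le_card ?_)
      refine Finset.filter_subset_filter _ ?_
      intro i hi
      rw [Finset.mem_range] at hi ⊢
      omega
    have hC : ((badB L (N + 1 + k0) p).card : ℝ) * (2 * L * M) < n := by
      have h1 : ((badB L (N + 1 + k0) p).card : ℝ)
          ≤ (((Finset.range n).filter fun i => ¬ p.1 i = p.2 i).card : ℝ) := by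
        exact_mod_cast hcard1
      have h2 := ham_le_sum (n := n) p
      have h3 : ε * (n:ℝ) * (2 * L * M) = n := by
        rw [hεdef]
        have hL0 : (L:ℝ) ≠ 0 := by positivity
        have hM0 : (M:ℝ) ≠ 0 := by positivity
        field_simp
      have h4 : (0:ℝ) < 2 * (L:ℝ) * M := by positivity
      nlinarith
    have hCn : (badB L (N + 1 + k0) p).card * (2 * L * M) < n := by exact_mod_cast hC
    have hcardM : (badB L (N + 1 + k0) p).card * M ≤ (N + 1 + k0) := by
      have h4 : (badB L (N + 1 + k0) p).card * (2 * M) * L < ((N + 1 + k0) + 1) * L := by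
        calc (badB L (N + 1 + k0) p).card * (2 * M) * L = (badB L (N + 1 + k0) p).card * (2 * L * M) := by ring
          _ < n := hCn
          _ < L * ((N + 1 + k0) + 1) := hnlt
          _ = ((N + 1 + k0) + 1) * L := by ring
      have h5 := Nat.lt_of_mul_lt_mul_right h4
      have h6 : (badB L (N + 1 + k0) p).card * M ≤ (badB L (N + 1 + k0) p).card * (2 * M) :=
        Nat.mul_le_mul_left _ (by omega)
      omega
    have hbad : (badB L (N + 1 + k0) p).card ≤ (N + 1 + k0) / M := (Nat.le_div_iff_mul_le hMpos).mpr hcardM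
    obtain ⟨idx, hidx⟩ := piece_cover hLpos hbad
    exact Set.mem_iUnion.mpr ⟨⟨k0, idx⟩, hidx⟩
  -- apply the covering bound
  have hmain := MeasureTheory.Measure.hausdorffMeasure_le_liminf_tsum (d:ℝ) (MLYset K)
    (l := Filter.atTop) (fun N => (Ke⁻¹ : ENNReal) ^ (L * (N + 1))) hr t
    (Filter.Eventually.of_forall ht) (Filter.Eventually.of_forall hst)
  have htsum : ∀ N : ℕ, ∑' (i : Σ k : ℕ, PieceIdx K L M (N + 1 + k)),
      EMetric.diam (t N i) ^ (d:ℝ) ≤ θ ^ (N + 1) * (1 - θ)⁻¹ := by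
    intro N
    calc ∑' (i : Σ k : ℕ, PieceIdx K L M (N + 1 + k)), EMetric.diam (t N i) ^ (d:ℝ)
        = ∑' (k : ℕ), ∑' (idx : PieceIdx K L M (N + 1 + k)),
            EMetric.diam (piece L M (N + 1 + k) idx) ^ (d:ℝ) := ENNReal.tsum_sigma' _
      _ ≤ ∑' (k : ℕ), θ ^ (N + 1 + k) := by
          refine ENNReal.tsum_le_tsum fun k => ?_
          rw [tsum_fintype]
          calc ∑ idx : PieceIdx K L M (N + 1 + k),
                EMetric.diam (piece L M (N + 1 + k) idx) ^ (d:ℝ)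
              ≤ ∑ _idx : PieceIdx K L M (N + 1 + k),
                (Ke⁻¹ ^ (L * (N + 1 + k))) ^ (d:ℝ) := by
                refine Finset.sum_le_sum fun idx _ => ?_
                exact ENNReal.rpow_le_rpow (piece_diam hK L M _ idx) (by positivity)
            _ = (Fintype.card (PieceIdx K L M (N + 1 + k)) : ENNReal)
                * (Ke⁻¹ ^ (L * (N + 1 + k))) ^ (d:ℝ) := by
                rw [Finset.sum_const, Finset.card_univ, nsmul_eq_mul]
            _ ≤ θ ^ (N + 1 + k) := hterm (N + 1 + k)
      _ = θ ^ (N + 1) * ∑' (k : ℕ), θ ^ k := by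
          rw [← ENNReal.tsum_mul_left]
          congr 1
          funext k
          rw [pow_add]
      _ = θ ^ (N + 1) * (1 - θ)⁻¹ := by rw [ENNReal.tsum_geometric]
  have hlim : Filter.Tendsto (fun N : ℕ => θ ^ (N + 1) * (1 - θ)⁻¹)
      Filter.atTop (nhds 0) := by
    have h1 : Filter.Tendsto (fun N : ℕ => θ ^ (N + 1)) Filter.atTop (nhds 0) :=
      (ENNReal.tendsto_pow_atTop_nhds_zero_of_lt_one hθlt).comp
        (Filter.tendsto_add_atTop_nat 1)
    have h2 : (1 - θ)⁻¹ ≠ ⊤ := by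
      rw [Ne, ENNReal.inv_eq_top]
      exact (tsub_pos_of_lt hθlt).ne'
    simpa using ENNReal.Tendsto.mul_const h1 (Or.inr h2)
  refine le_antisymm ?_ zero_le
  calc μH[(d:ℝ)] (MLYset K)
      ≤ Filter.liminf (fun N => ∑' (i : Σ k : ℕ, PieceIdx K L M (N + 1 + k)),
          EMetric.diam (t N i) ^ (d:ℝ)) Filter.atTop := hmain
    _ ≤ Filter.liminf (fun N : ℕ => θ ^ (N + 1) * (1 - θ)⁻¹) Filter.atTop :=
        Filter.liminf_le_liminf (Filter.Eventually.of_forall htsum)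
    _ = 0 := hlim.liminf_eq

end SymbSp

end UB


/-- For `K ≥ 2`, the set of mean Li–Yorke pairs of `σ_K` has Hausdorff
dimension `1` and its `1`-dimensional Hausdorff measure equals `+∞`. -/
theorem statement_3 (K : ℕ) (hK : 2 ≤ K) :
    dimH (MLYset K) = 1 ∧ μH[1] (MLYset K) = ⊤ := by
  have htop : μH[1] (MLYset K) = ⊤ := MLY_h1_top hK
  refine ⟨le_antisymm ?_ ?_, htop⟩
  · refine dimH_le fun d' hd' => ?_
    by_contra hgt
    push_neg at hgt
    have hd1 : 1 < d' := by exact_mod_cast hgt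
    have hzero := SymbSp.MLY_hd_zero hK hd1
    rw [hzero] at hd'
    exact (ENNReal.zero_ne_top) hd'
  · have h1 : μH[((1 : NNReal) : ℝ)] (MLYset K) = ⊤ := by
      rw [NNReal.coe_one]; exact htop
    have h2 := le_dimH_of_hausdorffMeasure_eq_top h1
    simpa using h2
end

section
/- Let K ≥ 2. Then dim_H Asym(σ_K) = 1, and dim_H Prox(σ_K) = dim_H Dist(σ_K) = dim_H LY(σ_K) = 2, where these are subsets of Σ_K × Σ_K. -/
open Filter Set MeasureTheory Topology TopologicalSpace

/-- The set of asymptotic pairs of `σ_K`. -/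
def AsymSet (K : ℕ) : Set (SymbSp K × SymbSp K) :=
  {z | Filter.Tendsto (fun i : ℕ => dist ((shift K)^[i] z.1) ((shift K)^[i] z.2))
        Filter.atTop (nhds 0)}

/-- The set of proximal pairs of `σ_K`. -/
def ProxSet (K : ℕ) : Set (SymbSp K × SymbSp K) :=
  {z | Filter.liminf (fun i : ℕ => dist ((shift K)^[i] z.1) ((shift K)^[i] z.2))
        Filter.atTop = 0}

/-- The set of distal pairs of `σ_K`. -/
def DistSet (K : ℕ) : Set (SymbSp K × SymbSp K) :=
  {z | 0 < Filter.liminf (fun i : ℕ => dist ((shift K)^[i] z.1) ((shift K)^[i] z.2))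
        Filter.atTop}

/-- The set of Li–Yorke pairs of `σ_K`: proximal but not asymptotic pairs. -/
def LYset (K : ℕ) : Set (SymbSp K × SymbSp K) := ProxSet K \ AsymSet K
noncomputable section Aux

open SymbSp
open scoped NNReal ENNReal

namespace SymbAux

variable {K : ℕ}

lemma one_lt_cast (hK : 2 ≤ K) : (1:ℝ) < (K:ℝ) := by exact_mod_cast lt_of_lt_of_le one_lt_two hK

lemma cast_pos (hK : 2 ≤ K) : (0:ℝ) < (K:ℝ) := lt_trans one_pos (one_lt_cast hK)

lemma inv_pos' (hK : 2 ≤ K) : (0:ℝ) < (K:ℝ)⁻¹ := inv_pos.mpr (cast_pos hK)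

lemma inv_lt_one' (hK : 2 ≤ K) : (K:ℝ)⁻¹ < 1 := inv_lt_one_of_one_lt₀ (one_lt_cast hK)

lemma dist_def (x y : SymbSp K) : dist x y = sdist x y := rfl

lemma dist_le_one (x y : SymbSp K) : dist x y ≤ 1 := by
  have h := sdist_le_of_agree (x := x) (y := y) (n := 0) (fun i hi => absurd hi (Nat.not_lt_zero i))
  simpa [dist_def] using h

open Classical in
lemma dist_le_pow_iff (hK : 2 ≤ K) {x y : SymbSp K} {n : ℕ} :
    dist x y ≤ (K:ℝ)⁻¹ ^ n ↔ ∀ i < n, x i = y i := by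
  constructor
  · intro h i hi
    by_cases hxy : x = y
    · rw [hxy]
    · rw [dist_def, sdist_eq hxy] at h
      have hn : n ≤ Nat.find (exists_ne hxy) := by
        by_contra hc
        push_neg at hc
        exact absurd h (not_le.mpr
          ((pow_lt_pow_iff_right_of_lt_one₀ (inv_pos' hK) (inv_lt_one' hK)).mpr hc))
      exact eq_of_lt_find hxy (lt_of_lt_of_le hi hn)
  · exact fun h => sdist_le_of_agree h

open Classical in
lemma eq_zero_coord_of_dist_lt_one {x y : SymbSp K} (h : dist x y < 1) : x 0 = y 0 := by
  by_contra h0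
  have hxy : ¬ x = y := fun he => h0 (congrFun he 0)
  rw [dist_def, sdist_eq hxy] at h
  have hfind : Nat.find (exists_ne hxy) = 0 := (Nat.find_eq_zero _).mpr h0
  rw [hfind, pow_zero] at h
  exact lt_irrefl _ h

lemma exists_dist_eq_pow {x y : SymbSp K} (h : x ≠ y) : ∃ m, dist x y = (K:ℝ)⁻¹ ^ m :=
  ⟨_, sdist_eq h⟩

lemma exists_dist_eq_pow_pair {z z' : SymbSp K × SymbSp K} (h : z ≠ z') :
    ∃ m, dist z z' = (K:ℝ)⁻¹ ^ m := by
  rw [Prod.dist_eq]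
  rcases eq_or_ne z.1 z'.1 with h1 | h1
  · rcases eq_or_ne z.2 z'.2 with h2 | h2
    · exact absurd (Prod.ext h1 h2) h
    · obtain ⟨m, hm⟩ := exists_dist_eq_pow h2
      exact ⟨m, by rw [h1, dist_self, hm, max_eq_right (by positivity)]⟩
  · rcases eq_or_ne z.2 z'.2 with h2 | h2
    · obtain ⟨m, hm⟩ := exists_dist_eq_pow h1
      exact ⟨m, by rw [h2, dist_self, hm, max_eq_left (by positivity)]⟩
    · obtain ⟨m1, hm1⟩ := exists_dist_eq_pow h1
      obtain ⟨m2, hm2⟩ := exists_dist_eq_pow h2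
      rcases le_total m1 m2 with hle | hle
      · exact ⟨m1, by
          rw [hm1, hm2, max_eq_left (pow_le_pow_of_le_one (by positivity) (inv_cast_le_one K) hle)]⟩
      · exact ⟨m2, by
          rw [hm1, hm2, max_eq_right (pow_le_pow_of_le_one (by positivity) (inv_cast_le_one K) hle)]⟩

lemma prod_dist_le_pow_iff (hK : 2 ≤ K) {z z' : SymbSp K × SymbSp K} {n : ℕ} :
    dist z z' ≤ (K:ℝ)⁻¹ ^ n ↔ ∀ i < n, z.1 i = z'.1 i ∧ z.2 i = z'.2 i := by
  rw [Prod.dist_eq, max_le_iff, dist_le_pow_iff hK, dist_le_pow_iff hK]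
  constructor
  · rintro ⟨h1, h2⟩ i hi; exact ⟨h1 i hi, h2 i hi⟩
  · intro h; exact ⟨fun i hi => (h i hi).1, fun i hi => (h i hi).2⟩

lemma holderOnWith_of_dist_le {X Y : Type*} [PseudoMetricSpace X] [PseudoMetricSpace Y]
    {f : X → Y} {C r : ℝ≥0} {s : Set X}
    (h : ∀ x ∈ s, ∀ y ∈ s, dist (f x) (f y) ≤ (C:ℝ) * dist x y ^ (r:ℝ)) :
    HolderOnWith C r f s := by
  intro x hx y hy
  rw [edist_dist, edist_dist, ← ENNReal.ofReal_coe_nnreal,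
    ENNReal.ofReal_rpow_of_nonneg dist_nonneg r.coe_nonneg, ← ENNReal.ofReal_mul C.coe_nonneg]
  exact ENNReal.ofReal_le_ofReal (h x hx y hy)

lemma holderWith_of_dist_le {X Y : Type*} [PseudoMetricSpace X] [PseudoMetricSpace Y]
    {f : X → Y} {C r : ℝ≥0}
    (h : ∀ x y, dist (f x) (f y) ≤ (C:ℝ) * dist x y ^ (r:ℝ)) :
    HolderWith C r f :=
  holderOnWith_univ.mp (holderOnWith_of_dist_le (fun x _ y _ => h x y))

end SymbAux

end Aux
noncomputable section Aux2

open SymbSp SymbAux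
open scoped NNReal ENNReal

namespace SymbAux

lemma abs_coord_sub_le (M : ℕ) (a b : Fin M) : |((a:ℕ):ℝ) - ((b:ℕ):ℝ)| ≤ (M:ℝ) - 1 := by
  have ha : ((a:ℕ):ℝ) ≤ (M:ℝ) - 1 := by
    have h := a.is_lt
    have : ((a:ℕ):ℝ) + 1 ≤ (M:ℝ) := by exact_mod_cast Nat.succ_le_of_lt h
    linarith
  have hb : ((b:ℕ):ℝ) ≤ (M:ℝ) - 1 := by
    have h := b.is_lt
    have : ((b:ℕ):ℝ) + 1 ≤ (M:ℝ) := by exact_mod_cast Nat.succ_le_of_lt h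
    linarith
  have ha0 : (0:ℝ) ≤ ((a:ℕ):ℝ) := by positivity
  have hb0 : (0:ℝ) ≤ ((b:ℕ):ℝ) := by positivity
  rw [abs_sub_le_iff]
  constructor <;> linarith

lemma summable_digits (M : ℕ) (hM : 2 ≤ M) (x : SymbSp M) :
    Summable (fun i : ℕ => ((x i : ℕ):ℝ) * (M:ℝ)⁻¹ ^ (i+1)) := by
  have hM0 : (M:ℝ) ≠ 0 := ne_of_gt (cast_pos hM)
  refine Summable.of_nonneg_of_le (fun i => by positivity) (f := fun i => (M:ℝ)⁻¹ ^ i)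
    (fun i => ?_) (summable_geometric_of_lt_one (by positivity) (inv_lt_one' hM))
  have hxi : ((x i : ℕ):ℝ) ≤ (M:ℝ) := by exact_mod_cast (x i).is_lt.le
  calc ((x i : ℕ):ℝ) * (M:ℝ)⁻¹ ^ (i+1) ≤ (M:ℝ) * (M:ℝ)⁻¹ ^ (i+1) := by
        apply mul_le_mul_of_nonneg_right hxi (by positivity)
    _ = (M:ℝ)⁻¹ ^ i := by
        rw [pow_succ, mul_comm ((M:ℝ)⁻¹ ^ i) _, ← mul_assoc, mul_inv_cancel₀ hM0, one_mul]

/-- The natural base-`M` "value" map from `Σ_M` to `[0,1]`. -/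
def toIcc (M : ℕ) : SymbSp M → ℝ := fun x => ∑' i, ((x i : ℕ):ℝ) * (M:ℝ)⁻¹ ^ (i+1)

open Classical in
lemma toIcc_lipschitz (M : ℕ) (hM : 2 ≤ M) : LipschitzWith 1 (toIcc M) := by
  apply LipschitzWith.of_dist_le_mul
  intro x y
  rw [NNReal.coe_one, one_mul]
  rcases eq_or_ne x y with rfl | hxy
  · simp
  have hM0 : (M:ℝ) ≠ 0 := ne_of_gt (cast_pos hM)
  have hM1 : (M:ℝ) - 1 ≠ 0 := by
    have := one_lt_cast hM; intro h; linarith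
  set n := Nat.find (exists_ne hxy) with hn
  have hdist : dist x y = (M:ℝ)⁻¹ ^ n := sdist_eq hxy
  rw [Real.dist_eq, hdist]
  set w : ℕ → ℝ := fun i => (((x i : ℕ):ℝ) - ((y i : ℕ):ℝ)) * (M:ℝ)⁻¹ ^ (i+1) with hw
  have hxs := summable_digits M hM x
  have hys := summable_digits M hM y
  have hws : Summable w := by
    have := hxs.sub hys
    simpa [hw, sub_mul] using this
  have hsub : toIcc M x - toIcc M y = ∑' i, w i := by
    rw [toIcc, toIcc, ← Summable.tsum_sub hxs hys]
    apply tsum_congr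
    intro i
    simp [hw, sub_mul]
  have hhead : ∀ i ∈ Finset.range n, w i = 0 := by
    intro i hi
    have hxyi := eq_of_lt_find hxy (Finset.mem_range.mp hi)
    simp [hw, hxyi]
  have htail := Summable.sum_add_tsum_nat_add (f := w) n hws
  rw [Finset.sum_eq_zero hhead, zero_add] at htail
  have hgeom : HasSum (fun i : ℕ => (((M:ℝ) - 1) * (M:ℝ)⁻¹ ^ (n+1)) * (M:ℝ)⁻¹ ^ i)
      ((M:ℝ)⁻¹ ^ n) := by
    have hg := (hasSum_geometric_of_lt_one (by positivity) (inv_lt_one' hM)).mul_left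
      (((M:ℝ) - 1) * (M:ℝ)⁻¹ ^ (n+1))
    have hv : ((M:ℝ) - 1) * (M:ℝ)⁻¹ ^ (n+1) * (1 - (M:ℝ)⁻¹)⁻¹ = (M:ℝ)⁻¹ ^ n := by
      rw [pow_succ]
      field_simp
    rw [hv] at hg
    exact hg
  have hb : ∀ i : ℕ, ‖w (i + n)‖ ≤ (((M:ℝ) - 1) * (M:ℝ)⁻¹ ^ (n+1)) * (M:ℝ)⁻¹ ^ i := by
    intro i
    rw [Real.norm_eq_abs, hw]
    have h1 : |(((x (i+n) : ℕ)):ℝ) - ((y (i+n) : ℕ):ℝ)| ≤ (M:ℝ) - 1 := abs_coord_sub_le M _ _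
    have hidx : i + n + 1 = (n + 1) + i := by omega
    rw [abs_mul, abs_pow, abs_inv, Nat.abs_cast, hidx, pow_add, ← mul_assoc]
    apply mul_le_mul_of_nonneg_right _ (by positivity)
    apply mul_le_mul_of_nonneg_right h1 (by positivity)
  have hfin := tsum_of_norm_bounded hgeom hb
  rw [htail] at hfin
  rw [hsub]
  simpa [Real.norm_eq_abs] using hfin

lemma toIcc_surj (M : ℕ) (hM : 2 ≤ M) : Set.Ico (0:ℝ) 1 ⊆ Set.range (toIcc M) := by
  rintro r ⟨hr0, hr1⟩
  have hM0 : (0:ℝ) < (M:ℝ) := cast_pos hM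
  set a : ℕ → ℤ := fun i => ⌊r * (M:ℝ)^i⌋ with ha
  have ha0 : a 0 = 0 := by
    simp only [ha, pow_zero, mul_one]
    exact Int.floor_eq_zero_iff.mpr ⟨hr0, hr1⟩
  have hlow : ∀ i, (a i : ℝ) ≤ r * (M:ℝ)^i := fun i => Int.floor_le _
  have hhigh : ∀ i, r * (M:ℝ)^i < a i + 1 := fun i => Int.lt_floor_add_one _
  have hstep1 : ∀ i, (M:ℤ) * a i ≤ a (i+1) := by
    intro i
    apply Int.le_floor.mpr
    push_cast
    calc (M:ℝ) * (a i : ℝ) ≤ (M:ℝ) * (r * (M:ℝ)^i) :=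
          mul_le_mul_of_nonneg_left (hlow i) hM0.le
      _ = r * (M:ℝ)^(i+1) := by ring
  have hstep2 : ∀ i, a (i+1) < (M:ℤ) * a i + M := by
    intro i
    apply Int.floor_lt.mpr
    push_cast
    calc r * (M:ℝ)^(i+1) = (M:ℝ) * (r * (M:ℝ)^i) := by ring
      _ < (M:ℝ) * ((a i : ℝ) + 1) := mul_lt_mul_of_pos_left (hhigh i) hM0
      _ = (M:ℝ) * (a i : ℝ) + (M:ℝ) := by ring
  have hMpos : 0 < M := by omega
  set x : SymbSp M := fun i => ⟨(a (i+1) - (M:ℤ) * a i).toNat, by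
    have h1 := hstep1 i; have h2 := hstep2 i; omega⟩ with hx
  have hxval : ∀ i, (((x i : ℕ)):ℝ) = (a (i+1) : ℝ) - (M:ℝ) * (a i : ℝ) := by
    intro i
    have h1 := hstep1 i
    have hz : ((x i : ℕ) : ℤ) = a (i+1) - (M:ℤ) * a i := by
      simp only [hx]
      exact Int.toNat_of_nonneg (by omega)
    have := congrArg (fun z : ℤ => (z : ℝ)) hz
    push_cast at this
    exact this
  have hpartial : ∀ n, ∑ i ∈ Finset.range n, ((x i : ℕ):ℝ) * (M:ℝ)⁻¹ ^ (i+1)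
      = (a n : ℝ) * (M:ℝ)⁻¹ ^ n := by
    intro n
    induction n with
    | zero => simp [ha0]
    | succ n ih =>
      rw [Finset.sum_range_succ, ih, hxval n]
      have hMne : (M:ℝ) ≠ 0 := ne_of_gt hM0
      have hMM : (M:ℝ) * (M:ℝ)⁻¹ = 1 := mul_inv_cancel₀ hMne
      rw [pow_succ]
      linear_combination (-(a n : ℝ) * (M:ℝ)⁻¹ ^ n) * hMM
  have happrox : ∀ n, |(a n : ℝ) * (M:ℝ)⁻¹ ^ n - r| ≤ (M:ℝ)⁻¹ ^ n := by
    intro n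
    have e1 := hlow n
    have e2 := hhigh n
    have hp : (0:ℝ) < (M:ℝ)^n := by positivity
    have hupos : (0:ℝ) < (M:ℝ)⁻¹ ^ n := by positivity
    have hu : (M:ℝ)⁻¹ ^ n * (M:ℝ) ^ n = 1 := by
      rw [inv_pow]; exact inv_mul_cancel₀ (ne_of_gt hp)
    have k1 := mul_le_mul_of_nonneg_right e1 hupos.le
    have k2 := mul_lt_mul_of_pos_right e2 hupos
    rw [abs_le]
    constructor <;> nlinarith [k1, k2, hu]
  refine ⟨x, ?_⟩
  have hsum := (summable_digits M hM x).hasSum.tendsto_sum_nat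
  have h2 : Tendsto (fun n => ∑ i ∈ Finset.range n, ((x i : ℕ):ℝ) * (M:ℝ)⁻¹ ^ (i+1))
      atTop (𝓝 r) := by
    have heq : (fun n => ∑ i ∈ Finset.range n, ((x i : ℕ):ℝ) * (M:ℝ)⁻¹ ^ (i+1))
        = fun n => (a n : ℝ) * (M:ℝ)⁻¹ ^ n := funext hpartial
    rw [heq, tendsto_iff_dist_tendsto_zero]
    apply squeeze_zero (fun n => dist_nonneg) (fun n => ?_)
      (tendsto_pow_atTop_nhds_zero_of_lt_one (by positivity) (inv_lt_one' hM))
    rw [Real.dist_eq]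
    exact happrox n
  exact tendsto_nhds_unique hsum h2

lemma hausdorffMeasure_univ_symb_zero (M : ℕ) (hM : 2 ≤ M) {d : ℝ} (hd : 1 < d) :
    μH[d] (univ : Set (SymbSp M)) = 0 := by
  have hM1 : (1:ℝ≥0∞) < (M:ℝ≥0∞) := by exact_mod_cast lt_of_lt_of_le one_lt_two hM
  have hMne0 : (M:ℝ≥0∞) ≠ 0 := by positivity
  have hMneT : (M:ℝ≥0∞) ≠ ⊤ := ENNReal.natCast_ne_top M
  set R : ℝ≥0∞ := (M:ℝ≥0∞) ^ ((1:ℝ) - d) with hR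
  have hRlt : R < 1 := ENNReal.rpow_lt_one_of_one_lt_of_neg hM1 (by linarith)
  have hr : Tendsto (fun n : ℕ => ENNReal.ofReal ((M:ℝ)⁻¹ ^ n)) atTop (𝓝 0) := by
    rw [← ENNReal.ofReal_zero]
    exact (ENNReal.continuous_ofReal.tendsto 0).comp
      (tendsto_pow_atTop_nhds_zero_of_lt_one (by positivity) (inv_lt_one' hM))
  have hdiam : ∀ (n : ℕ) (w : Fin n → Fin M),
      Metric.ediam {x : SymbSp M | ∀ i : Fin n, x i = w i} ≤ ENNReal.ofReal ((M:ℝ)⁻¹ ^ n) := by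
    intro n w
    apply EMetric.diam_le
    intro x hx y hy
    rw [edist_dist]
    apply ENNReal.ofReal_le_ofReal
    exact sdist_le_of_agree (fun i hi => (hx ⟨i, hi⟩).trans (hy ⟨i, hi⟩).symm)
  have hcov : ∀ n : ℕ, (univ : Set (SymbSp M)) ⊆
      ⋃ w : Fin n → Fin M, {x : SymbSp M | ∀ i : Fin n, x i = w i} := by
    intro n x _
    exact mem_iUnion.mpr ⟨fun i => x i, fun i => rfl⟩
  have key := MeasureTheory.Measure.hausdorffMeasure_le_liminf_sum d (univ : Set (SymbSp M))
    (fun n => ENNReal.ofReal ((M:ℝ)⁻¹ ^ n)) hr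
    (fun n (w : Fin n → Fin M) => {x : SymbSp M | ∀ i : Fin n, x i = w i})
    (Filter.Eventually.of_forall hdiam) (Filter.Eventually.of_forall hcov)
  have hterm : ∀ n : ℕ, (∑ w : Fin n → Fin M,
      Metric.ediam {x : SymbSp M | ∀ i : Fin n, x i = w i} ^ d) ≤ R ^ n := by
    intro n
    have hsum : (∑ w : Fin n → Fin M,
        Metric.ediam {x : SymbSp M | ∀ i : Fin n, x i = w i} ^ d)
        ≤ (Fintype.card (Fin n → Fin M)) • (ENNReal.ofReal ((M:ℝ)⁻¹ ^ n) ^ d) := by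
      rw [← Finset.card_univ]
      apply Finset.sum_le_card_nsmul
      intro w _
      exact ENNReal.rpow_le_rpow (hdiam n w) (by linarith)
    rw [Fintype.card_fun, Fintype.card_fin, Fintype.card_fin, nsmul_eq_mul] at hsum
    refine hsum.trans (le_of_eq ?_)
    have hofr : ENNReal.ofReal ((M:ℝ)⁻¹ ^ n) = ((M:ℝ≥0∞))⁻¹ ^ n := by
      rw [ENNReal.ofReal_pow (by positivity), ENNReal.ofReal_inv_of_pos (cast_pos hM),
        ENNReal.ofReal_natCast]
    have h1 : ((M:ℝ≥0∞))⁻¹ ^ n = (M:ℝ≥0∞) ^ (-(n:ℝ)) := by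
      rw [← ENNReal.rpow_natCast ((M:ℝ≥0∞))⁻¹ n, ← ENNReal.rpow_neg_one,
        ← ENNReal.rpow_mul]
      norm_num
    have h2 : ((M:ℝ≥0∞)) ^ n = (M:ℝ≥0∞) ^ ((n:ℕ):ℝ) := (ENNReal.rpow_natCast _ n).symm
    rw [hofr, h1, Nat.cast_pow, h2, ← ENNReal.rpow_mul,
      ← ENNReal.rpow_add _ _ hMne0 hMneT, hR,
      ← ENNReal.rpow_natCast ((M:ℝ≥0∞) ^ ((1:ℝ) - d)) n, ← ENNReal.rpow_mul]
    congr 1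
    ring
  have hlim : Filter.liminf (fun n : ℕ => (∑ w : Fin n → Fin M,
      Metric.ediam {x : SymbSp M | ∀ i : Fin n, x i = w i} ^ d)) atTop = 0 := by
    have hR0 : Tendsto (fun n : ℕ => R ^ n) atTop (𝓝 0) :=
      ENNReal.tendsto_pow_atTop_nhds_zero_of_lt_one hRlt
    apply le_antisymm _ zero_le
    calc Filter.liminf _ atTop ≤ Filter.liminf (fun n : ℕ => R ^ n) atTop :=
          Filter.liminf_le_liminf (Filter.Eventually.of_forall hterm)
      _ = 0 := hR0.liminf_eq
    
  rw [hlim] at key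
  exact le_antisymm key zero_le

lemma dimH_univ_symb (M : ℕ) (hM : 2 ≤ M) : dimH (univ : Set (SymbSp M)) = 1 := by
  apply le_antisymm
  · apply dimH_le
    intro d hd
    by_contra hd1
    push_neg at hd1
    have hd1' : (1:ℝ) < (d:ℝ) := by
      have : (1:ℝ≥0∞) < (d:ℝ≥0∞) := hd1
      exact_mod_cast this
    rw [hausdorffMeasure_univ_symb_zero M hM hd1'] at hd
    exact ENNReal.zero_ne_top hd
  · have hlip := toIcc_lipschitz M hM
    have himg := hlip.hausdorffMeasure_image_le (d := (1:ℝ)) zero_le_one (univ : Set (SymbSp M))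
    have hsub : Set.Ico (0:ℝ) 1 ⊆ toIcc M '' univ := by
      rw [Set.image_univ]; exact toIcc_surj M hM
    have hone : (1:ℝ≥0∞) ≤ μH[(1:ℝ)] (univ : Set (SymbSp M)) := by
      calc (1:ℝ≥0∞) = μH[(1:ℝ)] (Set.Ico (0:ℝ) 1) := by
            rw [MeasureTheory.hausdorffMeasure_real, Real.volume_Ico]
            norm_num
        _ ≤ μH[(1:ℝ)] (toIcc M '' univ) := measure_mono hsub
        _ ≤ (1:ℝ≥0) ^ (1:ℝ) * μH[(1:ℝ)] (univ : Set (SymbSp M)) := himg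
        _ = μH[(1:ℝ)] (univ : Set (SymbSp M)) := by
            rw [ENNReal.coe_one, ENNReal.one_rpow, one_mul]
    have hne : μH[((1:ℝ≥0):ℝ)] (univ : Set (SymbSp M)) ≠ 0 := by
      rw [NNReal.coe_one]
      intro h
      rw [h] at hone
      exact (not_le.mpr zero_lt_one) hone
    have := le_dimH_of_hausdorffMeasure_ne_zero hne
    simpa using this

end SymbAux

end Aux2
noncomputable section Aux3

open SymbSp SymbAux
open scoped NNReal ENNReal

namespace SymbAux

/-- Pairing map `Σ_K × Σ_K → Σ_{K²}`. -/
def pairMap (K : ℕ) : SymbSp K × SymbSp K → SymbSp (K * K) :=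
  fun z i => finProdFinEquiv (z.1 i, z.2 i)

/-- Unpairing map `Σ_{K²} → Σ_K × Σ_K`. -/
def unpairMap (K : ℕ) : SymbSp (K * K) → SymbSp K × SymbSp K :=
  fun w => (fun i => (finProdFinEquiv.symm (w i)).1, fun i => (finProdFinEquiv.symm (w i)).2)

lemma unpair_pair (K : ℕ) (z : SymbSp K × SymbSp K) : unpairMap K (pairMap K z) = z := by
  apply Prod.ext <;> funext i <;> simp [unpairMap, pairMap]

lemma pair_unpair (K : ℕ) (w : SymbSp (K * K)) : pairMap K (unpairMap K w) = w := by
  funext i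
  show finProdFinEquiv ((finProdFinEquiv.symm (w i)).1, (finProdFinEquiv.symm (w i)).2) = w i
  exact finProdFinEquiv.apply_symm_apply (w i)

lemma cast_mul_inv_pow (K : ℕ) (m : ℕ) :
    (((K * K : ℕ) : ℝ))⁻¹ ^ m = ((K:ℝ)⁻¹ ^ m) ^ 2 := by
  push_cast
  rw [mul_inv]
  ring

lemma pairMap_holder (K : ℕ) (hK : 2 ≤ K) : HolderWith 1 2 (pairMap K) := by
  apply holderWith_of_dist_le
  intro z z'
  rw [NNReal.coe_one, one_mul]
  have h2 : ((2:ℝ≥0):ℝ) = (2:ℝ) := by norm_num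
  rw [h2]
  rcases eq_or_ne z z' with rfl | hzz
  · simp [dist_self, Real.rpow_two]
  obtain ⟨m, hm⟩ := exists_dist_eq_pow_pair hzz
  have hagree := (prod_dist_le_pow_iff hK).mp (le_of_eq hm)
  have hpair : ∀ i < m, pairMap K z i = pairMap K z' i := by
    intro i hi
    obtain ⟨h1, h2⟩ := hagree i hi
    simp [pairMap, h1, h2]
  have hle : dist (pairMap K z) (pairMap K z') ≤ (((K * K : ℕ)):ℝ)⁻¹ ^ m :=
    sdist_le_of_agree hpair
  rw [hm, Real.rpow_two, ← cast_mul_inv_pow]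
  exact hle

lemma unpairMap_holder (K : ℕ) (hK : 2 ≤ K) : HolderWith 1 (2⁻¹) (unpairMap K) := by
  apply holderWith_of_dist_le
  intro w w'
  rw [NNReal.coe_one, one_mul]
  rcases eq_or_ne w w' with rfl | hww
  · simp only [dist_self]
    exact Real.rpow_nonneg le_rfl _
  have hKK : 2 ≤ K * K := le_trans hK (Nat.le_mul_of_pos_left K (by omega))
  obtain ⟨m, hm⟩ := exists_dist_eq_pow hww
  have hagree : ∀ i < m, w i = w' i := (dist_le_pow_iff hKK).mp (le_of_eq hm)
  have hcomp : ∀ i < m, (unpairMap K w).1 i = (unpairMap K w').1 i ∧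
      (unpairMap K w).2 i = (unpairMap K w').2 i := by
    intro i hi
    constructor <;> simp [unpairMap, hagree i hi]
  have hle : dist (unpairMap K w) (unpairMap K w') ≤ (K:ℝ)⁻¹ ^ m :=
    (prod_dist_le_pow_iff hK).mpr hcomp
  rw [hm]
  have hval : ((((K * K : ℕ)):ℝ)⁻¹ ^ m) ^ (((2:ℝ≥0)⁻¹:ℝ≥0):ℝ) = (K:ℝ)⁻¹ ^ m := by
    rw [cast_mul_inv_pow]
    have hnn : (0:ℝ) ≤ (K:ℝ)⁻¹ ^ m := by positivity
    rw [← Real.rpow_natCast ((K:ℝ)⁻¹ ^ m) 2, ← Real.rpow_mul hnn]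
    norm_num
  rw [hval]
  exact hle

lemma dimH_univ_prod (K : ℕ) (hK : 2 ≤ K) :
    dimH (univ : Set (SymbSp K × SymbSp K)) = 2 := by
  have hKK : 2 ≤ K * K := le_trans hK (Nat.le_mul_of_pos_left K (by omega))
  have h1 : dimH (univ : Set (SymbSp (K * K))) = 1 := dimH_univ_symb _ hKK
  apply le_antisymm
  · -- unpairMap is surjective onto univ
    have hsurj : unpairMap K '' univ = univ := by
      apply eq_univ_of_forall
      intro z
      exact ⟨pairMap K z, mem_univ _, unpair_pair K z⟩
    have := (unpairMap_holder K hK).dimH_image_le (by norm_num) univ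
    rw [hsurj, h1] at this
    refine this.trans (le_of_eq ?_)
    rw [ENNReal.coe_inv (by norm_num), ENNReal.coe_ofNat]
    simp [ENNReal.div_eq_inv_mul]
  · have hsurj : pairMap K '' univ = univ := by
      apply eq_univ_of_forall
      intro w
      exact ⟨unpairMap K w, mem_univ _, pair_unpair K w⟩
    have := (pairMap_holder K hK).dimH_image_le (by norm_num) univ
    rw [hsurj, h1] at this
    rw [ENNReal.le_div_iff_mul_le (Or.inl (by norm_num)) (Or.inl (by norm_num))] at this
    calc (2:ℝ≥0∞) = 1 * (2:ℝ≥0) := by norm_num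
      _ ≤ dimH (univ : Set (SymbSp K × SymbSp K)) := this

end SymbAux

end Aux3
noncomputable section Aux4

open SymbSp SymbAux
open scoped NNReal ENNReal

namespace SymbAux

/-- Positions left free by a mask. -/
def freePos (K : ℕ) (mask : ℕ → Option (Fin K × Fin K)) : ℕ → Prop := fun i => mask i = none

instance freePos_dec (K : ℕ) (mask : ℕ → Option (Fin K × Fin K)) :
    DecidablePred (freePos K mask) := fun i => by unfold freePos; infer_instance

/-- Filling map: spreads a pair of sequences over the free positions of the mask,
putting prescribed symbols at masked positions. -/
def maskF (K : ℕ) (mask : ℕ → Option (Fin K × Fin K)) :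
    SymbSp K × SymbSp K → SymbSp K × SymbSp K := fun z =>
  (fun i => match mask i with
    | some ab => ab.1
    | none => z.1 (Nat.count (freePos K mask) i),
   fun i => match mask i with
    | some ab => ab.2
    | none => z.2 (Nat.count (freePos K mask) i))

/-- Reading map: restricts a pair of sequences to the free positions of the mask. -/
def maskG (K : ℕ) (mask : ℕ → Option (Fin K × Fin K)) :
    SymbSp K × SymbSp K → SymbSp K × SymbSp K := fun w =>
  (fun k => w.1 (Nat.nth (freePos K mask) k), fun k => w.2 (Nat.nth (freePos K mask) k))

variable {K : ℕ} {mask : ℕ → Option (Fin K × Fin K)}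

lemma maskF_fst_eq_some {i : ℕ} {a b : Fin K} (h : mask i = some (a, b))
    (z : SymbSp K × SymbSp K) : (maskF K mask z).1 i = a := by
  simp [maskF, h]

lemma maskF_snd_eq_some {i : ℕ} {a b : Fin K} (h : mask i = some (a, b))
    (z : SymbSp K × SymbSp K) : (maskF K mask z).2 i = b := by
  simp [maskF, h]

lemma maskF_fst_eq_none {i : ℕ} (h : mask i = none) (z : SymbSp K × SymbSp K) :
    (maskF K mask z).1 i = z.1 (Nat.count (freePos K mask) i) := by
  simp [maskF, h]

lemma maskF_snd_eq_none {i : ℕ} (h : mask i = none) (z : SymbSp K × SymbSp K) :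
    (maskF K mask z).2 i = z.2 (Nat.count (freePos K mask) i) := by
  simp [maskF, h]

lemma maskG_maskF (hinf : (setOf (freePos K mask)).Infinite) (z : SymbSp K × SymbSp K) :
    maskG K mask (maskF K mask z) = z := by
  apply Prod.ext
  · funext k
    have hfree : mask (Nat.nth (freePos K mask) k) = none := Nat.nth_mem_of_infinite hinf k
    show (maskF K mask z).1 (Nat.nth (freePos K mask) k) = z.1 k
    rw [maskF_fst_eq_none hfree, Nat.count_nth_of_infinite hinf]
  · funext k
    have hfree : mask (Nat.nth (freePos K mask) k) = none := Nat.nth_mem_of_infinite hinf k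
    show (maskF K mask z).2 (Nat.nth (freePos K mask) k) = z.2 k
    rw [maskF_snd_eq_none hfree, Nat.count_nth_of_infinite hinf]

lemma core_holder (hK : 2 ≤ K) (hinf : (setOf (freePos K mask)).Infinite)
    (p q c : ℕ) (hp : 0 < p) (hq : 0 < q)
    (hcount : ∀ m : ℕ, (p:ℝ) * m ≤ (q:ℝ) * Nat.count (freePos K mask) m + (q:ℝ) * c) :
    HolderOnWith ((K:ℝ≥0) ^ c) ((p:ℝ≥0) / (q:ℝ≥0)) (maskG K mask)
      (Set.range (maskF K mask)) := by
  apply holderOnWith_of_dist_le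
  rintro w ⟨z, rfl⟩ w' ⟨z', rfl⟩
  rw [maskG_maskF hinf, maskG_maskF hinf]
  have hK1 : (1:ℝ) < K := one_lt_cast hK
  have hKpos : (0:ℝ) < K := cast_pos hK
  have hCpos : (0:ℝ) ≤ (((K:ℝ≥0) ^ c : ℝ≥0) : ℝ) := by positivity
  rcases eq_or_ne (maskF K mask z) (maskF K mask z') with he | hne
  · have hzz : z = z' := by
      rw [← maskG_maskF hinf z, he, maskG_maskF hinf z']
    rw [hzz, dist_self]
    exact mul_nonneg hCpos (Real.rpow_nonneg dist_nonneg _)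
  obtain ⟨m, hm⟩ := exists_dist_eq_pow_pair hne
  have hagree := (prod_dist_le_pow_iff hK).mp (le_of_eq hm)
  set cnt := Nat.count (freePos K mask) m with hcnt
  have hz : ∀ k < cnt, z.1 k = z'.1 k ∧ z.2 k = z'.2 k := by
    intro k hk
    have hnth : Nat.nth (freePos K mask) k < m := (Nat.lt_nth_iff_count_lt hinf).mp hk
    have hfree : mask (Nat.nth (freePos K mask) k) = none := Nat.nth_mem_of_infinite hinf k
    obtain ⟨e1, e2⟩ := hagree _ hnth
    rw [maskF_fst_eq_none hfree, maskF_fst_eq_none hfree,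
      Nat.count_nth_of_infinite hinf] at e1
    rw [maskF_snd_eq_none hfree, maskF_snd_eq_none hfree,
      Nat.count_nth_of_infinite hinf] at e2
    exact ⟨e1, e2⟩
  have hdz : dist z z' ≤ (K:ℝ)⁻¹ ^ cnt := (prod_dist_le_pow_iff hK).mpr hz
  refine hdz.trans ?_
  rw [hm]
  have h1 : ∀ n : ℕ, (K:ℝ)⁻¹ ^ n = (K:ℝ) ^ (-(n:ℝ)) := by
    intro n
    rw [inv_pow, ← Real.rpow_natCast (K:ℝ) n, ← Real.rpow_neg hKpos.le]
  have hq' : (0:ℝ) < (q:ℝ) := by exact_mod_cast hq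
  have harith : (m:ℝ) * ((p:ℝ)/(q:ℝ)) ≤ (cnt:ℝ) + (c:ℝ) := by
    rw [← mul_div_assoc, div_le_iff₀ hq']
    have hcast : (p:ℝ) * m ≤ (q:ℝ) * cnt + (q:ℝ) * c := hcount m
    nlinarith
  have hcoe : ((((p:ℝ≥0) / (q:ℝ≥0)) : ℝ≥0) : ℝ) = (p:ℝ)/(q:ℝ) := by
    rw [NNReal.coe_div, NNReal.coe_natCast, NNReal.coe_natCast]
  calc (K:ℝ)⁻¹ ^ cnt = (K:ℝ) ^ (-(cnt:ℝ)) := h1 cnt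
    _ ≤ (K:ℝ) ^ ((c:ℝ) + (-(m:ℝ)) * ((p:ℝ)/(q:ℝ))) := by
        apply (Real.rpow_le_rpow_left_iff hK1).mpr
        nlinarith
    _ = (((K:ℝ≥0) ^ c : ℝ≥0) : ℝ) * ((K:ℝ)⁻¹ ^ m) ^ ((((p:ℝ≥0) / (q:ℝ≥0)) : ℝ≥0) : ℝ) := by
        rw [Real.rpow_add hKpos, Real.rpow_mul hKpos.le, ← h1 m, hcoe]
        push_cast
        rw [Real.rpow_natCast]

lemma core_dim (hK : 2 ≤ K) (hinf : (setOf (freePos K mask)).Infinite)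
    (p q c : ℕ) (hp : 0 < p) (hq : 0 < q)
    (hcount : ∀ m : ℕ, (p:ℝ) * m ≤ (q:ℝ) * Nat.count (freePos K mask) m + (q:ℝ) * c) :
    2 * (p:ℝ≥0∞) / (q:ℝ≥0∞) ≤ dimH (Set.range (maskF K mask)) := by
  have hα : (0:ℝ≥0) < (p:ℝ≥0)/(q:ℝ≥0) := by
    apply div_pos <;> [exact_mod_cast hp; exact_mod_cast hq]
  have hh := (core_holder hK hinf p q c hp hq hcount).dimH_image_le hα
  have himg : maskG K mask '' Set.range (maskF K mask) = univ := by
    apply eq_univ_of_forall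
    intro z
    exact ⟨maskF K mask z, ⟨z, rfl⟩, maskG_maskF hinf z⟩
  rw [himg, dimH_univ_prod K hK] at hh
  rw [ENNReal.le_div_iff_mul_le (Or.inl (by exact_mod_cast hα.ne'))
    (Or.inl ENNReal.coe_ne_top)] at hh
  refine le_trans (le_of_eq ?_) hh
  rw [ENNReal.coe_div (by exact_mod_cast hq.ne'), ENNReal.coe_natCast, ENNReal.coe_natCast,
    mul_div_assoc]

end SymbAux

end Aux4
noncomputable section Aux5

open SymbSp SymbAux
open scoped NNReal ENNReal

namespace SymbAux

variable {K : ℕ}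

lemma shift_iter (x : SymbSp K) (i j : ℕ) : ((shift K)^[i] x) j = x (j + i) := by
  induction i generalizing x with
  | zero => rfl
  | succ i ih =>
    rw [Function.iterate_succ_apply, ih (shift K x)]
    rfl

lemma count_add_filter (p : ℕ → Prop) [DecidablePred p] (m : ℕ) :
    Nat.count p m + ((Finset.range m).filter (fun i => ¬ p i)).card = m := by
  rw [Nat.count_eq_card_filter_range]
  rw [Finset.card_filter_add_card_filter_not, Finset.card_range]

/-! ### The distal mask -/

/-- Mask for the distal set: positions divisible by `n+2` are forced to `(a,b)`. -/
def maskD (K n : ℕ) (a b : Fin K) : ℕ → Option (Fin K × Fin K) := fun i =>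
  if i % (n+2) = 0 then some (a, b) else none

lemma maskD_free_iff (n : ℕ) (a b : Fin K) (i : ℕ) :
    freePos K (maskD K n a b) i ↔ ¬ (i % (n+2) = 0) := by
  unfold freePos maskD
  split_ifs with h <;> simp [h]

lemma maskD_infinite (n : ℕ) (a b : Fin K) :
    (setOf (freePos K (maskD K n a b))).Infinite := by
  apply Set.infinite_of_forall_exists_gt
  intro a0
  refine ⟨(n+2) * (a0 + 1) + 1, ?_, by nlinarith⟩
  show freePos K (maskD K n a b) _
  rw [maskD_free_iff, Nat.mul_add_mod, Nat.mod_eq_of_lt (by omega)]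
  omega

lemma maskD_count (n : ℕ) (a b : Fin K) :
    ∀ m : ℕ, ((n+1:ℕ):ℝ) * m ≤ ((n+2:ℕ):ℝ) * Nat.count (freePos K (maskD K n a b)) m
      + ((n+2:ℕ):ℝ) * 1 := by
  intro m
  set F := (Finset.range m).filter (fun i => ¬ freePos K (maskD K n a b) i) with hF
  have hsplit := count_add_filter (freePos K (maskD K n a b)) m
  have hcard : F.card ≤ m / (n+2) + 1 := by
    have : F.card ≤ (Finset.range (m / (n+2) + 1)).card := by
      apply Finset.card_le_card_of_injOn (fun i => i / (n+2))
      · intro i hi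
        simp only [hF, Finset.mem_coe, Finset.mem_filter, Finset.mem_range] at hi
        simp only [Finset.mem_coe, Finset.mem_range]
        have := Nat.div_le_div_right (le_of_lt hi.1) (c := n+2)
        omega
      · intro i hi j hj hij
        simp only [hF, Finset.mem_coe, Finset.mem_filter, Finset.mem_range, maskD_free_iff,
          not_not] at hi hj
        have hi2 : (n+2) * (i / (n+2)) = i := Nat.mul_div_cancel' (Nat.dvd_of_mod_eq_zero hi.2)
        have hj2 : (n+2) * (j / (n+2)) = j := Nat.mul_div_cancel' (Nat.dvd_of_mod_eq_zero hj.2)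
        have hij' : i / (n+2) = j / (n+2) := hij
        calc i = (n+2) * (i / (n+2)) := hi2.symm
          _ = (n+2) * (j / (n+2)) := by rw [hij']
          _ = j := hj2
      
    simpa using this
  have hdiv : (n+2) * (m / (n+2)) ≤ m := by
    have h1 := Nat.div_add_mod m (n+2)
    omega
  -- cast to ℝ
  set C := Nat.count (freePos K (maskD K n a b)) m
  have e1 : ((n:ℝ)+2) * (C + F.card) = ((n:ℝ)+2) * m := by
    congr 1
    exact_mod_cast hsplit
  have e2 : ((n:ℝ)+2) * (F.card) ≤ ((n:ℝ)+2) * ((m / (n+2) + 1 : ℕ) : ℝ) := by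
    apply mul_le_mul_of_nonneg_left _ (by positivity)
    exact_mod_cast hcard
  have e3 : ((n:ℝ)+2) * ((m / (n+2) : ℕ) : ℝ) ≤ m := by exact_mod_cast hdiv
  push_cast
  push_cast at e1 e2 e3
  nlinarith [e1, e2, e3]

lemma maskD_mem_dist (hK : 2 ≤ K) (n : ℕ) (a b : Fin K) (hab : a ≠ b)
    (z : SymbSp K × SymbSp K) : maskF K (maskD K n a b) z ∈ DistSet K := by
  set w := maskF K (maskD K n a b) z with hw
  have hlow : ∀ i : ℕ, (K:ℝ)⁻¹ ^ (n+2) < dist ((shift K)^[i] w.1) ((shift K)^[i] w.2) := by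
    intro i
    by_contra hle
    push_neg at hle
    have hagree := (dist_le_pow_iff hK).mp hle
    set q := (i + n + 1) / (n+2) with hq
    set p := (n+2) * q with hp
    have hdm : p + (i + n + 1) % (n+2) = i + n + 1 := by
      rw [hp, hq]; exact Nat.div_add_mod _ _
    have hmod : (i + n + 1) % (n+2) < n + 2 := Nat.mod_lt _ (by omega)
    have hple : p ≤ i + n + 1 := by omega
    have hpge : i ≤ p := by omega
    have hpmod : p % (n+2) = 0 := by
      rw [hp]; exact Nat.mul_mod_right _ _
    have hsome : maskD K n a b p = some (a, b) := by
      unfold maskD; rw [if_pos hpmod]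
    have h1 : w.1 p = a := maskF_fst_eq_some hsome z
    have h2 : w.2 p = b := maskF_snd_eq_some hsome z
    have hcoord := hagree (p - i) (by omega)
    rw [shift_iter, shift_iter] at hcoord
    have hpi : p - i + i = p := by omega
    rw [hpi, h1, h2] at hcoord
    exact hab hcoord
  rw [DistSet, Set.mem_setOf_eq]
  have hpos : (0:ℝ) < (K:ℝ)⁻¹ ^ (n+2) := by
    have := inv_pos' hK; positivity
  refine lt_of_lt_of_le hpos ?_
  apply Filter.le_liminf_of_le
  · exact Filter.isCoboundedUnder_ge_of_eventually_le _
      (Filter.Eventually.of_forall (fun i => dist_le_one _ _))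
  · exact Filter.Eventually.of_forall (fun i => (hlow i).le)

/-! ### The Li–Yorke mask -/

/-- Start of the `j`-th forced block. -/
def blk (n j : ℕ) : ℕ := (n+2) * (j+2)^3

lemma blk_lt_blk_succ (n j : ℕ) : blk n j + j + 1 < blk n (j+1) := by
  unfold blk
  have key : (n+2) * (j+1+2)^3 = (n+2)*(j+2)^3 + (n+2)*(3*(j+2)^2 + 3*(j+2) + 1) := by ring
  have h1 : j + 2 ≤ (j+2)^2 := Nat.le_self_pow (by omega) _
  have h2 : 3*(j+2)^2 + 3*(j+2) + 1 ≤ (n+2)*(3*(j+2)^2 + 3*(j+2) + 1) :=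
    Nat.le_mul_of_pos_left _ (by omega)
  linarith

lemma blk_mono (n : ℕ) {j j' : ℕ} (h : j ≤ j') : blk n j ≤ blk n j' := by
  unfold blk
  have h3 := Nat.pow_le_pow_left (show j+2 ≤ j'+2 by omega) 3
  exact Nat.mul_le_mul_left _ h3

lemma blk_strict (n : ℕ) {j j' : ℕ} (h : j < j') : blk n j + j + 1 ≤ blk n j' :=
  le_trans (blk_lt_blk_succ n j).le (blk_mono n h)

lemma self_le_blk (n j : ℕ) : j ≤ blk n j := by
  unfold blk
  calc j ≤ j + 2 := by omega
    _ ≤ (j+2)^3 := Nat.le_self_pow (by omega) _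
    _ ≤ (n+2) * (j+2)^3 := Nat.le_mul_of_pos_left _ (by omega)

open Classical in
/-- Mask for the Li–Yorke set: on block `[blk n j, blk n j + j)` both symbols are `a`
(forcing proximality), at `blk n j + j` the symbols are `a ≠ b` (excluding asymptoticity). -/
def maskLY (K n : ℕ) (a b : Fin K) : ℕ → Option (Fin K × Fin K) := fun i =>
  if ∃ j, blk n j ≤ i ∧ i < blk n j + j then some (a, a)
  else if ∃ j, i = blk n j + j then some (a, b) else none

lemma maskLY_in_block (K n : ℕ) (a b : Fin K) {j t : ℕ} (ht : t < j) :
    maskLY K n a b (blk n j + t) = some (a, a) := by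
  unfold maskLY
  rw [if_pos ⟨j, by omega, by omega⟩]

lemma no_block (n j : ℕ) : ¬ ∃ j', blk n j' ≤ blk n j + j ∧ blk n j + j < blk n j' + j' := by
  rintro ⟨j', h1, h2⟩
  rcases lt_trichotomy j' j with h | rfl | h
  · have := blk_strict n h
    omega
  · omega
  · have := blk_strict n h
    omega

lemma maskLY_at_pt (K n : ℕ) (a b : Fin K) (j : ℕ) :
    maskLY K n a b (blk n j + j) = some (a, b) := by
  unfold maskLY
  rw [if_neg (no_block n j), if_pos ⟨j, rfl⟩]

lemma maskLY_forced {n : ℕ} {a b : Fin K} {i : ℕ} (h : ¬ freePos K (maskLY K n a b) i) :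
    ∃ j d, d ≤ j ∧ i = blk n j + d := by
  unfold freePos maskLY at h
  by_cases h1 : ∃ j, blk n j ≤ i ∧ i < blk n j + j
  · obtain ⟨j, hj1, hj2⟩ := h1
    exact ⟨j, i - blk n j, by omega, by omega⟩
  · rw [if_neg h1] at h
    by_cases h2 : ∃ j, i = blk n j + j
    · obtain ⟨j, hj⟩ := h2
      exact ⟨j, j, le_rfl, hj⟩
    · rw [if_neg h2] at h
      exact absurd rfl h

lemma maskLY_free_succ (K n : ℕ) (a b : Fin K) (j : ℕ) :
    freePos K (maskLY K n a b) (blk n j + j + 1) := by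
  unfold freePos maskLY
  have hc1 : ¬ ∃ j', blk n j' ≤ blk n j + j + 1 ∧ blk n j + j + 1 < blk n j' + j' := by
    rintro ⟨j', h1', h2'⟩
    rcases lt_trichotomy j' j with h | rfl | h
    · have := blk_strict n h
      omega
    · omega
    · have h3 := blk_lt_blk_succ n j
      have h4 := blk_mono n (show j+1 ≤ j' by omega)
      omega
  have hc2 : ¬ ∃ j', blk n j + j + 1 = blk n j' + j' := by
    rintro ⟨j', hj'⟩
    rcases lt_trichotomy j' j with h | rfl | h
    · have := blk_strict n h
      omega
    · omega
    · have h3 := blk_lt_blk_succ n j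
      have h4 := blk_mono n (show j+1 ≤ j' by omega)
      omega
  rw [if_neg hc1, if_neg hc2]

lemma maskLY_infinite (K n : ℕ) (a b : Fin K) :
    (setOf (freePos K (maskLY K n a b))).Infinite := by
  apply Set.infinite_of_forall_exists_gt
  intro a0
  refine ⟨blk n a0 + a0 + 1, maskLY_free_succ K n a b a0, ?_⟩
  have := self_le_blk n a0
  omega

/-- Triangle numbers via a sum. -/
def triT : ℕ → ℕ := fun j => ∑ i ∈ Finset.range j, (i+1)

lemma triT_succ (j : ℕ) : triT (j+1) = triT j + (j+1) := Finset.sum_range_succ _ j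

lemma triT_mono {j j' : ℕ} (h : j ≤ j') : triT j ≤ triT j' :=
  Finset.sum_le_sum_of_subset (Finset.range_subset_range.mpr h)

lemma triT_bound (j : ℕ) : triT (j+1) ≤ (j+2)^2 := by
  have h1 : triT (j+1) ≤ (Finset.range (j+1)).card • (j+1) := by
    apply Finset.sum_le_card_nsmul
    intro i hi
    simp only [Finset.mem_range] at hi
    omega
  rw [Finset.card_range, smul_eq_mul] at h1
  nlinarith

lemma tri_inj {j d j' d' : ℕ} (hd : d ≤ j) (hd' : d' ≤ j')
    (he : triT j + d = triT j' + d') : j = j' ∧ d = d' := by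
  rcases lt_trichotomy j j' with h | rfl | h
  · exfalso
    have h1 : triT j + d < triT (j+1) := by rw [triT_succ]; omega
    have h2 : triT (j+1) ≤ triT j' := triT_mono h
    omega
  · exact ⟨rfl, by omega⟩
  · exfalso
    have h1 : triT j' + d' < triT (j'+1) := by rw [triT_succ]; omega
    have h2 : triT (j'+1) ≤ triT j := triT_mono h
    omega

lemma maskLY_count (K n : ℕ) (a b : Fin K) :
    ∀ m : ℕ, ((n+1:ℕ):ℝ) * m ≤ ((n+2:ℕ):ℝ) * Nat.count (freePos K (maskLY K n a b)) m
      + ((n+2:ℕ):ℝ) * 0 := by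
  intro m
  set F := (Finset.range m).filter (fun i => ¬ freePos K (maskLY K n a b) i) with hF
  have hsplit := count_add_filter (freePos K (maskLY K n a b)) m
  have hcard : F.card ≤ m / (n+2) := by
    classical
    have hdec : ∀ i ∈ F, ∃ jd : ℕ × ℕ, jd.2 ≤ jd.1 ∧ i = blk n jd.1 + jd.2 := by
      intro i hi
      simp only [hF, Finset.mem_filter] at hi
      obtain ⟨j, d, h1, h2⟩ := maskLY_forced hi.2
      exact ⟨(j, d), h1, h2⟩
    choose! jd hjd1 hjd2 using hdec
    have hcc : F.card ≤ (Finset.range (m / (n+2))).card := by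
      apply Finset.card_le_card_of_injOn (fun i => triT (jd i).1 + (jd i).2)
      · intro i hiF
        simp only [Finset.mem_coe, Finset.mem_range]
        have h1 := hjd1 i hiF
        have h2 := hjd2 i hiF
        have him : i < m := by
          have := hiF
          simp only [hF, Finset.mem_coe, Finset.mem_filter, Finset.mem_range] at this
          exact this.1
        have hblk : blk n (jd i).1 ≤ i := by omega
        have hm : (n+2) * ((jd i).1 + 2)^3 < m := lt_of_le_of_lt hblk him
        have hdiv : ((jd i).1 + 2)^3 ≤ m / (n+2) := by
          rw [Nat.le_div_iff_mul_le (by omega)]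
          rw [mul_comm]
          exact hm.le
        have hT := triT_bound (jd i).1
        have hTd : triT (jd i).1 + (jd i).2 < triT ((jd i).1 + 1) := by
          rw [triT_succ]; omega
        have hpow : ((jd i).1 + 2)^2 < ((jd i).1 + 2)^3 := by nlinarith
        omega
      · intro i hi i' hi' he
        have hi2 : i ∈ F := hi
        have hi2' : i' ∈ F := hi'
        have he' : triT (jd i).1 + (jd i).2 = triT (jd i').1 + (jd i').2 := he
        obtain ⟨ej, ed⟩ := tri_inj (hjd1 i hi2) (hjd1 i' hi2') he'
        rw [hjd2 i hi2, hjd2 i' hi2', ej, ed]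
    simpa using hcc
  have hdiv2 : (n+2) * (m / (n+2)) ≤ m := by
    have h1 := Nat.div_add_mod m (n+2)
    omega
  set C := Nat.count (freePos K (maskLY K n a b)) m
  have e1 : ((n:ℝ)+2) * (C + F.card) = ((n:ℝ)+2) * m := by
    congr 1
    exact_mod_cast hsplit
  have e2 : ((n:ℝ)+2) * (F.card) ≤ ((n:ℝ)+2) * ((m / (n+2) : ℕ) : ℝ) := by
    apply mul_le_mul_of_nonneg_left _ (by positivity)
    exact_mod_cast hcard
  have e3 : ((n:ℝ)+2) * ((m / (n+2) : ℕ) : ℝ) ≤ m := by exact_mod_cast hdiv2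
  push_cast
  push_cast at e1 e2 e3
  nlinarith [e1, e2, e3]

lemma maskLY_mem (hK : 2 ≤ K) (n : ℕ) (a b : Fin K) (hab : a ≠ b)
    (z : SymbSp K × SymbSp K) : maskF K (maskLY K n a b) z ∈ LYset K := by
  set w := maskF K (maskLY K n a b) z with hw
  have hblock : ∀ j, dist ((shift K)^[blk n j] w.1) ((shift K)^[blk n j] w.2)
      ≤ (K:ℝ)⁻¹ ^ j := by
    intro j
    apply (dist_le_pow_iff hK).mpr
    intro t ht
    rw [shift_iter, shift_iter, Nat.add_comm t (blk n j)]
    have h := maskLY_in_block K n a b ht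
    rw [hw, maskF_fst_eq_some h z, maskF_snd_eq_some h z]
  have hpt : ∀ j, (K:ℝ)⁻¹ < dist ((shift K)^[blk n j + j] w.1) ((shift K)^[blk n j + j] w.2) := by
    intro j
    by_contra hle
    push_neg at hle
    have hagree := (dist_le_pow_iff hK (n := 1)).mp (by simpa using hle)
    have h0 := hagree 0 (by omega)
    rw [shift_iter, shift_iter, Nat.zero_add] at h0
    have h := maskLY_at_pt K n a b j
    rw [hw, maskF_fst_eq_some h z, maskF_snd_eq_some h z] at h0
    exact hab h0
  constructor
  · -- proximal
    rw [ProxSet, Set.mem_setOf_eq]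
    apply le_antisymm
    · by_contra hpos
      push_neg at hpos
      obtain ⟨j, hj⟩ := exists_pow_lt_of_lt_one hpos (inv_lt_one' hK)
      have hfreq : ∃ᶠ i in Filter.atTop,
          dist ((shift K)^[i] w.1) ((shift K)^[i] w.2) ≤ (K:ℝ)⁻¹ ^ j := by
        rw [Filter.frequently_atTop]
        intro N
        refine ⟨blk n (max j N), le_trans (le_max_right j N) (self_le_blk n _), ?_⟩
        refine (hblock (max j N)).trans ?_
        exact pow_le_pow_of_le_one (by positivity) (inv_cast_le_one K) (le_max_left j N)
      have hbdd : Filter.IsBoundedUnder (· ≥ ·) Filter.atTop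
          (fun i : ℕ => dist ((shift K)^[i] w.1) ((shift K)^[i] w.2)) :=
        Filter.isBoundedUnder_of ⟨0, fun i => dist_nonneg⟩
      have hll := Filter.liminf_le_of_frequently_le hfreq hbdd
      exact absurd hj (not_lt.mpr hll)
    · apply Filter.le_liminf_of_le
      · exact Filter.isCoboundedUnder_ge_of_eventually_le _
          (Filter.Eventually.of_forall (fun i => dist_le_one _ _))
      · exact Filter.Eventually.of_forall (fun i => dist_nonneg)
  · -- not asymptotic
    rw [AsymSet, Set.mem_setOf_eq]
    intro hten
    have hev := hten.eventually_lt_const (inv_pos' hK)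
    rw [Filter.eventually_atTop] at hev
    obtain ⟨N, hN⟩ := hev
    have hj := hpt N
    have hge : N ≤ blk n N + N := Nat.le_add_left N (blk n N)
    exact absurd (hN _ hge) (not_lt.mpr (hpt N).le)

end SymbAux

end Aux5
noncomputable section Aux6

open SymbSp SymbAux
open scoped NNReal ENNReal

namespace SymbAux

variable {K : ℕ}

/-- Overwrite the first `n` symbols of the second coordinate. -/
def patchMap (K n : ℕ) (v : Fin n → Fin K) : SymbSp K → SymbSp K × SymbSp K := fun x =>
  (x, fun i => if h : i < n then v ⟨i, h⟩ else x i)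

open Classical in
lemma patchMap_lipschitz (K n : ℕ) (v : Fin n → Fin K) :
    LipschitzWith 1 (patchMap K n v) := by
  apply LipschitzWith.of_dist_le_mul
  intro x y
  rw [NNReal.coe_one, one_mul]
  rcases eq_or_ne x y with rfl | hxy
  · simp [dist_self]
  have hm : dist x y = (K:ℝ)⁻¹ ^ Nat.find (exists_ne hxy) := sdist_eq hxy
  rw [Prod.dist_eq, max_le_iff]
  constructor
  · exact le_refl _
  · rw [hm]
    apply sdist_le_of_agree
    intro i hi
    have hxyi := eq_of_lt_find hxy hi
    show (if h : i < n then v ⟨i, h⟩ else x i) = (if h : i < n then v ⟨i, h⟩ else y i)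
    split_ifs with h
    · rfl
    · exact hxyi

lemma asym_eq (hK : 2 ≤ K) :
    AsymSet K = ⋃ (nv : Σ n : ℕ, (Fin n → Fin K)), Set.range (patchMap K nv.1 nv.2) := by
  ext z
  constructor
  · intro hz
    rw [AsymSet, Set.mem_setOf_eq] at hz
    have hev := hz.eventually_lt_const zero_lt_one
    rw [Filter.eventually_atTop] at hev
    obtain ⟨N, hN⟩ := hev
    have hagree : ∀ i, N ≤ i → z.1 i = z.2 i := by
      intro i hi
      have h0 := eq_zero_coord_of_dist_lt_one (hN i hi)
      rw [shift_iter, shift_iter, Nat.zero_add] at h0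
      exact h0
    refine Set.mem_iUnion.mpr ⟨⟨N, fun i => z.2 i⟩, z.1, ?_⟩
    apply Prod.ext
    · rfl
    · funext i
      show (if h : i < N then z.2 i else z.1 i) = z.2 i
      split_ifs with h
      · rfl
      · exact hagree i (by omega)
  · intro hz
    obtain ⟨⟨n, v⟩, x, rfl⟩ := Set.mem_iUnion.mp hz
    rw [AsymSet, Set.mem_setOf_eq]
    have hev : ∀ i ≥ n, dist ((shift K)^[i] (patchMap K n v x).1)
        ((shift K)^[i] (patchMap K n v x).2) = 0 := by
      intro i hi
      have heq : (shift K)^[i] (patchMap K n v x).1 = (shift K)^[i] (patchMap K n v x).2 := by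
        funext j
        rw [shift_iter, shift_iter]
        show x (j + i) = (if h : j + i < n then v ⟨j + i, h⟩ else x (j + i))
        rw [dif_neg (by omega)]
      rw [heq, dist_self]
    apply Filter.Tendsto.congr' _ tendsto_const_nhds
    rw [Filter.EventuallyEq, Filter.eventually_atTop]
    exact ⟨n, fun i hi => (hev i hi).symm⟩

lemma diag_subset (K : ℕ) : Set.range (fun x : SymbSp K => (x, x)) ⊆ AsymSet K := by
  rintro _ ⟨x, rfl⟩
  rw [AsymSet, Set.mem_setOf_eq]
  simp only [dist_self]
  exact tendsto_const_nhds

lemma dimH_asym (K : ℕ) (hK : 2 ≤ K) : dimH (AsymSet K) = 1 := by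
  apply le_antisymm
  · rw [asym_eq hK, dimH_iUnion]
    apply iSup_le
    rintro ⟨n, v⟩
    have hlip := patchMap_lipschitz K n v
    calc dimH (Set.range (patchMap K n v)) = dimH (patchMap K n v '' univ) := by
          rw [Set.image_univ]
      _ ≤ dimH (univ : Set (SymbSp K)) := hlip.dimH_image_le _
      _ = 1 := dimH_univ_symb K hK
  · have h1 : Prod.fst '' (Set.range (fun x : SymbSp K => (x, x))) = univ := by
      apply eq_univ_of_forall
      intro x
      exact ⟨(x, x), ⟨x, rfl⟩, rfl⟩
    calc (1:ℝ≥0∞) = dimH (univ : Set (SymbSp K)) := (dimH_univ_symb K hK).symm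
      _ = dimH (Prod.fst '' (Set.range (fun x : SymbSp K => (x, x)))) := by rw [h1]
      _ ≤ dimH (Set.range (fun x : SymbSp K => (x, x))) :=
          (LipschitzWith.prod_fst).dimH_image_le _
      _ ≤ dimH (AsymSet K) := dimH_mono (diag_subset K)

lemma two_le_aux {D : ℝ≥0∞}
    (h : ∀ n : ℕ, 2 * ((n+1:ℕ):ℝ≥0∞) / ((n+2:ℕ):ℝ≥0∞) ≤ D) : 2 ≤ D := by
  refine ENNReal.le_of_forall_nnreal_lt (fun r hr => ?_)
  have hr2 : (r:ℝ) < 2 := by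
    have h2 : (r:ℝ≥0∞) < ((2:ℝ≥0):ℝ≥0∞) := by rw [ENNReal.coe_ofNat]; exact hr
    have h3 : r < (2:ℝ≥0) := ENNReal.coe_lt_coe.mp h2
    exact_mod_cast h3
  obtain ⟨n, hn⟩ := exists_nat_gt ((2:ℝ) / (2 - (r:ℝ)))
  refine le_trans ?_ (h n)
  rw [ENNReal.le_div_iff_mul_le (Or.inl (by exact_mod_cast Nat.succ_ne_zero (n+1)))
    (Or.inl (ENNReal.natCast_ne_top _))]
  have hreal : (r:ℝ) * ((n+2:ℕ):ℝ) ≤ 2 * ((n+1:ℕ):ℝ) := by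
    have hpos : (0:ℝ) < 2 - (r:ℝ) := by linarith
    rw [div_lt_iff₀ hpos] at hn
    have hr0 : (0:ℝ) ≤ (r:ℝ) := r.coe_nonneg
    push_cast
    nlinarith
  have h1 : ((n+2:ℕ):ℝ≥0∞) = (((n+2:ℕ):ℝ≥0):ℝ≥0∞) := by rw [ENNReal.coe_natCast]
  have h2 : ((n+1:ℕ):ℝ≥0∞) = (((n+1:ℕ):ℝ≥0):ℝ≥0∞) := by rw [ENNReal.coe_natCast]
  rw [h1, h2, ← ENNReal.coe_ofNat, ← ENNReal.coe_mul, ← ENNReal.coe_mul, ENNReal.coe_le_coe,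
    ← NNReal.coe_le_coe]
  push_cast
  push_cast at hreal
  linarith

end SymbAux

end Aux6

/-- For `K ≥ 2`: `dim_H Asym(σ_K) = 1` and
`dim_H Prox(σ_K) = dim_H Dist(σ_K) = dim_H LY(σ_K) = 2`. -/
theorem statement_7 (K : ℕ) (hK : 2 ≤ K) :
    dimH (AsymSet K) = 1 ∧ dimH (ProxSet K) = 2 ∧ dimH (DistSet K) = 2 ∧
      dimH (LYset K) = 2 := by
  classical
  have h0K : 0 < K := by omega
  have h1K : 1 < K := by omega
  set a : Fin K := ⟨0, h0K⟩ with ha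
  set b : Fin K := ⟨1, h1K⟩ with hb
  have hab : a ≠ b := by
    intro h
    have := congrArg Fin.val h
    simp [ha, hb] at this
  have hprod := SymbAux.dimH_univ_prod K hK
  have hupper : ∀ S : Set (SymbSp K × SymbSp K), dimH S ≤ 2 := by
    intro S
    rw [← hprod]
    exact dimH_mono (Set.subset_univ _)
  have hLY : dimH (LYset K) = 2 := by
    apply le_antisymm (hupper _)
    apply SymbAux.two_le_aux
    intro n
    have hinf := SymbAux.maskLY_infinite K n a b
    have hcount := SymbAux.maskLY_count K n a b
    have hc' : ∀ m : ℕ, ((n+1:ℕ):ℝ) * m ≤ ((n+2:ℕ):ℝ) *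
        Nat.count (SymbAux.freePos K (SymbAux.maskLY K n a b)) m + ((n+2:ℕ):ℝ) * ((0:ℕ):ℝ) := by
      intro m
      simpa using hcount m
    have hcore := SymbAux.core_dim hK hinf (n+1) (n+2) 0 (by omega) (by omega) hc'
    refine le_trans hcore (dimH_mono ?_)
    rintro _ ⟨z, rfl⟩
    exact SymbAux.maskLY_mem hK n a b hab z
  have hDist : dimH (DistSet K) = 2 := by
    apply le_antisymm (hupper _)
    apply SymbAux.two_le_aux
    intro n
    have hinf := SymbAux.maskD_infinite (K := K) n a b
    have hcount := SymbAux.maskD_count (K := K) n a b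
    have hc' : ∀ m : ℕ, ((n+1:ℕ):ℝ) * m ≤ ((n+2:ℕ):ℝ) *
        Nat.count (SymbAux.freePos K (SymbAux.maskD K n a b)) m + ((n+2:ℕ):ℝ) * ((1:ℕ):ℝ) := by
      intro m
      simpa using hcount m
    have hcore := SymbAux.core_dim hK hinf (n+1) (n+2) 1 (by omega) (by omega) hc'
    refine le_trans hcore (dimH_mono ?_)
    rintro _ ⟨z, rfl⟩
    exact SymbAux.maskD_mem_dist hK n a b hab z
  have hProx : dimH (ProxSet K) = 2 := by
    apply le_antisymm (hupper _)
    rw [← hLY]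
    exact dimH_mono Set.diff_subset
  exact ⟨SymbAux.dimH_asym K hK, hProx, hDist, hLY⟩
end

section
/- Let K ≥ 2, let (n_i)_{i≥0} be positive integers, and for each i ≥ 0 let A_i be a nonempty subset of {0,…,K−1}^{n_i} with a_i = #A_i. Let X ⊆ Σ_K be the set of all infinite sequences obtained as concatenations ω_0ω_1ω_2⋯ with ω_i ∈ A_i for all i. Then dim_H X ≥ liminf_{j→∞} (Σ_{0≤i<j} ln a_i)/(Σ_{0≤i<j+1} n_i · ln K). -/
open Filter Set MeasureTheory Topology TopologicalSpace

namespace St11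

open SymbSp

noncomputable section

variable (K : ℕ) (n : ℕ → ℕ) (A : ∀ i : ℕ, Set (Fin (n i) → Fin K))

/-- Partial sums of block lengths. -/
def S (j : ℕ) : ℕ := ∑ i ∈ Finset.range j, n i

/-- Partial products of block counts. -/
def P (j : ℕ) : ℕ := ∏ i ∈ Finset.range j, Nat.card (A i)

lemma S_succ (j : ℕ) : S n (j + 1) = S n j + n j := Finset.sum_range_succ _ _

lemma S_mono : Monotone (S n) := fun i j h =>
  Finset.sum_le_sum_of_subset (Finset.range_subset_range.2 h)

lemma le_S (hn : ∀ i, 1 ≤ n i) (j : ℕ) : j ≤ S n j := by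
  induction j with
  | zero => exact Nat.zero_le _
  | succ j ih => rw [S_succ]; have := hn j; omega

/-- The index of the block containing position `k`. -/
def blk (k : ℕ) : ℕ := Nat.findGreatest (fun j => S n j ≤ k) k

lemma blk_spec (hn : ∀ i, 1 ≤ n i) (k : ℕ) :
    S n (blk n k) ≤ k ∧ k < S n (blk n k + 1) := by
  constructor
  · exact Nat.findGreatest_spec (P := fun j => S n j ≤ k) (Nat.zero_le k) (Nat.zero_le k)
  · by_contra h
    push_neg at h
    have h2 : blk n k + 1 ≤ k := le_trans (le_S n hn _) h
    have := Nat.le_findGreatest (P := fun j => S n j ≤ k) h2 h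
    unfold blk at this
    omega

lemma le_blk (hn : ∀ i, 1 ≤ n i) {J k : ℕ} (h : S n J ≤ k) : J ≤ blk n k :=
  Nat.le_findGreatest (le_trans (le_S n hn J) h) h

lemma blk_add (hn : ∀ i, 1 ≤ n i) (i : ℕ) (q : ℕ) (hq : q < n i) :
    blk n (S n i + q) = i := by
  have h1 : i ≤ blk n (S n i + q) := le_blk n hn (Nat.le_add_right _ _)
  have h2 := (blk_spec n hn (S n i + q)).1
  by_contra h
  have h3 : i + 1 ≤ blk n (S n i + q) := by omega
  have := S_mono n h3
  rw [S_succ] at this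
  omega

variable {K n} in
lemma card_A_pos (hA : ∀ i, (A i).Nonempty) (i : ℕ) : 0 < Nat.card (A i) := by
  haveI := (hA i).to_subtype
  exact Nat.card_pos

variable {K n} in
lemma P_pos (hA : ∀ i, (A i).Nonempty) (j : ℕ) : 0 < P K n A j :=
  Finset.prod_pos fun i _ => card_A_pos A hA i

lemma P_succ (j : ℕ) : P K n A (j + 1) = P K n A j * Nat.card (A j) :=
  Finset.prod_range_succ _ _

/-- An enumeration of each `A i`. -/
def ee (i : ℕ) : (A i) ≃ Fin (Nat.card (A i)) := Finite.equivFin _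

/-- The `i`-th digit of `t ∈ [0,1)`. -/
def dig (i : ℕ) (t : ℝ) : ℕ := ⌊t * (P K n A (i + 1) : ℝ)⌋₊ % Nat.card (A i)

variable {K n} in
lemma dig_lt (hA : ∀ i, (A i).Nonempty) (i : ℕ) (t : ℝ) :
    dig K n A i t < Nat.card (A i) := Nat.mod_lt _ (card_A_pos A hA i)

/-- The map from `[0,1)` to `X`. -/
def gmap (hn : ∀ i, 1 ≤ n i) (hA : ∀ i, (A i).Nonempty) (t : ℝ) : SymbSp K := fun k =>
  (((ee K n A (blk n k)).symm
      ⟨dig K n A (blk n k) t, dig_lt A hA (blk n k) t⟩ : (A (blk n k))) : Fin (n (blk n k)) → Fin K)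
    ⟨k - S n (blk n k), by have := blk_spec n hn k; rw [S_succ] at this; omega⟩

variable {K n A} in
lemma gmap_eq (hn : ∀ i, 1 ≤ n i) (hA : ∀ i, (A i).Nonempty) {t : ℝ} {k i : ℕ}
    (hb : blk n k = i) (h2 : k - S n i < n i) :
    gmap K n A hn hA t k =
      (((ee K n A i).symm ⟨dig K n A i t, dig_lt A hA i t⟩ : (A i)) : Fin (n i) → Fin K)
        ⟨k - S n i, h2⟩ := by
  subst hb; rfl

variable {K n A} in
lemma gmap_block (hn : ∀ i, 1 ≤ n i) (hA : ∀ i, (A i).Nonempty) (t : ℝ) (i : ℕ) :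
    (fun q : Fin (n i) => gmap K n A hn hA t (S n i + q)) =
      (((ee K n A i).symm ⟨dig K n A i t, dig_lt A hA i t⟩ : (A i)) : Fin (n i) → Fin K) := by
  funext q
  rw [gmap_eq hn hA (blk_add n hn i q q.isLt) (by omega)]
  congr 1
  exact Fin.ext (by simp)

variable {K n A} in
lemma gmap_mem (hn : ∀ i, 1 ≤ n i) (hA : ∀ i, (A i).Nonempty) (t : ℝ) (i : ℕ) :
    (fun q : Fin (n i) => gmap K n A hn hA t (S n i + q)) ∈ A i := by
  rw [gmap_block hn hA t i]
  exact Subtype.mem _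

end

end St11

namespace St11

open SymbSp

noncomputable section

variable (K : ℕ)

/-- Cylinder: sequences agreeing with `x` on the first `m` coordinates. -/
def Cyl (x : SymbSp K) (m : ℕ) : Set (SymbSp K) := {y | ∀ i < m, y i = x i}

variable {K}



open Classical in
lemma cyl_eq_ball (hK : 2 ≤ K) (x : SymbSp K) (m : ℕ) :
    Cyl K x m = Metric.ball x (((K:ℝ))⁻¹ ^ m * K) := by
  have hK0 : (0:ℝ) < (K:ℝ) := by exact_mod_cast Nat.lt_of_lt_of_le two_pos hK
  have hK1 : (1:ℝ) < (K:ℝ) := by exact_mod_cast hK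
  have hi0 : (0:ℝ) < (K:ℝ)⁻¹ := by positivity
  have hi1 : ((K:ℝ))⁻¹ < 1 := inv_lt_one_of_one_lt₀ hK1
  ext y
  simp only [Cyl, Metric.mem_ball, Set.mem_setOf_eq]
  have hdist : dist y x = sdist y x := rfl
  constructor
  · intro h
    rw [hdist]
    calc sdist y x ≤ ((K:ℝ))⁻¹ ^ m := sdist_le_of_agree h
    _ < ((K:ℝ))⁻¹ ^ m * K := by nlinarith [pow_pos hi0 m]
  · intro h i him
    rw [hdist] at h
    by_cases hyx : y = x
    · rw [hyx]
    · rw [sdist_eq hyx] at h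
      set δ := Nat.find (exists_ne hyx) with hδ
      have hmδ : m ≤ δ := by
        by_contra hc
        push_neg at hc
        have h1 : m - 1 < m := by omega
        have h2 : δ ≤ m - 1 := by omega
        have h3 : ((K:ℝ))⁻¹ ^ (m-1) ≤ ((K:ℝ))⁻¹ ^ δ := pow_le_pow_of_le_one hi0.le hi1.le h2
        have h4 : ((K:ℝ))⁻¹ ^ m * K = ((K:ℝ))⁻¹ ^ (m-1) := by
          have hm : m = (m-1) + 1 := by omega
          rw [hm, pow_succ]
          field_simp
          congr 1
        rw [h4] at h
        linarith
      exact eq_of_lt_find hyx (lt_of_lt_of_le him hmδ)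

lemma isOpen_cyl (hK : 2 ≤ K) (x : SymbSp K) (m : ℕ) : IsOpen (Cyl K x m) := by
  rw [cyl_eq_ball hK]; exact Metric.isOpen_ball

lemma measurableSet_cyl (hK : 2 ≤ K) (x : SymbSp K) (m : ℕ) : MeasurableSet (Cyl K x m) :=
  (isOpen_cyl hK x m).measurableSet

open Classical in
lemma subset_cyl (hK : 2 ≤ K) {s : Set (SymbSp K)} {x : SymbSp K} (hx : x ∈ s) {m : ℕ}
    (h : EMetric.diam s ≤ ENNReal.ofReal (((K:ℝ))⁻¹ ^ m)) : s ⊆ Cyl K x m := by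
  have hK0 : (0:ℝ) < (K:ℝ) := by exact_mod_cast Nat.lt_of_lt_of_le two_pos hK
  have hK1 : (1:ℝ) < (K:ℝ) := by exact_mod_cast hK
  have hi0 : (0:ℝ) < (K:ℝ)⁻¹ := by positivity
  have hi1 : ((K:ℝ))⁻¹ < 1 := inv_lt_one_of_one_lt₀ hK1
  intro y hy i him
  have h1 : edist y x ≤ ENNReal.ofReal (((K:ℝ))⁻¹ ^ m) :=
    le_trans (EMetric.edist_le_diam_of_mem hy hx) h
  rw [edist_dist] at h1
  have h2 : dist y x ≤ ((K:ℝ))⁻¹ ^ m :=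
    (ENNReal.ofReal_le_ofReal_iff (by positivity)).1 h1
  by_cases hyx : y = x
  · rw [hyx]
  · have hdist : dist y x = sdist y x := rfl
    rw [hdist, sdist_eq hyx] at h2
    have hmδ : m ≤ Nat.find (exists_ne hyx) := by
      by_contra hc
      push_neg at hc
      have := pow_lt_pow_right_of_lt_one₀ hi0 hi1 hc
      linarith
    exact eq_of_lt_find hyx (lt_of_lt_of_le him hmδ)

/-- The family of all cylinders. -/
def CylFam : Set (Set (SymbSp K)) := {U | ∃ (x : SymbSp K) (m : ℕ), U = Cyl K x m}

lemma isBasis_cylFam (hK : 2 ≤ K) : IsTopologicalBasis (CylFam (K := K)) := by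
  have hK1 : (1:ℝ) < (K:ℝ) := by exact_mod_cast hK
  apply isTopologicalBasis_of_isOpen_of_nhds
  · rintro u ⟨x, m, rfl⟩
    exact isOpen_cyl hK x m
  · intro a u ha hu
    obtain ⟨ε, hε, hball⟩ := Metric.isOpen_iff.1 hu a ha
    obtain ⟨m, hm⟩ : ∃ m : ℕ, ((K:ℝ))⁻¹ ^ m < ε :=
      exists_pow_lt_of_lt_one hε (inv_lt_one_of_one_lt₀ hK1)
    refine ⟨Cyl K a m, ⟨a, m, rfl⟩, fun i _ => rfl, fun y hy => hball ?_⟩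
    rw [Metric.mem_ball]
    exact lt_of_le_of_lt (sdist_le_of_agree fun i hi => hy i hi) hm

lemma measurableSpace_eq (hK : 2 ≤ K) :
    (inferInstance : MeasurableSpace (SymbSp K)) = .generateFrom (CylFam (K := K)) := by
  rw [BorelSpace.measurable_eq (α := SymbSp K), (isBasis_cylFam hK).borel_eq_generateFrom]

end

end St11

namespace St11

open SymbSp

noncomputable section

variable (K : ℕ) (n : ℕ → ℕ) (A : ∀ i : ℕ, Set (Fin (n i) → Fin K))

variable {K n A} in
lemma measurable_gmap (hK : 2 ≤ K) (hn : ∀ i, 1 ≤ n i) (hA : ∀ i, (A i).Nonempty) :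
    Measurable (gmap K n A hn hA) := by
  have hEq := measurableSpace_eq (K := K) hK
  have key : ∀ U ∈ CylFam (K := K), MeasurableSet (gmap K n A hn hA ⁻¹' U) := by
    rintro U ⟨x, m, rfl⟩
    have hU : gmap K n A hn hA ⁻¹' Cyl K x m =
        ⋂ k, ⋂ (_ : k < m), (fun t : ℝ => gmap K n A hn hA t k) ⁻¹' {x k} := by
      ext t
      simp [Cyl, Set.mem_iInter]
    rw [hU]
    refine MeasurableSet.iInter fun k => MeasurableSet.iInter fun _ => ?_
    have hcoord : Measurable (fun t : ℝ => gmap K n A hn hA t k) := by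
      have hcomp : (fun t : ℝ => gmap K n A hn hA t k) =
          (fun N : ℕ => (((ee K n A (blk n k)).symm
              ⟨N % Nat.card (A (blk n k)), Nat.mod_lt _ (card_A_pos A hA _)⟩ :
                (A (blk n k))) : Fin (n (blk n k)) → Fin K)
            ⟨k - S n (blk n k), by have := blk_spec n hn k; rw [S_succ] at this; omega⟩)
          ∘ (fun t : ℝ => ⌊t * (P K n A (blk n k + 1) : ℝ)⌋₊) := rfl
      rw [hcomp]
      exact (measurable_from_nat).comp (Nat.measurable_floor.comp (measurable_id.mul_const _))
    exact hcoord (measurableSet_singleton (x k))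
  have hmg := measurable_generateFrom (α := ℝ) (f := gmap K n A hn hA) key
  intro s hs
  exact hmg (by rw [← hEq]; exact hs)

end

end St11

namespace St11

open SymbSp

noncomputable section

variable (K : ℕ) (n : ℕ → ℕ) (A : ∀ i : ℕ, Set (Fin (n i) → Fin K))

variable {K n A} in
lemma Eset (hA : ∀ i, (A i).Nonempty) (κ : ℕ → ℕ) (hκ : ∀ i, κ i < Nat.card (A i)) (j : ℕ) :
    ∃ q : ℕ, {t : ℝ | t ∈ Set.Ico (0:ℝ) 1 ∧ ∀ i < j, dig K n A i t = κ i}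
      = Set.Ico ((q:ℝ) / (P K n A j : ℝ)) (((q:ℝ) + 1) / (P K n A j : ℝ)) := by
  induction j with
  | zero =>
    refine ⟨0, ?_⟩
    ext t
    simp [P]
  | succ j ih =>
    obtain ⟨q, hq⟩ := ih
    refine ⟨q * Nat.card (A j) + κ j, ?_⟩
    have hPj : (0:ℝ) < (P K n A j : ℝ) := by exact_mod_cast P_pos A hA j
    have haj : (0:ℝ) < (Nat.card (A j) : ℝ) := by exact_mod_cast card_A_pos A hA j
    have hPj1 : (0:ℝ) < (P K n A (j+1) : ℝ) := by exact_mod_cast P_pos A hA (j+1)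
    have hPcast : (P K n A (j+1) : ℝ) = (P K n A j : ℝ) * (Nat.card (A j) : ℝ) := by
      rw [P_succ]; push_cast; ring
    have hsplit : {t : ℝ | t ∈ Set.Ico (0:ℝ) 1 ∧ ∀ i < j + 1, dig K n A i t = κ i}
        = {t : ℝ | t ∈ Set.Ico (0:ℝ) 1 ∧ ∀ i < j, dig K n A i t = κ i}
          ∩ {t : ℝ | dig K n A j t = κ j} := by
      ext t
      simp only [Set.mem_setOf_eq, Set.mem_inter_iff, Nat.lt_succ_iff_lt_or_eq]
      constructor
      · rintro ⟨h1, h2⟩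
        exact ⟨⟨h1, fun i hi => h2 i (Or.inl hi)⟩, h2 j (Or.inr rfl)⟩
      · rintro ⟨⟨h1, h2⟩, h3⟩
        refine ⟨h1, fun i hi => ?_⟩
        rcases hi with hi | rfl
        · exact h2 i hi
        · exact h3
    rw [hsplit, hq]
    set q' : ℕ := q * Nat.card (A j) + κ j with hq'
    ext t
    simp only [Set.mem_inter_iff, Set.mem_Ico, Set.mem_setOf_eq]
    constructor
    · rintro ⟨⟨hl, hr⟩, hdig⟩
      have ht0 : (0:ℝ) ≤ t := le_trans (by positivity) hl
      have htP0 : (0:ℝ) ≤ t * (P K n A (j+1) : ℝ) := by positivity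
      have hb1 : ((q * Nat.card (A j) : ℕ) : ℝ) ≤ t * (P K n A (j+1) : ℝ) := by
        push_cast
        rw [hPcast]
        rw [div_le_iff₀ hPj] at hl
        nlinarith
      have hb2 : t * (P K n A (j+1) : ℝ) < ((q+1) * Nat.card (A j) : ℕ) := by
        push_cast
        rw [hPcast]
        rw [lt_div_iff₀ hPj] at hr
        nlinarith
      set N := ⌊t * (P K n A (j+1) : ℝ)⌋₊ with hN
      have hN1 : q * Nat.card (A j) ≤ N := Nat.le_floor hb1
      have hN2 : N < (q+1) * Nat.card (A j) := by
        rw [hN, Nat.floor_lt htP0]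
        exact_mod_cast hb2
      have hdig' : N % Nat.card (A j) = κ j := hdig
      have hNeq : N = q' := by
        have hN2' : N < q * Nat.card (A j) + Nat.card (A j) := by
          have := hN2
          rwa [Nat.succ_mul] at this
        have hs : N - q * Nat.card (A j) < Nat.card (A j) := by omega
        have h1 : (N - q * Nat.card (A j)) + q * Nat.card (A j) = N := by omega
        have h2 : N % Nat.card (A j) = N - q * Nat.card (A j) := by
          conv_lhs => rw [← h1]
          rw [Nat.add_mul_mod_self_right, Nat.mod_eq_of_lt hs]
        rw [h2] at hdig'
        omega
      have hfl : (q' : ℝ) ≤ t * (P K n A (j+1) : ℝ) := by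
        rw [← hNeq]; exact Nat.floor_le htP0
      have hfu : t * (P K n A (j+1) : ℝ) < (q' : ℝ) + 1 := by
        rw [← hNeq]
        exact Nat.lt_floor_add_one _
      constructor
      · rw [div_le_iff₀ hPj1]; linarith
      · rw [lt_div_iff₀ hPj1]; linarith
    · rintro ⟨hl, hr⟩
      have ht0 : (0:ℝ) ≤ t := le_trans (by positivity) hl
      have hfl : (q' : ℝ) ≤ t * (P K n A (j+1) : ℝ) := by
        rw [div_le_iff₀ hPj1] at hl; linarith
      have hfu : t * (P K n A (j+1) : ℝ) < (q' : ℝ) + 1 := by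
        rw [lt_div_iff₀ hPj1] at hr; linarith
      have hNeq : ⌊t * (P K n A (j+1) : ℝ)⌋₊ = q' := by
        rw [Nat.floor_eq_iff (by positivity)]
        exact ⟨hfl, hfu⟩
      have hdig : dig K n A j t = κ j := by
        unfold dig
        rw [hNeq, hq', Nat.add_comm, Nat.add_mul_mod_self_right, Nat.mod_eq_of_lt (hκ j)]
      refine ⟨⟨?_, ?_⟩, hdig⟩
      · rw [div_le_iff₀ hPj]
        have h1 : ((q * Nat.card (A j) : ℕ) : ℝ) ≤ (q' : ℝ) := by
          push_cast [hq']
          linarith [show (0:ℝ) ≤ (κ j : ℝ) from Nat.cast_nonneg _]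
        calc (q:ℝ) = ((q * Nat.card (A j) : ℕ) : ℝ) / (Nat.card (A j) : ℝ) := by
              push_cast; field_simp
        _ ≤ (q' : ℝ) / (Nat.card (A j) : ℝ) := by gcongr
        _ ≤ t * (P K n A (j+1) : ℝ) / (Nat.card (A j) : ℝ) := by gcongr
        _ = t * (P K n A j : ℝ) := by rw [hPcast]; field_simp
      · rw [lt_div_iff₀ hPj]
        have h2 : (q' : ℝ) + 1 ≤ ((q+1) * Nat.card (A j) : ℕ) := by
          push_cast [hq']
          have := hκ j
          have : (κ j : ℝ) + 1 ≤ (Nat.card (A j) : ℝ) := by exact_mod_cast this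
          nlinarith
        have : t * (P K n A (j+1) : ℝ) < ((q+1) * Nat.card (A j) : ℕ) := lt_of_lt_of_le hfu h2
        push_cast at this
        rw [hPcast] at this
        nlinarith

variable {K n A} in
lemma vol_E (hA : ∀ i, (A i).Nonempty) (κ : ℕ → ℕ) (hκ : ∀ i, κ i < Nat.card (A i)) (j : ℕ) :
    volume {t : ℝ | t ∈ Set.Ico (0:ℝ) 1 ∧ ∀ i < j, dig K n A i t = κ i}
      ≤ ENNReal.ofReal ((P K n A j : ℝ))⁻¹ := by
  obtain ⟨q, hq⟩ := Eset hA κ hκ j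
  rw [hq, Real.volume_Ico]
  apply ENNReal.ofReal_le_ofReal
  rw [div_sub_div_same]
  ring_nf
  simp [one_div]

end

end St11

namespace St11

open SymbSp

noncomputable section

variable (K : ℕ) (n : ℕ → ℕ) (A : ∀ i : ℕ, Set (Fin (n i) → Fin K))

open Classical in
/-- The digit string of a point `x`. -/
def kap (x : SymbSp K) (i : ℕ) : ℕ :=
  if h : (fun q : Fin (n i) => x (S n i + q)) ∈ A i then
    ((ee K n A i) ⟨_, h⟩ : Fin (Nat.card (A i))).1 else 0

variable {K n A} in
lemma kap_lt (hA : ∀ i, (A i).Nonempty) (x : SymbSp K) (i : ℕ) :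
    kap K n A x i < Nat.card (A i) := by
  unfold kap
  split
  · exact Fin.is_lt _
  · exact card_A_pos A hA i

variable {K n A} in
lemma dig_eq_of_mem_cyl (hn : ∀ i, 1 ≤ n i) (hA : ∀ i, (A i).Nonempty) {t : ℝ}
    {x : SymbSp K} {j : ℕ} (h : gmap K n A hn hA t ∈ Cyl K x (S n j)) :
    ∀ i < j, dig K n A i t = kap K n A x i := by
  intro i hij
  have hblock : (fun q : Fin (n i) => x (S n i + q)) =
      (((ee K n A i).symm ⟨dig K n A i t, dig_lt A hA i t⟩ : (A i)) : Fin (n i) → Fin K) := by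
    rw [← gmap_block hn hA t i]
    funext q
    refine (h (S n i + q) ?_).symm
    have h1 : S n (i+1) ≤ S n j := S_mono n hij
    rw [S_succ] at h1
    have := q.isLt
    omega
  have hmem : (fun q : Fin (n i) => x (S n i + q)) ∈ A i := by
    rw [hblock]; exact Subtype.mem _
  unfold kap
  rw [dif_pos hmem]
  have hsub : (⟨(fun q : Fin (n i) => x (S n i + q)), hmem⟩ : (A i)) =
      (ee K n A i).symm ⟨dig K n A i t, dig_lt A hA i t⟩ := Subtype.ext hblock
  rw [hsub, Equiv.apply_symm_apply]

/-- The Frostman measure on `SymbSp K`. -/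
def mu (hn : ∀ i, 1 ≤ n i) (hA : ∀ i, (A i).Nonempty) : Measure (SymbSp K) :=
  (volume.restrict (Set.Ico (0:ℝ) 1)).map (gmap K n A hn hA)

variable {K n A} in
lemma mu_cyl (hK : 2 ≤ K) (hn : ∀ i, 1 ≤ n i) (hA : ∀ i, (A i).Nonempty)
    {j m : ℕ} (hjm : S n j ≤ m) (x : SymbSp K) :
    mu K n A hn hA (Cyl K x m) ≤ ENNReal.ofReal ((P K n A j : ℝ))⁻¹ := by
  rw [mu, Measure.map_apply (measurable_gmap hK hn hA) (measurableSet_cyl hK x m)]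
  rw [Measure.restrict_apply (measurable_gmap hK hn hA (measurableSet_cyl hK x m))]
  refine le_trans (measure_mono ?_) (vol_E hA (kap K n A x) (kap_lt hA x) j)
  rintro t ⟨ht1, ht2⟩
  refine ⟨ht2, dig_eq_of_mem_cyl hn hA (fun i hi => ht1 i (lt_of_lt_of_le hi hjm))⟩

variable {K n A} in
lemma mu_X (hn : ∀ i, 1 ≤ n i) (hA : ∀ i, (A i).Nonempty) (hK : 2 ≤ K) :
    1 ≤ mu K n A hn hA {x : SymbSp K |
      ∀ i : ℕ, (fun j : Fin (n i) => x ((∑ l ∈ Finset.range i, n l) + j)) ∈ A i} := by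
  rw [mu]
  refine le_trans ?_ (Measure.le_map_apply (measurable_gmap hK hn hA).aemeasurable _)
  have huniv : gmap K n A hn hA ⁻¹' {x : SymbSp K |
      ∀ i : ℕ, (fun j : Fin (n i) => x ((∑ l ∈ Finset.range i, n l) + j)) ∈ A i} = Set.univ := by
    ext t
    simp only [Set.mem_preimage, Set.mem_setOf_eq, Set.mem_univ, iff_true]
    intro i
    exact gmap_mem hn hA t i
  rw [huniv]
  simp [Real.volume_Ico]

end

end St11

namespace St11

open SymbSp

variable {K : ℕ} {n : ℕ → ℕ} {A : ∀ i : ℕ, Set (Fin (n i) → Fin K)}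

/-- The key analytic consequence of `d` being below the `j`-th quotient. -/
lemma key_ineq (hK : 2 ≤ K) (hn : ∀ i, 1 ≤ n i) (hA : ∀ i, (A i).Nonempty)
    {d : ℝ} (hd0 : 0 ≤ d) {j : ℕ}
    (h : d < (∑ i ∈ Finset.range j, Real.log (Nat.card (A i))) /
          (∑ i ∈ Finset.range (j + 1), (n i : ℝ) * Real.log K)) :
    ((P K n A j : ℝ))⁻¹ ≤ (((K:ℝ))⁻¹ ^ (S n (j+1))) ^ d := by
  have hK1 : (1:ℝ) < (K:ℝ) := by exact_mod_cast hK
  have hK0 : (0:ℝ) < (K:ℝ) := by linarith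
  have hlogK : 0 < Real.log K := Real.log_pos hK1
  have hS1 : 1 ≤ S n (j+1) := le_trans (by omega) (le_S n hn (j+1))
  have hSpos : (0:ℝ) < (S n (j+1) : ℝ) := by exact_mod_cast hS1
  have hD : (0:ℝ) < (∑ i ∈ Finset.range (j + 1), (n i : ℝ) * Real.log K) := by
    rw [← Finset.sum_mul]
    have : (0:ℝ) < ∑ i ∈ Finset.range (j+1), (n i : ℝ) := by
      have : ((S n (j+1) : ℕ) : ℝ) = ∑ i ∈ Finset.range (j+1), (n i : ℝ) := by
        rw [S]; push_cast; rfl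
      rw [← this]; exact hSpos
    positivity
  rw [lt_div_iff₀ hD] at h
  have hNum : (∑ i ∈ Finset.range j, Real.log (Nat.card (A i))) = Real.log (P K n A j) := by
    rw [P]
    push_cast
    rw [Real.log_prod]
    intro i _
    have := card_A_pos A hA i
    positivity
  have hDen : (∑ i ∈ Finset.range (j + 1), (n i : ℝ) * Real.log K)
      = (S n (j+1) : ℝ) * Real.log K := by
    rw [← Finset.sum_mul, S]
    push_cast
    rfl
  rw [hNum, hDen] at h
  have hPpos : (0:ℝ) < (P K n A j : ℝ) := by exact_mod_cast P_pos A hA j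
  have hbase : (0:ℝ) < ((K:ℝ))⁻¹ ^ (S n (j+1)) := by positivity
  rw [← Real.exp_log hPpos, ← Real.exp_log (x := (((K:ℝ))⁻¹ ^ (S n (j+1))) ^ d) (by positivity),
    ← Real.exp_neg, Real.exp_le_exp, Real.log_rpow hbase]
  rw [Real.log_pow, Real.log_inv]
  have : d * ((S n (j+1) : ℝ) * Real.log K) ≤ Real.log (P K n A j) := le_of_lt h
  calc -Real.log (P K n A j) ≤ -(d * ((S n (j+1) : ℝ) * Real.log K)) := by linarith
  _ = d * ((S n (j+1) : ℝ) * -Real.log K) := by ring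

end St11


/-- Let `K ≥ 2`, `(n_i)` positive integers, and `A_i ⊆ {0,…,K−1}^{n_i}`
nonempty with `a_i = #A_i`. Let `X ⊆ Σ_K` be the set of infinite concatenations
`ω_0ω_1⋯` with `ω_i ∈ A_i` (i.e. the sequences whose `i`-th block, starting at
`S i = n_0 + ⋯ + n_{i−1}`, belongs to `A_i`). Then
`dim_H X ≥ liminf_j (∑_{i<j} ln a_i) / (∑_{i<j+1} n_i ln K)`. -/
theorem statement_11 (K : ℕ) (hK : 2 ≤ K) (n : ℕ → ℕ) (hn : ∀ i, 1 ≤ n i)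
    (A : ∀ i : ℕ, Set (Fin (n i) → Fin K)) (hA : ∀ i, (A i).Nonempty) :
    ENNReal.ofReal
        (Filter.liminf (fun j : ℕ =>
          (∑ i ∈ Finset.range j, Real.log (Nat.card (A i))) /
            (∑ i ∈ Finset.range (j + 1), (n i : ℝ) * Real.log K)) Filter.atTop)
      ≤ dimH {x : SymbSp K |
          ∀ i : ℕ, (fun j : Fin (n i) => x ((∑ l ∈ Finset.range i, n l) + j)) ∈ A i} := by
  
  classical
  set X := {x : SymbSp K |
      ∀ i : ℕ, (fun j : Fin (n i) => x ((∑ l ∈ Finset.range i, n l) + j)) ∈ A i} with hX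
  set f : ℕ → ℝ := fun j => (∑ i ∈ Finset.range j, Real.log (Nat.card (A i))) /
      (∑ i ∈ Finset.range (j + 1), (n i : ℝ) * Real.log K) with hf
  have hK1 : (1:ℝ) < (K:ℝ) := by exact_mod_cast hK
  have hK0 : (0:ℝ) < (K:ℝ) := by linarith
  have hKi0 : (0:ℝ) < ((K:ℝ))⁻¹ := by positivity
  have hKi1 : ((K:ℝ))⁻¹ < 1 := inv_lt_one_of_one_lt₀ hK1
  refine ENNReal.le_of_forall_nnreal_lt fun d hd => ?_
  rcases eq_or_lt_of_le (show (0:NNReal) ≤ d from zero_le) with h0 | hdpos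
  · rw [← h0]; simp
  have hdpos' : (0:ℝ) < (d:ℝ) := by exact_mod_cast hdpos
  have hdL : (d:ℝ) < Filter.liminf f Filter.atTop := by
    by_contra hc
    push_neg at hc
    have h1 := ENNReal.ofReal_le_ofReal hc
    rw [ENNReal.ofReal_coe_nnreal] at h1
    exact absurd (lt_of_lt_of_le hd h1) (lt_irrefl _)
  have hbdd : Filter.IsBoundedUnder (· ≥ ·) Filter.atTop f := by
    refine isBoundedUnder_of ⟨0, fun j => ?_⟩
    refine div_nonneg (Finset.sum_nonneg fun i _ => ?_) (Finset.sum_nonneg fun i _ => ?_)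
    · refine Real.log_nonneg ?_
      have := St11.card_A_pos A hA i
      exact_mod_cast this
    · have := Real.log_pos hK1
      positivity
  obtain ⟨J, hJ⟩ := Filter.eventually_atTop.1 (Filter.eventually_lt_of_lt_liminf hdL hbdd)
  set ε : ENNReal := ENNReal.ofReal (((K:ℝ))⁻¹ ^ (St11.S n J)) with hε
  have hεpos : 0 < ε := ENNReal.ofReal_pos.2 (by positivity)
  -- the measure tends of cylinders to zero
  have htend : Filter.Tendsto (fun j => ENNReal.ofReal ((St11.P K n A j : ℝ))⁻¹)
      Filter.atTop (𝓝 0) := by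
    have hr0 : (0:ℝ) ≤ ((K:ℝ))⁻¹ ^ (d:ℝ) := Real.rpow_nonneg hKi0.le _
    have hr1 : ((K:ℝ))⁻¹ ^ (d:ℝ) < 1 := Real.rpow_lt_one hKi0.le hKi1 hdpos'
    have hsq : Filter.Tendsto (fun j : ℕ => (St11.P K n A j : ℝ)⁻¹) Filter.atTop (𝓝 0) := by
      refine squeeze_zero' (g := fun j : ℕ => (((K:ℝ))⁻¹ ^ (d:ℝ)) ^ (j+1))
        (Filter.Eventually.of_forall fun j => ?_)
        (Filter.eventually_atTop.2 ⟨J, fun j hj => ?_⟩) ?_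
      · have := St11.P_pos A hA j
        positivity
      · calc (St11.P K n A j : ℝ)⁻¹
            ≤ (((K:ℝ))⁻¹ ^ (St11.S n (j+1))) ^ (d:ℝ) :=
              St11.key_ineq hK hn hA hdpos'.le (hJ j hj)
        _ ≤ (((K:ℝ))⁻¹ ^ (j+1)) ^ (d:ℝ) := by
              refine Real.rpow_le_rpow (by positivity) ?_ hdpos'.le
              exact pow_le_pow_of_le_one hKi0.le hKi1.le (St11.le_S n hn (j+1))
        _ = (((K:ℝ))⁻¹ ^ (d:ℝ)) ^ (j+1) := by
              rw [← Real.rpow_natCast ((K:ℝ))⁻¹ (j+1), ← Real.rpow_mul hKi0.le,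
                mul_comm, Real.rpow_mul hKi0.le, Real.rpow_natCast]
      · exact (tendsto_pow_atTop_nhds_zero_of_lt_one hr0 hr1).comp
          (Filter.tendsto_add_atTop_nat 1)
    have := ENNReal.tendsto_ofReal hsq
    simpa using this
  -- mass distribution estimate
  have hmass : ∀ s : Set (SymbSp K), EMetric.diam s ≤ ε →
      St11.mu K n A hn hA s ≤ EMetric.diam s ^ (d:ℝ) := by
    intro s hs
    rcases Set.eq_empty_or_nonempty s with rfl | ⟨x, hx⟩
    · simp
    by_cases hdiam : EMetric.diam s = 0
    · have hle : ∀ j : ℕ, St11.mu K n A hn hA s ≤ ENNReal.ofReal ((St11.P K n A j : ℝ))⁻¹ := by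
        intro j
        refine le_trans (measure_mono (St11.subset_cyl hK hx ?_)) (St11.mu_cyl hK hn hA le_rfl x)
        rw [hdiam]
        exact zero_le
      have h0' : St11.mu K n A hn hA s ≤ 0 :=
        ge_of_tendsto htend (Filter.Eventually.of_forall hle)
      rw [hdiam, ENNReal.zero_rpow_of_pos hdpos']
      exact h0'
    have hdne : EMetric.diam s ≠ ⊤ := ne_top_of_le_ne_top ENNReal.ofReal_ne_top hs
    have hdtpos : 0 < (EMetric.diam s).toReal := ENNReal.toReal_pos hdiam hdne
    obtain ⟨m₀, hm₀⟩ := exists_pow_lt_of_lt_one hdtpos hKi1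
    set Q : ℕ → Prop := fun m => EMetric.diam s ≤ ENNReal.ofReal (((K:ℝ))⁻¹ ^ m) with hQ
    have hQbound : ∀ m, Q m → m < m₀ := by
      intro m hm
      by_contra hc
      push_neg at hc
      have h1 : ((K:ℝ))⁻¹ ^ m ≤ ((K:ℝ))⁻¹ ^ m₀ := pow_le_pow_of_le_one hKi0.le hKi1.le hc
      have h3 : ENNReal.ofReal (((K:ℝ))⁻¹ ^ m₀) < EMetric.diam s := by
        calc ENNReal.ofReal (((K:ℝ))⁻¹ ^ m₀) < ENNReal.ofReal ((EMetric.diam s).toReal) :=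
              (ENNReal.ofReal_lt_ofReal_iff hdtpos).2 hm₀
        _ = EMetric.diam s := ENNReal.ofReal_toReal hdne
      exact absurd (lt_of_le_of_lt (le_trans hm (ENNReal.ofReal_le_ofReal h1)) h3) (lt_irrefl _)
    have hQSJ : Q (St11.S n J) := hs
    set m := Nat.findGreatest Q m₀ with hm
    have hmQ : Q m := Nat.findGreatest_spec (le_of_lt (hQbound _ hQSJ)) hQSJ
    have hmge : St11.S n J ≤ m := Nat.le_findGreatest (le_of_lt (hQbound _ hQSJ)) hQSJ
    have hnotQ : ¬ Q (m+1) := by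
      intro h
      have h1 := Nat.le_findGreatest (le_of_lt (hQbound _ h)) h
      rw [← hm] at h1
      omega
    set j := St11.blk n m with hj
    have hjJ : J ≤ j := St11.le_blk n hn hmge
    have hmS : m < St11.S n (j+1) := (St11.blk_spec n hn m).2
    have h2 : ((St11.P K n A j : ℝ))⁻¹ ≤ (((K:ℝ))⁻¹ ^ (St11.S n (j+1))) ^ (d:ℝ) :=
      St11.key_ineq hK hn hA hdpos'.le (hJ j hjJ)
    have h3 : (((K:ℝ))⁻¹ ^ (St11.S n (j+1))) ^ (d:ℝ) ≤ (((K:ℝ))⁻¹ ^ (m+1)) ^ (d:ℝ) :=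
      Real.rpow_le_rpow (by positivity)
        (pow_le_pow_of_le_one hKi0.le hKi1.le (by omega)) hdpos'.le
    calc St11.mu K n A hn hA s
        ≤ ENNReal.ofReal ((St11.P K n A j : ℝ))⁻¹ :=
          le_trans (measure_mono (St11.subset_cyl hK hx hmQ))
            (St11.mu_cyl hK hn hA (St11.blk_spec n hn m).1 x)
    _ ≤ ENNReal.ofReal ((((K:ℝ))⁻¹ ^ (m+1)) ^ (d:ℝ)) :=
          ENNReal.ofReal_le_ofReal (le_trans h2 h3)
    _ = (ENNReal.ofReal (((K:ℝ))⁻¹ ^ (m+1))) ^ (d:ℝ) :=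
          (ENNReal.ofReal_rpow_of_pos (by positivity)).symm
    _ ≤ EMetric.diam s ^ (d:ℝ) :=
          ENNReal.rpow_le_rpow (le_of_lt (not_le.1 hnotQ)) hdpos'.le
  have hmuH : St11.mu K n A hn hA ≤ μH[(d:ℝ)] :=
    MeasureTheory.Measure.le_hausdorffMeasure _ _ ε hεpos hmass
  have hXbig : 1 ≤ μH[(d:ℝ)] X :=
    le_trans (St11.mu_X hn hA hK) (MeasureTheory.Measure.le_iff'.1 hmuH X)
  exact le_dimH_of_hausdorffMeasure_ne_zero (d := d)
    (fun h => by rw [h] at hXbig; simp at hXbig)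
end

section
/- Let K ≥ 2 and suppose (x,y) ∈ Σ_K × Σ_K is such that π_K(x,y) is a generic point for (H^1, σ_{K²}). Then for every integer k ≥ 0, the density spectrum μ({i ≥ 0 : ρ(σ_K^i(x),σ_K^i(y)) < K^{−k+1}}) equals the singleton {K^{−k}}. In particular, lim_{ε→0+} F_{x,y}(ε) = lim_{ε→0+} F*_{x,y}(ε) = 0, i.e. (x,y) ∈ E_{σ_K}([0,0]). -/
open Filter Set MeasureTheory Topology TopologicalSpace

noncomputable section DistChaos

variable {X : Type*} [MetricSpace X]

/-- The lower distributional function `F_{x,y}(ε)`. -/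
def lowF (f : X → X) (x y : X) (ε : ℝ) : ℝ :=
  Filter.liminf (fun n : ℕ =>
    (((Finset.range n).filter fun i => dist (f^[i] x) (f^[i] y) < ε).card : ℝ) / n)
    Filter.atTop

/-- The upper distributional function `F*_{x,y}(ε)`. -/
def uppF (f : X → X) (x y : X) (ε : ℝ) : ℝ :=
  Filter.limsup (fun n : ℕ =>
    (((Finset.range n).filter fun i => dist (f^[i] x) (f^[i] y) < ε).card : ℝ) / n)
    Filter.atTop

/-- The set `E_f([p,q])`. -/
def Eset (f : X → X) (p q : ℝ) : Set (X × X) :=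
  {z | Filter.Tendsto (fun ε => lowF f z.1 z.2 ε) (nhdsWithin 0 (Set.Ioi 0)) (nhds p) ∧
       Filter.Tendsto (fun ε => uppF f z.1 z.2 ε) (nhdsWithin 0 (Set.Ioi 0)) (nhds q)}

/-- The set `D_f([p,q])`. -/
def Dset (f : X → X) (p q : ℝ) : Set (X × X) :=
  {z | ∃ ε₀ > 0, ∀ ε : ℝ, 0 < ε → ε ≤ ε₀ →
        lowF f z.1 z.2 ε = p ∧ uppF f z.1 z.2 ε = q}

end DistChaos

/-- The map `π_K : Σ_K × Σ_K → Σ_{K²}`, `(π_K(x₀,x₁))_i = x₀ᵢ + K·x₁ᵢ`. -/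
def piK (K : ℕ) (z : SymbSp K × SymbSp K) : SymbSp (K ^ 2) :=
  fun i => ⟨(z.1 i : ℕ) + K * (z.2 i : ℕ), by
    have h1 := (z.1 i).isLt
    have h2 : ((z.2 i : ℕ) + 1) ≤ K := (z.2 i).isLt
    calc (z.1 i : ℕ) + K * (z.2 i : ℕ) < K + K * (z.2 i : ℕ) := Nat.add_lt_add_right h1 _
      _ = K * ((z.2 i : ℕ) + 1) := by ring
      _ ≤ K * K := Nat.mul_le_mul_left _ h2
      _ = K ^ 2 := by ring⟩
-- ==================== auxiliary development ====================

noncomputable section Aux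

namespace S19

open SymbSp
open scoped ENNReal

theorem dist_def {L : ℕ} (x y : SymbSp L) : dist x y = sdist x y := rfl

theorem shift_iterate (K : ℕ) (x : SymbSp K) (i j : ℕ) :
    (shift K)^[i] x j = x (j + i) := by
  induction i generalizing x with
  | zero => rfl
  | succ i ih =>
      rw [Function.iterate_succ_apply, ih]
      rfl

/-- Cylinder sets. -/
def cyl {L : ℕ} (w : ℕ → Fin L) (n : ℕ) : Set (SymbSp L) := {z | ∀ j < n, z j = w j}

open Classical in
theorem isClopen_coord {L : ℕ} (hL : 1 < L) (j : ℕ) (c : Fin L) :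
    IsClopen {z : SymbSp L | z j = c} := by
  have hL0 : (0:ℝ) < (L:ℝ) := by exact_mod_cast Nat.lt_of_lt_of_le Nat.zero_lt_one hL.le
  have hb : (0:ℝ) < ((L:ℝ))⁻¹ ^ j := by positivity
  have key : ∀ z z' : SymbSp L, dist z z' < ((L:ℝ))⁻¹ ^ j → z' j = z j := by
    intro z z' hd
    by_contra hne
    have hzz : ¬ z = z' := fun h => hne (by rw [h])
    rw [dist_def, sdist_eq hzz] at hd
    have hfind : Nat.find (exists_ne hzz) ≤ j := Nat.find_le (fun h => hne h.symm)
    have hle : ((L:ℝ))⁻¹ ^ j ≤ ((L:ℝ))⁻¹ ^ Nat.find (exists_ne hzz) :=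
      pow_le_pow_of_le_one (by positivity) (inv_cast_le_one L) hfind
    linarith
  constructor
  · rw [← isOpen_compl_iff]
    rw [Metric.isOpen_iff]
    intro z hz
    refine ⟨((L:ℝ))⁻¹ ^ j, hb, fun z' hz' => ?_⟩
    rw [Metric.mem_ball] at hz'
    intro hc
    apply hz
    show z j = c
    rw [key z' z hz']
    exact hc
  · rw [Metric.isOpen_iff]
    intro z hz
    refine ⟨((L:ℝ))⁻¹ ^ j, hb, fun z' hz' => ?_⟩
    rw [Metric.mem_ball] at hz'
    show z' j = c
    have hz'' : dist z z' < ((L:ℝ))⁻¹ ^ j := by rw [dist_comm]; exact hz'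
    rw [key z z' hz'']
    exact hz

theorem isClopen_cyl {L : ℕ} (hL : 1 < L) (w : ℕ → Fin L) (n : ℕ) : IsClopen (cyl w n) := by
  have : cyl w n = ⋂ j ∈ Finset.range n, {z : SymbSp L | z j = w j} := by
    ext z; simp [cyl]
  rw [this]
  exact isClopen_biInter_finset (fun j _ => isClopen_coord hL j (w j))

/-- Extension of a finite word by a default symbol. -/
def extW {L : ℕ} (d : Fin L) {n : ℕ} (w : Fin n → Fin L) : ℕ → Fin L :=
  fun j => if h : j < n then w ⟨j, h⟩ else d

theorem iUnion_cyl {L : ℕ} (d : Fin L) (n : ℕ) :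
    ⋃ w : Fin n → Fin L, cyl (extW d w) n = Set.univ := by
  ext z
  simp only [Set.mem_iUnion, Set.mem_univ, iff_true]
  refine ⟨fun j => z j, fun j hj => ?_⟩
  simp [extW, hj]

theorem cyl_disjoint {L : ℕ} (d : Fin L) {n : ℕ} {w w' : Fin n → Fin L} (hne : w ≠ w') :
    Disjoint (cyl (extW d w) n) (cyl (extW d w') n) := by
  rw [Set.disjoint_left]
  intro z hz hz'
  apply hne
  funext j
  have h1 : z j = extW d w j := hz j.1 j.2
  have h2 : z j = extW d w' j := hz' j.1 j.2
  simp only [extW, j.2, dif_pos, Fin.eta] at h1 h2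
  rw [← h1, h2]

theorem measure_cyl_eq {L : ℕ} (u v : ℕ → Fin L) (n : ℕ) :
    μH[1] (cyl u n : Set (SymbSp L)) = μH[1] (cyl v n) := by
  classical
  set T : SymbSp L → SymbSp L := fun z j => Equiv.swap (u j) (v j) (z j) with hT
  have hTT : ∀ z, T (T z) = z := by
    intro z; funext j; simp [hT, Equiv.swap_apply_self]
  have hiso : Isometry T := by
    apply Isometry.of_dist_eq
    intro a b
    rw [dist_def, dist_def]
    by_cases hab : a = b
    · rw [hab, sdist_self, sdist_self]
    · have hTab : ¬ T a = T b := by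
        intro h; apply hab; funext j
        exact (Equiv.swap (u j) (v j)).injective (congrFun h j)
      rw [sdist_eq hab, sdist_eq hTab]
      congr 1
      refine le_antisymm (@Nat.find_mono _ _ (fun _ => @instDecidableNot _ (Classical.propDecidable _)) (fun _ => @instDecidableNot _ (Classical.propDecidable _)) (fun j h he => h ?_) _ _)
        (@Nat.find_mono _ _ (fun _ => @instDecidableNot _ (Classical.propDecidable _)) (fun _ => @instDecidableNot _ (Classical.propDecidable _)) (fun j h he => h ?_) _ _)
      · exact (Equiv.swap (u j) (v j)).injective he
      · exact congrArg (Equiv.swap (u j) (v j)) he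
  have himg : T '' cyl u n = cyl v n := by
    ext z
    constructor
    · rintro ⟨a, ha, rfl⟩ j hj
      show Equiv.swap (u j) (v j) (a j) = v j
      rw [ha j hj, Equiv.swap_apply_left]
    · intro hz
      refine ⟨T z, fun j hj => ?_, hTT z⟩
      show Equiv.swap (u j) (v j) (z j) = u j
      rw [hz j hj, Equiv.swap_apply_right]
  calc μH[1] (cyl u n : Set (SymbSp L)) = μH[1] (T '' cyl u n) :=
        (hiso.hausdorffMeasure_image (Or.inl zero_le_one) _).symm
    _ = μH[1] (cyl v n) := by rw [himg]

theorem measure_cyl {L : ℕ} (hL : 1 < L)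
    (htot : μH[1] (Set.univ : Set (SymbSp L)) = 1) (w : ℕ → Fin L) (n : ℕ) :
    μH[1] (cyl w n : Set (SymbSp L)) = ((L : ℝ≥0∞) ^ n)⁻¹ := by
  classical
  have d : Fin L := ⟨0, by omega⟩
  set m := μH[1] (cyl w n : Set (SymbSp L)) with hm
  have hU := measure_iUnion (μ := μH[1])
      (fun (w₁ w₂ : Fin n → Fin L) hne => cyl_disjoint d hne)
      (fun W => (isClopen_cyl hL (extW d W) n).2.measurableSet)
  rw [iUnion_cyl, htot] at hU
  have hall : ∀ W : Fin n → Fin L, μH[1] (cyl (extW d W) n : Set (SymbSp L)) = m :=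
    fun W => measure_cyl_eq _ _ n
  rw [tsum_fintype] at hU
  simp only [hall] at hU
  rw [Finset.sum_const, Finset.card_univ, Fintype.card_fun, Fintype.card_fin] at hU
  -- hU : 1 = (L ^ n) • m
  have hLn0 : ((L:ℝ≥0∞) ^ n) ≠ 0 := by
    apply pow_ne_zero
    simp only [ne_eq, Nat.cast_eq_zero]
    omega
  have hLnt : ((L:ℝ≥0∞) ^ n) ≠ ⊤ := by
    apply ENNReal.pow_ne_top
    exact ENNReal.natCast_ne_top L
  have hU' : ((L:ℝ≥0∞) ^ n) * m = 1 := by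
    rw [hU, Fintype.card_fin, nsmul_eq_mul]
    push_cast
    ring
  calc m = (((L:ℝ≥0∞) ^ n)⁻¹ * ((L:ℝ≥0∞) ^ n)) * m := by
        rw [ENNReal.inv_mul_cancel hLn0 hLnt, one_mul]
    _ = ((L:ℝ≥0∞) ^ n)⁻¹ * (((L:ℝ≥0∞) ^ n) * m) := by ring
    _ = ((L:ℝ≥0∞) ^ n)⁻¹ := by rw [hU', mul_one]

theorem dist_lt_imp_agree {K : ℕ} (hK : 1 < K) {x y : SymbSp K} {m : ℕ}
    (h : dist x y < ((K : ℝ))⁻¹ ^ m) : ∀ j ≤ m, x j = y j := by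
  intro j hj
  by_cases hxy : x = y
  · rw [hxy]
  · rw [dist_def, sdist_eq hxy] at h
    have h0 : (0:ℝ) < (K:ℝ)⁻¹ := by
      rw [inv_pos]; exact_mod_cast Nat.lt_of_lt_of_le Nat.zero_lt_one hK.le
    have h1 : ((K:ℝ))⁻¹ < 1 := by
      apply inv_lt_one_of_one_lt₀; exact_mod_cast hK
    have hfind := (pow_lt_pow_iff_right_of_lt_one₀ h0 h1).mp h
    exact eq_of_lt_find hxy (lt_of_le_of_lt hj hfind)

theorem dist_lt_iff {K : ℕ} (hK : 1 < K) {x y : SymbSp K} {k : ℕ} {ε : ℝ}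
    (h1 : ((K : ℝ))⁻¹ ^ k < ε) (h2 : ε ≤ (K : ℝ) * ((K : ℝ))⁻¹ ^ k) :
    dist x y < ε ↔ ∀ j < k, x j = y j := by
  have hK0 : (K:ℝ) ≠ 0 := by exact_mod_cast (by omega : K ≠ 0)
  constructor
  · intro hd j hj
    obtain ⟨m, rfl⟩ : ∃ m, k = m + 1 := ⟨k - 1, by omega⟩
    have he : (K : ℝ) * ((K : ℝ))⁻¹ ^ (m + 1) = ((K : ℝ))⁻¹ ^ m := by
      rw [pow_succ, mul_comm (((K : ℝ))⁻¹ ^ m), ← mul_assoc, mul_inv_cancel₀ hK0, one_mul]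
    have hd' : dist x y < ((K : ℝ))⁻¹ ^ m := lt_of_lt_of_le hd (he ▸ h2)
    exact dist_lt_imp_agree hK hd' j (by omega)
  · intro h
    calc dist x y ≤ ((K : ℝ))⁻¹ ^ k := by rw [dist_def]; exact sdist_le_of_agree h
      _ < ε := h1

theorem digit_eq {K u v c d : ℕ} (hu : u < K) (hc : c < K)
    (h : u + K * v = c + K * d) : u = c ∧ v = d := by
  have h1 : u = c := by
    have h2 := congrArg (· % K) h
    simpa [Nat.add_mul_mod_self_left, Nat.mod_eq_of_lt hu, Nat.mod_eq_of_lt hc] using h2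
  refine ⟨h1, ?_⟩
  subst h1
  have h2 : K * v = K * d := by omega
  exact Nat.eq_of_mul_eq_mul_left (by omega) h2

def diagK (K : ℕ) : Fin K → Fin (K ^ 2) := fun a =>
  ⟨(a : ℕ) + K * a, by
    have h := a.isLt
    calc (a : ℕ) + K * a < K + K * a := Nat.add_lt_add_right h _
      _ = K * ((a : ℕ) + 1) := by ring
      _ ≤ K * K := Nat.mul_le_mul_left _ h
      _ = K ^ 2 := by ring⟩

theorem diagK_injective (K : ℕ) : Function.Injective (diagK K) := by
  intro a b h
  have h' : (a : ℕ) + K * a = (b : ℕ) + K * b := congrArg Fin.val h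
  exact Fin.ext (digit_eq a.isLt b.isLt h').1

/-- The diagonal clopen set in `Σ_{K²}`. -/
def Adiag (K k : ℕ) (hK : 0 < K) : Set (SymbSp (K ^ 2)) :=
  ⋃ w : Fin k → Fin K, cyl (extW ⟨0, by nlinarith⟩ (diagK K ∘ w)) k

theorem isClopen_Adiag {K : ℕ} (hK : 1 < K) (k : ℕ) :
    IsClopen (Adiag K k (by omega)) := by
  have hL : 1 < K ^ 2 := by nlinarith
  constructor
  · exact isClosed_iUnion_of_finite (fun w => (isClopen_cyl hL _ k).1)
  · exact isOpen_iUnion (fun w => (isClopen_cyl hL _ k).2)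

theorem measure_Adiag {K : ℕ} (hK : 1 < K)
    (htot : μH[1] (Set.univ : Set (SymbSp (K ^ 2))) = 1) (k : ℕ) :
    (μH[1] (Adiag K k (by omega))).toReal = ((K : ℝ))⁻¹ ^ k := by
  classical
  have hL : 1 < K ^ 2 := by nlinarith
  have hdisj : Pairwise (Function.onFun Disjoint (fun w : Fin k → Fin K =>
      cyl (extW (⟨0, by nlinarith⟩ : Fin (K ^ 2)) (diagK K ∘ w)) k)) := by
    intro w w' hne
    apply cyl_disjoint
    intro hc
    apply hne
    funext j
    exact diagK_injective K (congrFun hc j)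
  have hU := measure_iUnion (μ := μH[1]) hdisj
      (fun W => (isClopen_cyl hL _ k).2.measurableSet)
  rw [Adiag, hU, tsum_fintype]
  have hcy : ∀ W : Fin k → Fin K,
      μH[1] (cyl (extW (⟨0, by nlinarith⟩ : Fin (K ^ 2)) (diagK K ∘ W)) k : Set (SymbSp (K ^ 2)))
        = (((K ^ 2 : ℕ) : ℝ≥0∞) ^ k)⁻¹ := fun W => measure_cyl hL htot _ k
  simp only [hcy]
  rw [Finset.sum_const, Finset.card_univ, Fintype.card_fun, Fintype.card_fin, Fintype.card_fin,
    nsmul_eq_mul, ENNReal.toReal_mul, ENNReal.toReal_inv]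
  have hK0 : (K : ℝ) ≠ 0 := by exact_mod_cast (by omega : K ≠ 0)
  rw [ENNReal.toReal_pow, ENNReal.toReal_natCast, ENNReal.toReal_natCast]
  push_cast
  rw [inv_pow]
  field_simp
  ring

end S19

end Aux

noncomputable section Aux2

namespace S19

open SymbSp
open scoped ENNReal

theorem piK_shift (K : ℕ) (x y : SymbSp K) (i : ℕ) :
    (shift (K ^ 2))^[i] (piK K (x, y)) = piK K ((shift K)^[i] x, (shift K)^[i] y) := by
  funext j
  apply Fin.ext
  show ((shift (K ^ 2))^[i] (piK K (x, y)) j : ℕ) = _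
  rw [shift_iterate]
  simp [piK, shift_iterate]

theorem mem_Adiag_iff {K : ℕ} (hK : 0 < K) (k : ℕ) (a b : SymbSp K) :
    piK K (a, b) ∈ Adiag K k hK ↔ ∀ j < k, a j = b j := by
  constructor
  · intro hmem j hj
    rw [Adiag, Set.mem_iUnion] at hmem
    obtain ⟨w, hw⟩ := hmem
    have h := hw j hj
    have hval : (a j : ℕ) + K * (b j : ℕ) = (w ⟨j, hj⟩ : ℕ) + K * (w ⟨j, hj⟩ : ℕ) := by
      have h2 := congrArg Fin.val h
      simpa [piK, extW, hj, diagK] using h2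
    obtain ⟨h1, h2⟩ := digit_eq (a j).isLt (w ⟨j, hj⟩).isLt hval
    apply Fin.ext
    rw [h1, ← h2]
  · intro h
    rw [Adiag, Set.mem_iUnion]
    refine ⟨fun j => a j, fun j hj => ?_⟩
    apply Fin.ext
    have hab := h j hj
    simp [piK, extW, hj, diagK, hab]

end S19

end Aux2

/-- Let `K ≥ 2` and `(x,y) ∈ Σ_K × Σ_K` with `π_K(x,y)` a generic
point of `(H¹, σ_{K²})` (empirical averages of every bounded continuous function
converge to its `H¹`-integral). Then for every `k ≥ 0` the density spectrum of
`{i : ρ(σ_K^i x, σ_K^i y) < K^{−k+1}}` is the singleton `{K^{−k}}`; in particular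
`(x,y) ∈ E_{σ_K}([0,0])`. -/
theorem statement_19 (K : ℕ) (hK : 2 ≤ K) (x y : SymbSp K)
    (hgen : ∀ g : BoundedContinuousFunction (SymbSp (K ^ 2)) ℝ,
      Filter.Tendsto (fun j : ℕ =>
          (∑ i ∈ Finset.range j, g ((shift (K ^ 2))^[i] (piK K (x, y)))) / j)
        Filter.atTop
        (nhds (∫ z, g z ∂(μH[1] : Measure (SymbSp (K ^ 2)))))) :
    (∀ k : ℕ,
      {r : ℝ | MapClusterPt r Filter.atTop (fun n : ℕ =>
        (({i : ℕ | dist ((shift K)^[i] x) ((shift K)^[i] y) < (K : ℝ) ^ (1 - (k : ℤ))} ∩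
            Set.Iio n).ncard : ℝ) / n)} = {(K : ℝ) ^ (-(k : ℤ))}) ∧
    (x, y) ∈ Eset (shift K) 0 0 := by
  have hK1 : 1 < K := by omega
  have hK0R : (0:ℝ) < K := by exact_mod_cast (by omega : 0 < K)
  have hKne : (K:ℝ) ≠ 0 := ne_of_gt hK0R
  -- total mass
  have htot : μH[1] (Set.univ : Set (SymbSp (K ^ 2))) = 1 := by
    have h1 := hgen (BoundedContinuousFunction.const _ (1:ℝ))
    simp only [BoundedContinuousFunction.const_apply, Finset.sum_const, Finset.card_range,
      nsmul_eq_mul, mul_one, integral_const, smul_eq_mul] at h1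
    have h2 : Filter.Tendsto (fun j : ℕ => (j:ℝ)/j) Filter.atTop (nhds 1) := by
      have he : (fun j : ℕ => (1:ℝ)) =ᶠ[Filter.atTop] (fun j : ℕ => (j:ℝ)/j) := by
        filter_upwards [Filter.eventually_ge_atTop 1] with j hj
        rw [div_self (by exact_mod_cast (by omega : j ≠ 0))]
      exact Filter.Tendsto.congr' he tendsto_const_nhds
    have h3 := tendsto_nhds_unique h1 h2
    have hne : μH[1] (Set.univ : Set (SymbSp (K ^ 2))) ≠ ⊤ := by
      intro hc
      rw [measureReal_def, hc] at h3
      simp at h3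
    exact (ENNReal.toReal_eq_one_iff _).mp h3
  -- key convergence
  have key : ∀ (k : ℕ) (ε : ℝ), ((K:ℝ))⁻¹ ^ k < ε → ε ≤ (K:ℝ) * ((K:ℝ))⁻¹ ^ k →
      Filter.Tendsto (fun n : ℕ =>
        (((Finset.range n).filter fun i =>
          dist ((shift K)^[i] x) ((shift K)^[i] y) < ε).card : ℝ) / n)
        Filter.atTop (nhds (((K:ℝ))⁻¹ ^ k)) := by
    intro k ε h1 h2
    classical
    have hclopen := S19.isClopen_Adiag hK1 k
    have hmeasA : MeasurableSet (S19.Adiag K k (by omega)) := hclopen.2.measurableSet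
    have hμA := S19.measure_Adiag hK1 htot k
    have hg := hgen (BoundedContinuousFunction.indicator _ hclopen)
    have hint : ∫ z, (BoundedContinuousFunction.indicator _ hclopen) z
        ∂(μH[1] : Measure (SymbSp (K ^ 2))) = ((K:ℝ))⁻¹ ^ k := by
      simp only [BoundedContinuousFunction.indicator_apply]
      exact (MeasureTheory.integral_indicator_const (1:ℝ) hmeasA).trans
        (by rw [smul_eq_mul, mul_one, measureReal_def, hμA])
    rw [hint] at hg
    apply hg.congr
    intro n
    congr 1
    rw [Finset.card_filter]
    push_cast
    apply Finset.sum_congr rfl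
    intro i _
    have hiff : ((shift (K^2))^[i] (piK K (x, y)) ∈ S19.Adiag K k (by omega)) ↔
        dist ((shift K)^[i] x) ((shift K)^[i] y) < ε := by
      rw [S19.piK_shift, S19.mem_Adiag_iff (by omega)]
      exact (S19.dist_lt_iff hK1 h1 h2).symm
    rw [BoundedContinuousFunction.indicator_apply, Set.indicator_apply]
    by_cases hc : dist ((shift K)^[i] x) ((shift K)^[i] y) < ε
    · rw [if_pos (hiff.mpr hc), if_pos hc]
      rfl
    · rw [if_neg (fun hc2 => hc (hiff.mp hc2)), if_neg hc]
  constructor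
  · -- cluster points
    intro k
    have hval : (K : ℝ) ^ (1 - (k : ℤ)) = (K:ℝ) * ((K:ℝ))⁻¹ ^ k := by
      rw [zpow_sub₀ hKne, zpow_one, zpow_natCast, div_eq_mul_inv, ← inv_pow]
    have hval2 : (K : ℝ) ^ (-(k : ℤ)) = ((K:ℝ))⁻¹ ^ k := by
      rw [zpow_neg, zpow_natCast, inv_pow]
    have hb1 : ((K:ℝ))⁻¹ ^ k < (K : ℝ) ^ (1 - (k : ℤ)) := by
      rw [hval]
      have hp : (0:ℝ) < ((K:ℝ))⁻¹ ^ k := by positivity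
      nlinarith [hK0R, (by exact_mod_cast hK1 : (1:ℝ) < K)]
    have hT := key k _ hb1 (le_of_eq hval)
    have hseq : ∀ n : ℕ,
        (({i : ℕ | dist ((shift K)^[i] x) ((shift K)^[i] y) < (K : ℝ) ^ (1 - (k : ℤ))} ∩
            Set.Iio n).ncard : ℝ) / n
        = (((Finset.range n).filter fun i =>
            dist ((shift K)^[i] x) ((shift K)^[i] y) < (K : ℝ) ^ (1 - (k : ℤ))).card : ℝ) / n := by
      intro n
      have hst : ({i : ℕ | dist ((shift K)^[i] x) ((shift K)^[i] y) < (K : ℝ) ^ (1 - (k : ℤ))} ∩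
            Set.Iio n)
          = ↑((Finset.range n).filter fun i =>
            dist ((shift K)^[i] x) ((shift K)^[i] y) < (K : ℝ) ^ (1 - (k : ℤ))) := by
        ext i
        simp only [Set.mem_inter_iff, Set.mem_setOf_eq, Set.mem_Iio, Finset.coe_filter,
          Finset.mem_range]
        tauto
      rw [hst, Set.ncard_coe_finset]
    have hT' : Filter.Tendsto (fun n : ℕ =>
        (({i : ℕ | dist ((shift K)^[i] x) ((shift K)^[i] y) < (K : ℝ) ^ (1 - (k : ℤ))} ∩
            Set.Iio n).ncard : ℝ) / n) Filter.atTop (nhds (((K:ℝ))⁻¹ ^ k)) := by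
      apply hT.congr
      intro n
      rw [hseq n]
    ext r
    simp only [Set.mem_setOf_eq, Set.mem_singleton_iff]
    constructor
    · intro hr
      rw [hval2]
      have h1 : (nhds r ⊓ Filter.map _ Filter.atTop).NeBot := hr
      exact eq_of_nhds_neBot (h1.mono (inf_le_inf_left _ hT'))
    · intro hr
      rw [hr, hval2]
      exact hT'.mapClusterPt
  · -- Eset
    have hbound : ∀ ε : ℝ, 0 < ε → ε < 1 →
        lowF (shift K) x y ε = uppF (shift K) x y ε ∧
        0 ≤ uppF (shift K) x y ε ∧ uppF (shift K) x y ε ≤ ε := by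
      intro ε hε0 hε1
      have hex : ∃ m : ℕ, ((K:ℝ))⁻¹ ^ m < ε :=
        exists_pow_lt_of_lt_one hε0 (inv_lt_one_of_one_lt₀ (by exact_mod_cast hK1))
      classical
      set k := Nat.find hex with hk
      have hk1 : ((K:ℝ))⁻¹ ^ k < ε := Nat.find_spec hex
      have hkpos : k ≠ 0 := by
        intro hc
        rw [hc] at hk1
        simp at hk1
        linarith
      have hk2 : ε ≤ (K:ℝ) * ((K:ℝ))⁻¹ ^ k := by
        obtain ⟨m, hm⟩ : ∃ m, k = m + 1 := ⟨k - 1, by omega⟩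
        have hmin : ¬ (((K:ℝ))⁻¹ ^ m < ε) := Nat.find_min hex (by omega)
        push_neg at hmin
        calc ε ≤ ((K:ℝ))⁻¹ ^ m := hmin
          _ = (K:ℝ) * ((K:ℝ))⁻¹ ^ k := by
            rw [hm, pow_succ, mul_comm (((K:ℝ))⁻¹ ^ m), ← mul_assoc,
              mul_inv_cancel₀ hKne, one_mul]
      have hT := key k ε hk1 hk2
      have hlow : lowF (shift K) x y ε = ((K:ℝ))⁻¹ ^ k := hT.liminf_eq
      have hupp : uppF (shift K) x y ε = ((K:ℝ))⁻¹ ^ k := hT.limsup_eq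
      refine ⟨hlow.trans hupp.symm, ?_, ?_⟩
      · rw [hupp]; positivity
      · rw [hupp]; exact le_of_lt hk1
    have hmemIoo : ∀ᶠ ε in nhdsWithin (0:ℝ) (Set.Ioi 0), ε ∈ Set.Ioo (0:ℝ) 1 :=
      Ioo_mem_nhdsGT_of_mem (by constructor <;> norm_num)
    have htendu : Filter.Tendsto (fun ε => uppF (shift K) x y ε)
        (nhdsWithin (0:ℝ) (Set.Ioi 0)) (nhds 0) := by
      apply tendsto_of_tendsto_of_tendsto_of_le_of_le' tendsto_const_nhds
        (tendsto_id.mono_left nhdsWithin_le_nhds)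
      · filter_upwards [hmemIoo] with ε hε
        exact (hbound ε hε.1 hε.2).2.1
      · filter_upwards [hmemIoo] with ε hε
        exact (hbound ε hε.1 hε.2).2.2
    have htendl : Filter.Tendsto (fun ε => lowF (shift K) x y ε)
        (nhdsWithin (0:ℝ) (Set.Ioi 0)) (nhds 0) := by
      apply htendu.congr'
      filter_upwards [hmemIoo] with ε hε
      exact ((hbound ε hε.1 hε.2).1).symm
    exact ⟨htendl, htendu⟩
end
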